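/- arXiv:2604.17150 — 7 statements merged into one kernel-verified Lean document; each statement's English description precedes it below -/
import Mathlib

section
/- Define J₀(ω̃) = Γ(1 − 2ω̃²) · cos(π ω̃²) · ω̃^{2ω̃² − 1} for 0 < ω̃ < 1/2. Then, as ω̃ → 0⁺, J₀(ω̃) = 1/ω̃ + 2 ω̃ log ω̃ + 2 γ ω̃ + O(ω̃³ log² ω̃); that is, the function ω̃ ↦ J₀(ω̃) − 1/ω̃ − 2 ω̃ log ω̃ − 2 γ ω̃ is O(ω̃³ log² ω̃) as ω̃ → 0⁺. -/
open Real Filter Asymptotics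

lemma analyticAt_realGamma_one : AnalyticAt ℝ Real.Gamma 1 := by
  have hc : AnalyticAt ℂ Complex.Gamma 1 := by
    have hU : IsOpen {z : ℂ | 0 < z.re} := isOpen_lt continuous_const Complex.continuous_re
    have hd : DifferentiableOn ℂ Complex.Gamma {z : ℂ | 0 < z.re} := by
      intro z hz
      refine (Complex.differentiableAt_Gamma z ?_).differentiableWithinAt
      intro m h
      rw [h] at hz
      simp only [Set.mem_setOf_eq, Complex.neg_re, Complex.natCast_re] at hz
      have : (0:ℝ) ≤ (m:ℝ) := Nat.cast_nonneg m
      linarith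
    exact hd.analyticAt (hU.mem_nhds (by simp))
  have h3 : AnalyticAt ℝ Complex.Gamma ((Complex.ofRealCLM : ℝ →L[ℝ] ℂ) 1) := by
    simpa using hc.restrictScalars
  have h2 : AnalyticAt ℝ (fun x : ℝ => (Complex.Gamma x).re) 1 := by
    exact (Complex.reCLM.analyticAt _).comp (h3.comp (Complex.ofRealCLM.analyticAt 1))
  refine h2.congr ?_
  filter_upwards with x
  rw [Complex.Gamma_ofReal, Complex.ofReal_re]

lemma gamma_key :
    (fun t : ℝ => Real.Gamma (1 + t) - 1 + Real.eulerMascheroniConstant * t)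
      =O[nhds (0:ℝ)] fun t => t ^ 2 := by
  have hg : AnalyticAt ℝ (fun t : ℝ => Real.Gamma (1 + t)) 0 := by
    have h1 : AnalyticAt ℝ (fun t : ℝ => 1 + t) 0 := analyticAt_const.add analyticAt_id
    have hgam : AnalyticAt ℝ Real.Gamma ((fun t : ℝ => 1 + t) 0) := by
      simpa using analyticAt_realGamma_one
    have := hgam.comp h1
    exact this
  obtain ⟨p, hp⟩ := hg
  have hO := hp.isBigO_sub_partialSum_pow 2
  have hderiv : HasDerivAt (fun t : ℝ => Real.Gamma (1 + t))
      (-Real.eulerMascheroniConstant) 0 := by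
    have h1 : HasDerivAt (fun t : ℝ => 1 + t) 1 0 := (hasDerivAt_id 0).const_add 1
    have h2 : HasDerivAt Real.Gamma (-Real.eulerMascheroniConstant) ((fun t : ℝ => 1 + t) 0) := by
      simpa using Real.hasDerivAt_Gamma_one
    have := h2.comp 0 h1; rw [mul_one] at this; exact this
  have hc1 : p.coeff 1 = -Real.eulerMascheroniConstant := by
    have := hp.deriv
    rw [hderiv.deriv] at this
    exact this.symm
  have hc0 : p.coeff 0 = 1 := by
    have := hp.coeff_zero (fun _ => 1)
    simpa [Real.Gamma_one] using this
  have hps : ∀ y : ℝ, p.partialSum 2 y = 1 - Real.eulerMascheroniConstant * y := by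
    intro y
    simp only [FormalMultilinearSeries.partialSum, Finset.sum_range_succ, Finset.sum_range_zero,
      p.apply_eq_pow_smul_coeff, hc0, hc1]
    ring_nf
  refine (hO.congr ?_ ?_)
  · intro y
    rw [hps y]
    simp only [zero_add]
    ring
  · intro y
    rw [Real.norm_eq_abs, sq_abs]

/-- With `J₀(ω̃) = Γ(1 − 2ω̃²) · cos(π ω̃²) · ω̃^{2ω̃² − 1}`, as `ω̃ → 0⁺`,
`J₀(ω̃) − 1/ω̃ − 2 ω̃ log ω̃ − 2 γ ω̃ = O(ω̃³ log² ω̃)`. -/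
theorem stmt_1 :
    (fun ω : ℝ =>
        Real.Gamma (1 - 2 * ω ^ 2) * Real.cos (π * ω ^ 2) * ω ^ (2 * ω ^ 2 - 1)
          - 1 / ω - 2 * ω * Real.log ω - 2 * Real.eulerMascheroniConstant * ω)
      =O[nhdsWithin 0 (Set.Ioi 0)]
      fun ω : ℝ => ω ^ 3 * Real.log ω ^ 2 := by
  set l := nhdsWithin (0:ℝ) (Set.Ioi 0) with hl
  set γ' := Real.eulerMascheroniConstant with hγ'
  have hev : ∀ᶠ ω in l, ω ∈ Set.Ioo (0:ℝ) (Real.exp (-1)) :=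
    Ioo_mem_nhdsGT (Real.exp_pos _)
  have hev' : ∀ᶠ ω in l, 0 < ω ∧ ω ≤ 1 ∧ 1 ≤ Real.log ω ^ 2 ∧ |Real.log ω| ≤ Real.log ω ^ 2 := by
    filter_upwards [hev] with ω hω
    obtain ⟨h0, h1⟩ := hω
    have hlog : Real.log ω < -1 := by
      have := Real.log_lt_log h0 h1
      rwa [Real.log_exp] at this
    have habs : 1 ≤ |Real.log ω| := by
      rw [abs_of_neg (by linarith)]; linarith
    have hsq : 1 ≤ Real.log ω ^ 2 := by
      rw [← sq_abs]; nlinarith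
    refine ⟨h0, ?_, hsq, ?_⟩
    · have : Real.exp (-1) ≤ 1 := Real.exp_le_one_iff.mpr (by norm_num)
      linarith
    · rw [← sq_abs]; nlinarith
  have ht0 : Filter.Tendsto (fun ω : ℝ => ω) l (nhds 0) :=
    tendsto_id.mono_right nhdsWithin_le_nhds
  have hml : Filter.Tendsto (fun ω : ℝ => ω * Real.log ω) l (nhds 0) := by
    have h1 : Filter.Tendsto Real.negMulLog (nhds (0:ℝ)) (nhds 0) := by
      simpa using Real.continuous_negMulLog.tendsto 0
    have h2 := (h1.comp ht0).neg
    simp only [Real.negMulLog, Function.comp] at h2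
    simpa using h2
  have hu : Filter.Tendsto (fun ω : ℝ => 2 * ω ^ 2 * Real.log ω) l (nhds 0) := by
    have := (ht0.const_mul 2).mul hml
    simp only [mul_zero] at this
    refine this.congr' ?_
    filter_upwards with ω; ring
  have hA : (fun ω : ℝ => Real.Gamma (1 - 2 * ω ^ 2) - 1 - 2 * γ' * ω ^ 2) =O[l]
      fun ω => ω ^ 4 := by
    have hk : Filter.Tendsto (fun ω : ℝ => -2 * ω ^ 2) l (nhds 0) := by
      have := (ht0.mul ht0).const_mul (-2)
      simp only [mul_zero] at this
      refine this.congr' ?_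
      filter_upwards with ω; ring
    have h1 := gamma_key.comp_tendsto hk
    have h2 : (fun ω : ℝ => (-2 * ω ^ 2) ^ 2) =O[l] fun ω => ω ^ 4 := by
      refine IsBigO.of_bound 4 ?_
      filter_upwards with ω
      rw [show ((-2 : ℝ) * ω ^ 2) ^ 2 = 4 * ω ^ 4 by ring]
      rw [Real.norm_eq_abs, Real.norm_eq_abs, abs_mul]
      simp
    refine (h1.trans h2).congr_left ?_
    intro ω
    simp only [Function.comp]
    rw [show (1 : ℝ) + -2 * ω ^ 2 = 1 - 2 * ω ^ 2 by ring]
    ring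
  have hB : (fun ω : ℝ => Real.cos (π * ω ^ 2) - 1) =O[l] fun ω => ω ^ 4 := by
    refine IsBigO.of_bound (π ^ 2 / 2) ?_
    filter_upwards with ω
    have h1 := Real.one_sub_sq_div_two_le_cos (x := π * ω ^ 2)
    have h2 := Real.cos_le_one (π * ω ^ 2)
    rw [Real.norm_eq_abs, Real.norm_eq_abs,
      abs_of_nonneg (by positivity : (0:ℝ) ≤ ω ^ 4), abs_le]
    constructor <;> nlinarith [sq_nonneg (π * ω ^ 2)]
  have hE : (fun ω : ℝ => Real.exp (2 * ω ^ 2 * Real.log ω) - 1 - 2 * ω ^ 2 * Real.log ω)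
      =O[l] fun ω => ω ^ 4 * Real.log ω ^ 2 := by
    have h0 : ∀ᶠ x : ℝ in nhds 0, |x| ≤ 1 := by
      filter_upwards [Metric.ball_mem_nhds (0:ℝ) one_pos] with x hx
      rw [Metric.mem_ball, Real.dist_eq, sub_zero] at hx
      exact hx.le
    refine IsBigO.of_bound 4 ?_
    filter_upwards [hu.eventually h0] with ω hω
    have h1 := Real.abs_exp_sub_one_sub_id_le hω
    rw [Real.norm_eq_abs, Real.norm_eq_abs]
    calc |Real.exp (2 * ω ^ 2 * Real.log ω) - 1 - 2 * ω ^ 2 * Real.log ω|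
        ≤ (2 * ω ^ 2 * Real.log ω) ^ 2 := h1
      _ = 4 * (ω ^ 4 * Real.log ω ^ 2) := by ring
      _ ≤ 4 * |ω ^ 4 * Real.log ω ^ 2| := by
          have := le_abs_self (ω ^ 4 * Real.log ω ^ 2); linarith
  have hAb : (fun ω : ℝ => Real.Gamma (1 - 2 * ω ^ 2)) =O[l] fun _ => (1:ℝ) := by
    have hc : ContinuousAt Real.Gamma 1 := Real.hasDerivAt_Gamma_one.continuousAt
    have hk : Filter.Tendsto (fun ω : ℝ => 1 - 2 * ω ^ 2) l (nhds 1) := by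
      have := ((ht0.mul ht0).const_mul 2).const_sub 1
      simp only [mul_zero, sub_zero] at this
      refine this.congr' ?_
      filter_upwards with ω; ring
    exact (hc.tendsto.comp hk).isBigO_one ℝ
  have hEb : (fun ω : ℝ => Real.exp (2 * ω ^ 2 * Real.log ω)) =O[l] fun _ => (1:ℝ) :=
    ((Real.continuous_exp.tendsto 0).comp hu).isBigO_one ℝ
  have hP : (fun ω : ℝ => 1 + 2 * γ' * ω ^ 2) =O[l] fun _ => (1:ℝ) := by
    have h : Filter.Tendsto (fun ω : ℝ => 1 + 2 * γ' * ω ^ 2) (nhds 0) (nhds (1 + 2 * γ' * 0 ^ 2)) :=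
      Continuous.tendsto (by continuity) 0
    exact (h.mono_left nhdsWithin_le_nhds).isBigO_one ℝ
  have hQ : (fun ω : ℝ => 1 + 2 * ω ^ 2 * Real.log ω) =O[l] fun _ => (1:ℝ) :=
    (tendsto_const_nhds.add hu).isBigO_one ℝ
  have hω4 : (fun ω : ℝ => ω ^ 4) =O[l] fun ω => ω ^ 4 * Real.log ω ^ 2 := by
    refine IsBigO.of_bound 1 ?_
    filter_upwards [hev'] with ω ⟨h0, h1, hsq, habs⟩
    rw [Real.norm_eq_abs, Real.norm_eq_abs, one_mul, abs_mul]
    have := abs_nonneg (ω ^ 4)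
    have h2 : |Real.log ω ^ 2| = Real.log ω ^ 2 := abs_of_nonneg (sq_nonneg _)
    nlinarith
  have hω4L : (fun ω : ℝ => ω ^ 4 * Real.log ω) =O[l] fun ω => ω ^ 4 * Real.log ω ^ 2 := by
    refine IsBigO.of_bound 1 ?_
    filter_upwards [hev'] with ω ⟨h0, h1, hsq, habs⟩
    rw [Real.norm_eq_abs, Real.norm_eq_abs, one_mul, abs_mul, abs_mul]
    have := abs_nonneg (ω ^ 4)
    have h2 : |Real.log ω ^ 2| = Real.log ω ^ 2 := abs_of_nonneg (sq_nonneg _)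
    nlinarith
  have hω8 : (fun ω : ℝ => ω ^ 4 * (ω ^ 4 * Real.log ω ^ 2)) =O[l]
      fun ω => ω ^ 4 * Real.log ω ^ 2 := by
    refine IsBigO.of_bound 1 ?_
    filter_upwards [hev'] with ω ⟨h0, h1, hsq, habs⟩
    rw [Real.norm_eq_abs, Real.norm_eq_abs, one_mul, abs_mul]
    have h4 : |ω ^ 4| ≤ 1 := by
      rw [abs_of_nonneg (by positivity)]
      exact pow_le_one₀ h0.le h1
    exact mul_le_of_le_one_left (abs_nonneg _) h4
  -- the bracket estimate
  have t1 : (fun ω : ℝ => 4 * γ' * (ω ^ 4 * Real.log ω)) =O[l]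
      fun ω => ω ^ 4 * Real.log ω ^ 2 := hω4L.const_mul_left (4 * γ')
  have t2 := (hP.mul hE).congr_right fun x => one_mul _
  have t3 := ((hA.mul hQ).congr_right fun x => mul_one _).trans hω4
  have t4 := (hA.mul hE).trans hω8
  have t5 := (((hB.mul hAb).mul hEb).congr_right fun x => by
      rw [mul_one, mul_one]).trans hω4
  have hBr : (fun ω : ℝ =>
      Real.Gamma (1 - 2 * ω ^ 2) * Real.cos (π * ω ^ 2) * Real.exp (2 * ω ^ 2 * Real.log ω)
        - 1 - 2 * ω ^ 2 * Real.log ω - 2 * γ' * ω ^ 2) =O[l]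
      fun ω => ω ^ 4 * Real.log ω ^ 2 := by
    refine ((((t1.add t2).add t3).add t4).add t5).congr_left ?_
    intro ω
    ring
  have hfinal := (isBigO_refl (fun ω : ℝ => 1 / ω) l).mul hBr
  refine hfinal.congr' ?_ ?_
  · filter_upwards [hev] with ω hω
    obtain ⟨h0, _⟩ := hω
    have hrw : ω ^ (2 * ω ^ 2 - 1 : ℝ) = Real.exp (2 * ω ^ 2 * Real.log ω) / ω := by
      rw [Real.rpow_def_of_pos h0,
        show Real.log ω * (2 * ω ^ 2 - 1) = 2 * ω ^ 2 * Real.log ω - Real.log ω by ring,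
        Real.exp_sub, Real.exp_log h0]
    rw [hrw]
    field_simp
  · filter_upwards [hev] with ω hω
    obtain ⟨h0, _⟩ := hω
    field_simp
end

section
/- Fix a real a > 0 and define L₀(ω̃) = i · e^{-i π a² ω̃² / 2} · ω̃^{a² ω̃² − 1} · Γ(1 − a² ω̃²) for 0 < ω̃ < 1/a. Then, as ω̃ → 0⁺, L₀(ω̃) − i/ω̃ = O(ω̃ log ω̃); in particular ω̃ · L₀(ω̃) → i as ω̃ → 0⁺. -/
open Real Filter Asymptotics

/-- Fix `a > 0` and set
`L₀(ω̃) = i · e^{-iπa²ω̃²/2} · ω̃^{a²ω̃²−1} · Γ(1 − a²ω̃²)` for `0 < ω̃ < 1/a`. Then, as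
`ω̃ → 0⁺`, `L₀(ω̃) − i/ω̃ = O(ω̃ log ω̃)`; in particular `ω̃ · L₀(ω̃) → i` as `ω̃ → 0⁺`. -/
theorem stmt_3 (a : ℝ) (ha : 0 < a)
    (L₀ : ℝ → ℂ)
    (hL₀ : ∀ ω : ℝ, 0 < ω → ω < 1 / a →
      L₀ ω = Complex.I * Complex.exp (-Complex.I * (π : ℂ) * ((a ^ 2 * ω ^ 2 : ℝ) : ℂ) / 2)
        * ((ω ^ (a ^ 2 * ω ^ 2 - 1) : ℝ) : ℂ) * ((Real.Gamma (1 - a ^ 2 * ω ^ 2) : ℝ) : ℂ)) :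
    ((fun ω : ℝ => L₀ ω - Complex.I / (ω : ℂ))
        =O[nhdsWithin 0 (Set.Ioi 0)] fun ω : ℝ => ω * Real.log ω)
    ∧ Tendsto (fun ω : ℝ => (ω : ℂ) * L₀ ω) (nhdsWithin 0 (Set.Ioi 0)) (nhds Complex.I) := by
  have hc0 : 0 < a ^ 2 := by positivity
  set l : Filter ℝ := nhdsWithin 0 (Set.Ioi 0) with hl
  set E : ℝ → ℂ := fun ω => Complex.exp (-Complex.I * (π : ℂ) * ((a ^ 2 * ω ^ 2 : ℝ) : ℂ) / 2)
    with hE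
  set P : ℝ → ℂ := fun ω => ((ω ^ (a ^ 2 * ω ^ 2) : ℝ) : ℂ) with hP
  set G : ℝ → ℂ := fun ω => ((Real.Gamma (1 - a ^ 2 * ω ^ 2) : ℝ) : ℂ) with hG
  -- tendsto of the argument
  have ht : Tendsto (fun ω : ℝ => a ^ 2 * ω ^ 2) l (nhds 0) := by
    have : Tendsto (fun ω : ℝ => a ^ 2 * ω ^ 2) (nhds 0) (nhds (a ^ 2 * 0 ^ 2)) :=
      (continuous_const.mul (continuous_pow 2)).tendsto 0
    simpa using this.mono_left nhdsWithin_le_nhds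
  -- tendsto ω² log ω → 0
  have hxl : Tendsto (fun ω : ℝ => a ^ 2 * ω ^ 2 * Real.log ω) l (nhds 0) := by
    have h0 := tendsto_log_mul_rpow_nhdsGT_zero (r := 2) two_pos
    have h1 : Tendsto (fun ω : ℝ => a ^ 2 * (Real.log ω * ω ^ (2:ℝ))) l (nhds (a ^ 2 * 0)) :=
      h0.const_mul _
    rw [mul_zero] at h1
    refine h1.congr' ?_
    filter_upwards [self_mem_nhdsWithin] with ω (hω : 0 < ω)
    rw [Real.rpow_two]
    ring
  have hE1 : Tendsto E l (nhds 1) := by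
    have : Tendsto (fun z : ℝ => Complex.exp (-Complex.I * (π:ℂ) * (z:ℂ) / 2)) (nhds 0)
        (nhds (Complex.exp (-Complex.I * (π:ℂ) * ((0:ℝ):ℂ) / 2))) :=
      (Complex.continuous_exp.comp (by continuity)).tendsto 0
    have h : Tendsto E l (nhds (Complex.exp (-Complex.I * (π:ℂ) * ((0:ℝ):ℂ) / 2))) :=
      this.comp ht
    simpa using h
  have hP1 : Tendsto P l (nhds 1) := by
    have h2 : Tendsto (fun ω : ℝ => Real.exp (a ^ 2 * ω ^ 2 * Real.log ω)) l (nhds 1) := by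
      simpa [Function.comp_def] using (Real.continuous_exp.tendsto 0).comp hxl
    have h3 : Tendsto (fun ω : ℝ => ((Real.exp (a ^ 2 * ω ^ 2 * Real.log ω) : ℝ) : ℂ)) l
        (nhds ((1:ℝ):ℂ)) := (Complex.continuous_ofReal.tendsto 1).comp h2
    rw [Complex.ofReal_one] at h3
    refine h3.congr' ?_
    filter_upwards [self_mem_nhdsWithin] with ω (hω : 0 < ω)
    simp [hP, Real.rpow_def_of_pos hω, mul_comm]
  have hGd : DifferentiableAt ℝ Real.Gamma 1 := by
    apply Real.differentiableAt_Gamma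
    intro m
    have h0 : (0:ℝ) ≤ m := Nat.cast_nonneg m
    intro h; linarith
  have hG1 : Tendsto G l (nhds 1) := by
    have h2 : Tendsto (fun ω : ℝ => 1 - a ^ 2 * ω ^ 2) l (nhds 1) := by
      simpa using (tendsto_const_nhds (x := (1:ℝ))).sub ht
    have h3 := (hGd.continuousAt.tendsto.comp h2)
    rw [Real.Gamma_one] at h3
    have := (Complex.continuous_ofReal.tendsto 1).comp h3
    rw [Complex.ofReal_one] at this
    exact this
  -- ω² =O ω² log ω
  have hω2 : (fun ω : ℝ => ω ^ 2) =O[l] fun ω => ω ^ 2 * Real.log ω := by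
    rw [isBigO_iff]
    refine ⟨1, ?_⟩
    filter_upwards [Ioo_mem_nhdsGT_of_mem (Set.mem_Ico.2 ⟨le_refl (0:ℝ), Real.exp_pos (-1)⟩)]
      with ω hω
    obtain ⟨h1, h2⟩ := hω
    have hlog : Real.log ω ≤ -1 := by
      have := Real.log_lt_log h1 h2
      rw [Real.log_exp] at this
      linarith
    have habs : (1:ℝ) ≤ |Real.log ω| := by
      rw [abs_of_nonpos (by linarith : Real.log ω ≤ 0)]; linarith
    rw [one_mul, norm_mul]
    nth_rewrite 1 [← mul_one ‖ω ^ 2‖]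
    exact mul_le_mul_of_nonneg_left (by simpa using habs) (norm_nonneg _)
  -- E - 1 =O ω²
  have hA1 : (fun ω => E ω - 1) =O[l] fun ω : ℝ => ω ^ 2 := by
    have hd0 : DifferentiableAt ℂ Complex.exp 0 := Complex.differentiable_exp.differentiableAt
    have hd : (fun z : ℂ => Complex.exp z - 1) =O[nhds 0] fun z => z := by
      have := hd0.isBigO_sub
      simpa using this
    have harg : Tendsto (fun ω : ℝ => -Complex.I * (π:ℂ) * ((a ^ 2 * ω ^ 2 : ℝ):ℂ) / 2) l
        (nhds 0) := by
      have : Tendsto (fun z : ℝ => -Complex.I * (π:ℂ) * (z:ℂ) / 2) (nhds 0)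
          (nhds (-Complex.I * (π:ℂ) * ((0:ℝ):ℂ) / 2)) := by
        apply Continuous.tendsto; continuity
      have h : Tendsto (fun ω : ℝ => -Complex.I * (π:ℂ) * ((a ^ 2 * ω ^ 2 : ℝ):ℂ) / 2) l
          (nhds (-Complex.I * (π:ℂ) * ((0:ℝ):ℂ) / 2)) := this.comp ht
      simpa using h
    have h1 := hd.comp_tendsto harg
    refine h1.trans ?_
    rw [isBigO_iff]
    refine ⟨π * a ^ 2 / 2, Eventually.of_forall fun ω => ?_⟩
    simp only [Function.comp_apply, norm_div, norm_mul, norm_neg,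
      Complex.norm_I, Complex.norm_real, Complex.norm_two, one_mul, Real.norm_eq_abs]
    rw [abs_of_nonneg Real.pi_pos.le, abs_of_nonneg (sq_nonneg a),
      abs_of_nonneg (sq_nonneg ω)]
    ring_nf
    try rfl
    try nlinarith [sq_nonneg ω, Real.pi_pos, sq_nonneg a]
  -- G - 1 =O ω²
  have harg1 : Tendsto (fun ω : ℝ => 1 - a ^ 2 * ω ^ 2) l (nhds 1) := by
    simpa using (tendsto_const_nhds (x := (1:ℝ))).sub ht
  have hA3real : ((fun x => Real.Gamma x - Real.Gamma 1) ∘ fun ω : ℝ => 1 - a ^ 2 * ω ^ 2)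
      =O[l] fun ω : ℝ => ω ^ 2 := by
    have h1 := hGd.isBigO_sub.comp_tendsto harg1
    refine h1.trans ?_
    apply IsBigO.of_bound (a ^ 2)
    refine Eventually.of_forall fun ω => ?_
    simp only [Function.comp_apply]
    rw [show (1 - a ^ 2 * ω ^ 2) - 1 = -(a ^ 2 * ω ^ 2) by ring, norm_neg, Real.norm_eq_abs,
      Real.norm_eq_abs, abs_of_nonneg (by positivity : (0:ℝ) ≤ a ^ 2 * ω ^ 2),
      abs_of_nonneg (sq_nonneg ω)]
  have hA3 : (fun ω => G ω - 1) =O[l] fun ω : ℝ => ω ^ 2 := by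
    refine (isBigO_of_le l fun ω => le_of_eq ?_).trans hA3real
    simp only [Function.comp_apply]
    calc ‖G ω - 1‖ = ‖((Real.Gamma (1 - a ^ 2 * ω ^ 2) - 1 : ℝ) : ℂ)‖ := by
          simp only [hG]; push_cast; ring_nf
      _ = ‖Real.Gamma (1 - a ^ 2 * ω ^ 2) - Real.Gamma 1‖ := by
          rw [Complex.norm_real, Real.Gamma_one]
  -- P - 1 =O ω² log ω
  have hA2real : ((fun x => Real.exp x - 1) ∘ fun ω : ℝ => a ^ 2 * ω ^ 2 * Real.log ω)
      =O[l] fun ω : ℝ => ω ^ 2 * Real.log ω := by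
    have hdR : DifferentiableAt ℝ Real.exp 0 := Real.differentiable_exp.differentiableAt
    have hd : (fun x : ℝ => Real.exp x - 1) =O[nhds 0] fun x => x := by
      simpa using hdR.isBigO_sub
    refine (hd.comp_tendsto hxl).trans ?_
    apply IsBigO.of_bound (a ^ 2)
    refine Eventually.of_forall fun ω => ?_
    simp only [Function.comp_apply]
    rw [Real.norm_eq_abs, Real.norm_eq_abs,
      show a ^ 2 * ω ^ 2 * Real.log ω = a ^ 2 * (ω ^ 2 * Real.log ω) by ring, abs_mul,
      abs_of_nonneg (sq_nonneg a)]
  have hA2 : (fun ω => P ω - 1) =O[l] fun ω : ℝ => ω ^ 2 * Real.log ω := by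
    have hc : (fun ω : ℝ => ((Real.exp (a ^ 2 * ω ^ 2 * Real.log ω) - 1 : ℝ) : ℂ))
        =O[l] fun ω : ℝ => ω ^ 2 * Real.log ω :=
      (isBigO_of_le l fun ω => by rw [Complex.norm_real]; exact le_of_eq rfl).trans hA2real
    refine hc.congr' ?_ EventuallyEq.rfl
    filter_upwards [self_mem_nhdsWithin] with ω (hω : 0 < ω)
    have hre : ω ^ (a ^ 2 * ω ^ 2) = Real.exp (a ^ 2 * ω ^ 2 * Real.log ω) := by
      rw [Real.rpow_def_of_pos hω, mul_comm]
    simp only [hP, hre]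
    push_cast
    ring
  -- sum
  have hsum : (fun ω => E ω * P ω * G ω - 1) =O[l] fun ω : ℝ => ω ^ 2 * Real.log ω := by
    have t1 : (fun ω => (E ω - 1) * (P ω * G ω)) =O[l] fun ω : ℝ => ω ^ 2 * Real.log ω :=
      (((hA1.trans hω2).mul ((hP1.mul hG1).isBigO_one ℝ)).congr_right fun x => mul_one _)
    have t2 : (fun ω => (P ω - 1) * G ω) =O[l] fun ω : ℝ => ω ^ 2 * Real.log ω :=
      ((hA2.mul (hG1.isBigO_one ℝ)).congr_right fun x => mul_one _)
    have t3 := hA3.trans hω2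
    exact ((t1.add t2).add t3).congr_left fun ω => by ring
  have hinv : (fun ω : ℝ => ((ω : ℂ))⁻¹) =O[l] fun ω : ℝ => ω⁻¹ :=
    isBigO_of_le l fun ω => by rw [norm_inv, norm_inv, Complex.norm_real]
  have hdiv : (fun ω : ℝ => (E ω * P ω * G ω - 1) * ((ω : ℂ))⁻¹) =O[l]
      fun ω : ℝ => ω * Real.log ω := by
    refine (hsum.mul hinv).congr' EventuallyEq.rfl ?_
    filter_upwards [self_mem_nhdsWithin] with ω (hω : 0 < ω)
    field_simp
  -- rewrite of the rpow factor
  have hrw : ∀ ω : ℝ, 0 < ω →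
      ((ω ^ (a ^ 2 * ω ^ 2 - 1) : ℝ) : ℂ) = P ω * ((ω : ℂ))⁻¹ := by
    intro ω h1
    simp only [hP]
    rw [Real.rpow_sub h1, Real.rpow_one]
    push_cast
    rw [div_eq_mul_inv]
  have hmem : Set.Ioo (0:ℝ) (1/a) ∈ l := Ioo_mem_nhdsGT_of_mem ⟨le_refl 0, by positivity⟩
  have heqL : (fun ω : ℝ => L₀ ω - Complex.I / (ω : ℂ))
      =ᶠ[l] fun ω : ℝ => Complex.I * ((E ω * P ω * G ω - 1) * ((ω : ℂ))⁻¹) := by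
    filter_upwards [hmem] with ω hω
    obtain ⟨h1, h2⟩ := hω
    rw [hL₀ ω h1 h2, hrw ω h1, div_eq_mul_inv]
    simp only [hE, hP, hG]
    ring
  constructor
  · exact (hdiv.const_mul_left Complex.I).congr' heqL.symm EventuallyEq.rfl
  · have heq2 : ∀ᶠ ω in l, Complex.I * E ω * P ω * G ω = (ω : ℂ) * L₀ ω := by
      filter_upwards [hmem] with ω hω
      obtain ⟨h1, h2⟩ := hω
      have hω0 : (ω : ℂ) ≠ 0 := by exact_mod_cast h1.ne'
      rw [hL₀ ω h1 h2, hrw ω h1]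
      simp only [hE, hP, hG]
      have hx : (ω : ℂ) * (Complex.I * E ω * (P ω * ((ω : ℂ))⁻¹) * G ω)
          = ((ω : ℂ) * ((ω : ℂ))⁻¹) * (Complex.I * E ω * P ω * G ω) := by ring
      rw [hx, mul_inv_cancel₀ hω0, one_mul]
    have ht2 : Tendsto (fun ω : ℝ => Complex.I * E ω * P ω * G ω) l (nhds Complex.I) := by
      have h := ((hE1.const_mul Complex.I).mul hP1).mul hG1
      have h2 : Tendsto (fun ω : ℝ => Complex.I * E ω * P ω * G ω) l
          (nhds (Complex.I * 1 * 1 * 1)) := h.congr fun ω => by ring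
      rw [show Complex.I * 1 * 1 * 1 = Complex.I by ring] at h2
      exact h2
    exact ht2.congr' heq2
end

section
/- Let a > 0, M ≥ 0 be reals, g∞ ∈ ℝ, and let g : [1,∞) → ℝ be differentiable with g(λ) − g∞ = O((log λ)^M / λ) and g′(λ) = O((log λ)^M / λ²) as λ → ∞. Then for all sufficiently small ω̃ > 0 the improper integral T(ω̃) = ∫₁^∞ e^{i ω̃ λ} · λ^{-a² ω̃²} · (g(λ) − g∞) dλ (understood as lim_{T→∞} ∫₁^T) converges, and ω̃ · T(ω̃) → 0 as ω̃ → 0⁺; i.e., T(ω̃) = o(1/ω̃). -/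
open Real Filter Asymptotics MeasureTheory Set Topology

private lemma logO_aux {M s e : ℝ} (hs : 0 < s) :
    (fun l : ℝ => Real.log l ^ M * l ^ e) =O[atTop] fun l : ℝ => l ^ (s + e) :=
  ((isLittleO_log_rpow_rpow_atTop M hs).isBigO.mul
    (isBigO_refl (fun l : ℝ => l ^ e) atTop)).congr'
    (EventuallyEq.refl _ _)
    (by filter_upwards [eventually_gt_atTop (0:ℝ)] with l hl using
      (Real.rpow_add hl _ _).symm)

private lemma logO1 {M s : ℝ} (hs : 0 < s) :
    (fun l : ℝ => Real.log l ^ M / l) =O[atTop] fun l : ℝ => l ^ (s - 1) := by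
  have h := logO_aux (M := M) (e := (-1 : ℝ)) hs
  refine h.congr' ?_ ?_
  · filter_upwards [eventually_gt_atTop (0:ℝ)] with l hl
    rw [Real.rpow_neg_one, div_eq_mul_inv]
  · filter_upwards with l
    norm_num [sub_eq_add_neg]

private lemma logO2 {M s : ℝ} (hs : 0 < s) :
    (fun l : ℝ => Real.log l ^ M / l ^ (2:ℕ)) =O[atTop] fun l : ℝ => l ^ (s - 2) := by
  have h := logO_aux (M := M) (e := (-2 : ℝ)) hs
  refine h.congr' ?_ ?_
  · filter_upwards [eventually_gt_atTop (0:ℝ)] with l hl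
    rw [show ((-2:ℝ)) = -((2:ℕ):ℝ) by norm_num, Real.rpow_neg hl.le, Real.rpow_natCast,
      div_eq_mul_inv]
  · filter_upwards with l
    norm_num [sub_eq_add_neg]

/-- Let `a > 0`, `M ≥ 0`, `g∞ ∈ ℝ`, and `g : [1,∞) → ℝ` differentiable with
`g(λ) − g∞ = O((log λ)^M/λ)` and `g′(λ) = O((log λ)^M/λ²)` as `λ → ∞`. Then for all
sufficiently small `ω̃ > 0` the improper integral
`T(ω̃) = ∫₁^∞ e^{iω̃λ} λ^{-a²ω̃²} (g(λ) − g∞) dλ` converges, and `ω̃·T(ω̃) → 0`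
as `ω̃ → 0⁺`. -/
theorem stmt_6 (a M ginf : ℝ) (ha : 0 < a) (hM : 0 ≤ M)
    (g : ℝ → ℝ) (hdiff : DifferentiableOn ℝ g (Set.Ici 1))
    (hinf : (fun l : ℝ => g l - ginf) =O[atTop] fun l : ℝ => Real.log l ^ M / l)
    (hinf' : (fun l : ℝ => deriv g l) =O[atTop] fun l : ℝ => Real.log l ^ M / l ^ 2) :
    ∃ T : ℝ → ℂ,
      (∀ᶠ ω : ℝ in nhdsWithin (0 : ℝ) (Set.Ioi 0),
        Tendsto (fun R : ℝ => ∫ l in (1 : ℝ)..R,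
            Complex.exp (Complex.I * (ω : ℂ) * (l : ℂ))
              * ((l ^ (-(a ^ 2 * ω ^ 2)) : ℝ) : ℂ) * ((g l - ginf : ℝ) : ℂ))
          atTop (nhds (T ω)))
      ∧ Tendsto (fun ω : ℝ => (ω : ℂ) * T ω) (nhdsWithin 0 (Set.Ioi 0)) (nhds 0) := by
  classical
  -- global bounds with exponents -1/2 and -3/2
  have hgO : (fun l : ℝ => g l - ginf) =O[atTop] fun l : ℝ => l ^ (-(1/2) : ℝ) := by
    have : (-(1/2) : ℝ) = (1/2 : ℝ) - 1 := by norm_num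
    rw [this]
    exact hinf.trans (logO1 (by norm_num))
  have hg'O : (fun l : ℝ => deriv g l) =O[atTop] fun l : ℝ => l ^ (-(3/2) : ℝ) := by
    have : (-(3/2) : ℝ) = (1/2 : ℝ) - 2 := by norm_num
    rw [this]
    exact hinf'.trans (logO2 (by norm_num))
  obtain ⟨C₁, hC₁⟩ := hgO.bound
  obtain ⟨C₂, hC₂⟩ := hg'O.bound
  set C : ℝ := max (max C₁ C₂) 1 with hCdef
  have hC0 : 0 < C := lt_of_lt_of_le one_pos (le_max_right _ _)
  have hev : ∀ᶠ l : ℝ in atTop,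
      |g l - ginf| ≤ C * l ^ (-(1/2) : ℝ) ∧ |deriv g l| ≤ C * l ^ (-(3/2) : ℝ) := by
    filter_upwards [hC₁, hC₂, eventually_ge_atTop (1:ℝ)] with l h1 h2 hl1
    have hl0 : (0:ℝ) ≤ l := by linarith
    have e1 : ‖l ^ (-(1/2) : ℝ)‖ = l ^ (-(1/2) : ℝ) :=
      abs_of_nonneg (Real.rpow_nonneg hl0 _)
    have e2 : ‖l ^ (-(3/2) : ℝ)‖ = l ^ (-(3/2) : ℝ) :=
      abs_of_nonneg (Real.rpow_nonneg hl0 _)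
    rw [Real.norm_eq_abs, e1] at h1
    rw [Real.norm_eq_abs, e2] at h2
    have p1 : (0:ℝ) ≤ l ^ (-(1/2) : ℝ) := Real.rpow_nonneg hl0 _
    have p2 : (0:ℝ) ≤ l ^ (-(3/2) : ℝ) := Real.rpow_nonneg hl0 _
    have hc1C : C₁ ≤ C := le_trans (le_max_left _ _) (le_max_left _ _)
    have hc2C : C₂ ≤ C := le_trans (le_max_right _ _) (le_max_left _ _)
    exact ⟨h1.trans (mul_le_mul_of_nonneg_right hc1C p1),
      h2.trans (mul_le_mul_of_nonneg_right hc2C p2)⟩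
  obtain ⟨L₀', hL₀'⟩ := eventually_atTop.1 hev
  set L₀ : ℝ := max 2 L₀' with hL₀def
  have hL₀2 : (2:ℝ) ≤ L₀ := le_max_left _ _
  have hL₀1 : (1:ℝ) < L₀ := by linarith
  have hL₀0 : (0:ℝ) < L₀ := by linarith
  have hbd : ∀ l : ℝ, L₀ ≤ l →
      |g l - ginf| ≤ C * l ^ (-(1/2) : ℝ) ∧ |deriv g l| ≤ C * l ^ (-(3/2) : ℝ) :=
    fun l hl => hL₀' l (le_trans (le_max_right _ _) hl)
  have hgc : ContinuousOn g (Ici 1) := hdiff.continuousOn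
  -- g tends to ginf
  have hgtend : Tendsto g atTop (𝓝 ginf) := by
    have h0 : Tendsto (fun l : ℝ => g l - ginf) atTop (𝓝 0) := by
      apply squeeze_zero_norm' (a := fun l : ℝ => C * l ^ (-(1/2) : ℝ))
      · filter_upwards [hev] with l hl using hl.1
      · have := (tendsto_rpow_neg_atTop (show (0:ℝ) < 1/2 by norm_num)).const_mul C
        simpa using this
    have := h0.add (tendsto_const_nhds (x := ginf))
    simpa using this
  have hgd : ∀ l : ℝ, 1 < l → HasDerivAt g (deriv g l) l := fun l hl =>
    ((hdiff l hl.le).differentiableAt (Ici_mem_nhds hl)).hasDerivAt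
  -- integrability of deriv g on Ioi L₀ and its integral
  have hg'meas : AEStronglyMeasurable (deriv g) (volume.restrict (Ioi L₀)) :=
    (measurable_deriv g).aestronglyMeasurable.restrict
  have hrpow32 : IntegrableOn (fun l : ℝ => C * l ^ (-(3/2) : ℝ)) (Ioi L₀) :=
    (integrableOn_Ioi_rpow_of_lt (show (-(3/2):ℝ) < -1 by norm_num) hL₀0).const_mul C
  have hg'int : IntegrableOn (deriv g) (Ioi L₀) := by
    apply hrpow32.mono' hg'meas
    rw [ae_restrict_iff' measurableSet_Ioi]
    filter_upwards with l hl
    rw [Real.norm_eq_abs]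
    exact (hbd l (le_of_lt hl)).2
  have hg'integral : (∫ l in Ioi L₀, deriv g l) = ginf - g L₀ :=
    integral_Ioi_of_hasDerivAt_of_tendsto'
      (fun x hx => hgd x (lt_of_lt_of_le hL₀1 hx)) hg'int hgtend
  -- the integrand and norm computation
  set f : ℝ → ℝ → ℂ := fun ω l => Complex.exp (Complex.I * (ω : ℂ) * (l : ℂ))
      * ((l ^ (-(a ^ 2 * ω ^ 2)) : ℝ) : ℂ) * ((g l - ginf : ℝ) : ℂ) with hfdef
  have hexpnorm : ∀ ω l : ℝ, ‖Complex.exp (Complex.I * (ω : ℂ) * (l : ℂ))‖ = 1 := by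
    intro ω l
    rw [Complex.norm_exp]
    simp
  have hnorm : ∀ ω l : ℝ, 0 < l →
      ‖f ω l‖ = l ^ (-(a ^ 2 * ω ^ 2)) * |g l - ginf| := by
    intro ω l hl
    rw [hfdef]
    simp only
    rw [norm_mul, norm_mul, hexpnorm, Complex.norm_real, Complex.norm_real,
      Real.norm_eq_abs, Real.norm_eq_abs, abs_of_nonneg (Real.rpow_nonneg hl.le _), one_mul]
  -- continuity of the integrand
  have hfc : ∀ ω : ℝ, ContinuousOn (f ω) (Ici 1) := by
    intro ω
    apply ContinuousOn.mul
    apply ContinuousOn.mul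
    · exact (Complex.continuous_exp.comp (continuous_const.mul Complex.continuous_ofReal)).continuousOn
    · apply Complex.continuous_ofReal.comp_continuousOn
      exact continuousOn_id.rpow_const fun x hx => Or.inl (by
        have : (1:ℝ) ≤ x := hx
        positivity)
    · exact Complex.continuous_ofReal.comp_continuousOn ((hgc.sub continuousOn_const))
  -- integrability of f ω on Ioi 1 for ω > 0
  have hint : ∀ ω : ℝ, 0 < ω → IntegrableOn (f ω) (Ioi 1) := by
    intro ω hω
    have hcc : 0 < a ^ 2 * ω ^ 2 := by positivity
    have hO : (fun l : ℝ => g l - ginf) =O[atTop]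
        fun l : ℝ => l ^ (a ^ 2 * ω ^ 2 / 2 - 1) :=
      hinf.trans (logO1 (half_pos hcc))
    obtain ⟨D, hD⟩ := hO.bound
    obtain ⟨L₁', hL₁'⟩ := eventually_atTop.1 (hD.and (eventually_ge_atTop (1:ℝ)))
    set L₁ : ℝ := max 1 L₁' with hL₁def
    have hL₁1 : (1:ℝ) ≤ L₁ := le_max_left _ _
    have hL₁0 : (0:ℝ) < L₁ := by linarith
    rw [show Ioi (1:ℝ) = Ioc 1 L₁ ∪ Ioi L₁ from (Ioc_union_Ioi_eq_Ioi hL₁1).symm]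
    apply IntegrableOn.union
    · exact (((hfc ω).mono Icc_subset_Ici_self).integrableOn_Icc).mono_set
        Ioc_subset_Icc_self
    · have hdom : IntegrableOn (fun l : ℝ => |D| * l ^ (-(a ^ 2 * ω ^ 2 / 2) - 1)) (Ioi L₁) :=
        (integrableOn_Ioi_rpow_of_lt (by linarith) hL₁0).const_mul |D|
      apply hdom.mono' (((hfc ω).mono fun x hx => le_trans hL₁1 (le_of_lt hx)).aestronglyMeasurable
        measurableSet_Ioi)
      rw [ae_restrict_iff' measurableSet_Ioi]
      filter_upwards with l hl
      have hlL₁ : L₁ < l := hl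
      have hl1 : (1:ℝ) ≤ l := le_trans hL₁1 hlL₁.le
      have hl0 : (0:ℝ) < l := by linarith
      obtain ⟨hDl, -⟩ := hL₁' l (le_trans (le_max_right 1 L₁') hlL₁.le)
      rw [Real.norm_eq_abs, Real.norm_eq_abs, abs_of_nonneg (Real.rpow_nonneg hl0.le _)] at hDl
      rw [hnorm ω l hl0]
      have h1 : |g l - ginf| ≤ |D| * l ^ (a ^ 2 * ω ^ 2 / 2 - 1) := by
        refine hDl.trans (mul_le_mul_of_nonneg_right (le_abs_self D)
          (Real.rpow_nonneg hl0.le _))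
      calc l ^ (-(a ^ 2 * ω ^ 2)) * |g l - ginf|
          ≤ l ^ (-(a ^ 2 * ω ^ 2)) * (|D| * l ^ (a ^ 2 * ω ^ 2 / 2 - 1)) :=
            mul_le_mul_of_nonneg_left h1 (Real.rpow_nonneg hl0.le _)
        _ = |D| * l ^ (-(a ^ 2 * ω ^ 2 / 2) - 1) := by
            rw [mul_left_comm, ← Real.rpow_add hl0]
            congr 1
            ring
  refine ⟨fun ω => ∫ l in Ioi 1, f ω l, ?_, ?_⟩
  · filter_upwards [self_mem_nhdsWithin] with ω hω
    exact intervalIntegral_tendsto_integral_Ioi 1 (hint ω hω) tendsto_id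
  · -- the key limit  ω T(ω) → 0
    -- pieces of the integration-by-parts identity
    set B : ℝ → ℂ := fun ω => Complex.exp (Complex.I * (ω:ℂ) * (L₀:ℂ))
        * ((L₀ ^ (-(a ^ 2 * ω ^ 2)) * (g L₀ - ginf) : ℝ) : ℂ) with hBdef
    set G₁ : ℝ → ℝ → ℂ := fun ω l => Complex.exp (Complex.I * (ω:ℂ) * (l:ℂ))
        * ((-(a ^ 2 * ω ^ 2) * l ^ (-(a ^ 2 * ω ^ 2) - 1) * (g l - ginf) : ℝ) : ℂ) with hG₁def
    set G₂ : ℝ → ℝ → ℂ := fun ω l => Complex.exp (Complex.I * (ω:ℂ) * (l:ℂ))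
        * ((l ^ (-(a ^ 2 * ω ^ 2)) * deriv g l : ℝ) : ℂ) with hG₂def
    have hnorm2 : ∀ (ω l x : ℝ),
        ‖Complex.exp (Complex.I * (ω:ℂ) * (l:ℂ)) * ((x : ℝ) : ℂ)‖ = |x| := by
      intro ω l x
      rw [norm_mul, hexpnorm, one_mul, Complex.norm_real, Real.norm_eq_abs]
    -- pointwise bounds for G₁, G₂ on [L₀, ∞)
    have hbG₁ : ∀ (ω l : ℝ), L₀ ≤ l →
        ‖G₁ ω l‖ ≤ a ^ 2 * ω ^ 2 * C * l ^ (-(3/2) : ℝ) := by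
      intro ω l hl
      have hl1 : (1:ℝ) ≤ l := by linarith
      have hl0 : (0:ℝ) < l := by linarith
      have hc0 : (0:ℝ) ≤ a ^ 2 * ω ^ 2 := by positivity
      rw [hG₁def]
      simp only
      rw [hnorm2]
      have h1 : |(-(a ^ 2 * ω ^ 2)) * l ^ (-(a ^ 2 * ω ^ 2) - 1) * (g l - ginf)|
          = (a ^ 2 * ω ^ 2) * l ^ (-(a ^ 2 * ω ^ 2) - 1) * |g l - ginf| := by
        rw [abs_mul, abs_mul, abs_neg, abs_of_nonneg hc0,
          abs_of_nonneg (Real.rpow_nonneg hl0.le _)]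
      rw [h1]
      have h2 : l ^ (-(a ^ 2 * ω ^ 2) - 1) ≤ l ^ (-1 : ℝ) :=
        Real.rpow_le_rpow_of_exponent_le hl1 (by linarith)
      calc (a ^ 2 * ω ^ 2) * l ^ (-(a ^ 2 * ω ^ 2) - 1) * |g l - ginf|
          ≤ (a ^ 2 * ω ^ 2) * l ^ (-1 : ℝ) * (C * l ^ (-(1/2) : ℝ)) :=
            mul_le_mul (mul_le_mul_of_nonneg_left h2 hc0) (hbd l hl).1
              (abs_nonneg _) (by positivity)
        _ = a ^ 2 * ω ^ 2 * C * l ^ (-(3/2) : ℝ) := by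
            rw [show (-(3/2) : ℝ) = -1 + -(1/2) by norm_num, Real.rpow_add hl0]
            ring
    have hbG₂ : ∀ (ω l : ℝ), L₀ ≤ l → ‖G₂ ω l‖ ≤ C * l ^ (-(3/2) : ℝ) := by
      intro ω l hl
      have hl1 : (1:ℝ) ≤ l := by linarith
      have hl0 : (0:ℝ) < l := by linarith
      have hc0 : (0:ℝ) ≤ a ^ 2 * ω ^ 2 := by positivity
      rw [hG₂def]
      simp only
      rw [hnorm2, abs_mul, abs_of_nonneg (Real.rpow_nonneg hl0.le _)]
      calc l ^ (-(a ^ 2 * ω ^ 2)) * |deriv g l|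
          ≤ 1 * (C * l ^ (-(3/2) : ℝ)) :=
            mul_le_mul (Real.rpow_le_one_of_one_le_of_nonpos hl1 (by linarith))
              (hbd l hl).2 (abs_nonneg _) zero_le_one
        _ = C * l ^ (-(3/2) : ℝ) := one_mul _
    -- measurability of G₁, G₂
    have hexpcont : ∀ ω : ℝ, Continuous fun l : ℝ =>
        Complex.exp (Complex.I * (ω:ℂ) * (l:ℂ)) :=
      fun ω => Complex.continuous_exp.comp (continuous_const.mul Complex.continuous_ofReal)
    have hrpow_cont : ∀ p : ℝ, ContinuousOn (fun l : ℝ => l ^ p) (Ioi L₀) :=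
      fun p => continuousOn_id.rpow_const fun x hx =>
        Or.inl (ne_of_gt (lt_trans hL₀0 hx))
    have hgsub_cont : ContinuousOn (fun l : ℝ => g l - ginf) (Ioi L₀) :=
      (hgc.mono fun x hx => le_of_lt (lt_of_lt_of_le hL₀1 (le_of_lt hx))).sub
        continuousOn_const
    have hG₁meas : ∀ ω : ℝ, AEStronglyMeasurable (G₁ ω) (volume.restrict (Ioi L₀)) := by
      intro ω
      apply ((hexpcont ω).aestronglyMeasurable.restrict).mul
      apply Complex.continuous_ofReal.comp_aestronglyMeasurable
      exact (((continuousOn_const.mul (hrpow_cont _)).mul hgsub_cont).aestronglyMeasurable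
        measurableSet_Ioi)
    have hG₂meas : ∀ ω : ℝ, AEStronglyMeasurable (G₂ ω) (volume.restrict (Ioi L₀)) := by
      intro ω
      apply ((hexpcont ω).aestronglyMeasurable.restrict).mul
      apply Complex.continuous_ofReal.comp_aestronglyMeasurable
      exact (((hrpow_cont _).aestronglyMeasurable measurableSet_Ioi).mul hg'meas)
    -- integrability of G₁, G₂
    have hG₁int : ∀ ω : ℝ, IntegrableOn (G₁ ω) (Ioi L₀) := by
      intro ω
      apply Integrable.mono'
        ((integrableOn_Ioi_rpow_of_lt (show (-(3/2):ℝ) < -1 by norm_num) hL₀0).const_mul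
          (a ^ 2 * ω ^ 2 * C)) (hG₁meas ω)
      rw [ae_restrict_iff' measurableSet_Ioi]
      filter_upwards with l hl using hbG₁ ω l (le_of_lt hl)
    have hG₂int : ∀ ω : ℝ, IntegrableOn (G₂ ω) (Ioi L₀) := by
      intro ω
      apply Integrable.mono' hrpow32 (hG₂meas ω)
      rw [ae_restrict_iff' measurableSet_Ioi]
      filter_upwards with l hl using hbG₂ ω l (le_of_lt hl)
    -- the identity  ω·T ω = ω·∫_{Ioc 1 L₀} f + (I·B + (I·∫G₁ + I·∫G₂))
    have hkey : ∀ ω : ℝ, 0 < ω →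
        (ω:ℂ) * ∫ l in Ioi 1, f ω l
          = (ω:ℂ) * (∫ l in Ioc 1 L₀, f ω l)
            + (Complex.I * B ω + (Complex.I * (∫ l in Ioi L₀, G₁ ω l)
              + Complex.I * (∫ l in Ioi L₀, G₂ ω l))) := by
      intro ω hω
      have hT₂int : IntegrableOn (f ω) (Ioi L₀) :=
        (hint ω hω).mono_set (Ioi_subset_Ioi hL₀1.le)
      -- derivative of f ω on [L₀,∞)
      have hderivF : ∀ x ∈ Ici L₀, HasDerivAt (f ω)
          (Complex.I * (ω:ℂ) * f ω x + (G₁ ω x + G₂ ω x)) x := by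
        intro x hx
        have hx1 : (1:ℝ) < x := lt_of_lt_of_le hL₀1 hx
        have hx0 : (0:ℝ) < x := lt_trans zero_lt_one hx1
        have hu : HasDerivAt (fun l : ℝ => Complex.exp (Complex.I * (ω:ℂ) * (l:ℂ)))
            (Complex.I * (ω:ℂ) * Complex.exp (Complex.I * (ω:ℂ) * (x:ℂ))) x := by
          have h1 : HasDerivAt (fun l : ℝ => Complex.I * (ω:ℂ) * (l:ℂ))
              (Complex.I * (ω:ℂ)) x := by
            simpa using (Complex.ofRealCLM.hasDerivAt (x := x)).const_mul
              (Complex.I * (ω:ℂ))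
          simpa [mul_comm] using h1.cexp
        have hw : HasDerivAt (fun l : ℝ => l ^ (-(a ^ 2 * ω ^ 2)) * (g l - ginf))
            (-(a ^ 2 * ω ^ 2) * x ^ (-(a ^ 2 * ω ^ 2) - 1) * (g x - ginf)
              + x ^ (-(a ^ 2 * ω ^ 2)) * deriv g x) x := by
          have h1 := Real.hasDerivAt_rpow_const (x := x) (p := -(a ^ 2 * ω ^ 2))
            (Or.inl (ne_of_gt hx0))
          have h2 := (hgd x hx1).sub_const ginf
          exact (h1.mul h2).congr_deriv (by ring)
        have hprod := hu.mul hw.ofReal_comp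
        have hfeq : f ω = fun l : ℝ => Complex.exp (Complex.I * (ω:ℂ) * (l:ℂ))
            * ((l ^ (-(a ^ 2 * ω ^ 2)) * (g l - ginf) : ℝ) : ℂ) := by
          funext l
          rw [hfdef]
          push_cast
          ring
        rw [hfeq]
        refine hprod.congr_deriv ?_
        rw [hG₁def, hG₂def]
        simp only
        push_cast
        ring
      -- integrability of the derivative
      have hF'int : IntegrableOn
          (fun l => Complex.I * (ω:ℂ) * f ω l + (G₁ ω l + G₂ ω l)) (Ioi L₀) :=
        (hT₂int.const_mul _).add ((hG₁int ω).add (hG₂int ω))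
      -- f ω tends to 0 at ∞
      have htendF : Tendsto (f ω) atTop (𝓝 0) := by
        apply squeeze_zero_norm' (a := fun l : ℝ => C * l ^ (-(1/2) : ℝ))
        · filter_upwards [eventually_ge_atTop (max 1 L₀)] with l hl
          have hl1 : (1:ℝ) ≤ l := le_trans (le_max_left _ _) hl
          have hl0 : (0:ℝ) < l := by linarith
          rw [hnorm ω l hl0]
          calc l ^ (-(a ^ 2 * ω ^ 2)) * |g l - ginf|
              ≤ 1 * (C * l ^ (-(1/2) : ℝ)) :=
                mul_le_mul (Real.rpow_le_one_of_one_le_of_nonpos hl1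
                    (neg_nonpos.mpr (by positivity)))
                  (hbd l (le_trans (le_max_right _ _) hl)).1 (abs_nonneg _) zero_le_one
            _ = C * l ^ (-(1/2) : ℝ) := one_mul _
        · have := (tendsto_rpow_neg_atTop (show (0:ℝ) < 1/2 by norm_num)).const_mul C
          simpa using this
      have hFTC := integral_Ioi_of_hasDerivAt_of_tendsto' hderivF hF'int htendF
      rw [integral_add
          (show Integrable (fun l => Complex.I * (ω:ℂ) * f ω l) (volume.restrict (Ioi L₀))
            from hT₂int.const_mul _)
          (show Integrable (fun l => G₁ ω l + G₂ ω l) (volume.restrict (Ioi L₀))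
            from (hG₁int ω).add (hG₂int ω)),
        integral_add (hG₁int ω) (hG₂int ω), integral_const_mul, zero_sub] at hFTC
      -- f ω L₀ = B ω
      have hBf : f ω L₀ = B ω := by
        rw [hfdef, hBdef]
        push_cast
        ring
      rw [hBf] at hFTC
      -- split the integral over Ioi 1
      have hsplit : (∫ l in Ioi 1, f ω l)
          = (∫ l in Ioc 1 L₀, f ω l) + ∫ l in Ioi L₀, f ω l := by
        rw [show Ioi (1:ℝ) = Ioc 1 L₀ ∪ Ioi L₀ from (Ioc_union_Ioi_eq_Ioi hL₀1.le).symm]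
        exact setIntegral_union (Ioc_disjoint_Ioi le_rfl) measurableSet_Ioi
          ((hint ω hω).mono_set Ioc_subset_Ioi_self) hT₂int
      rw [hsplit, mul_add]
      have hI := Complex.I_mul_I
      linear_combination (-Complex.I) * hFTC
        + ((ω:ℂ) * ∫ l in Ioi L₀, f ω l) * hI
    -- limit (1): the compact piece
    obtain ⟨K, hK⟩ := isCompact_Icc.exists_bound_of_continuousOn
      (f := fun l : ℝ => g l - ginf)
      ((hgc.mono (Icc_subset_Ici_self : Icc (1:ℝ) L₀ ⊆ Ici 1)).sub continuousOn_const)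
    have hT₁lim : Tendsto (fun ω : ℝ => (ω:ℂ) * ∫ l in Ioc 1 L₀, f ω l)
        (𝓝[Ioi 0] 0) (𝓝 0) := by
      apply squeeze_zero_norm'
        (a := fun ω : ℝ => |ω| * (K * (volume (Ioc (1:ℝ) L₀)).toReal))
      · filter_upwards with ω
        rw [norm_mul, Complex.norm_real, Real.norm_eq_abs]
        apply mul_le_mul_of_nonneg_left _ (abs_nonneg ω)
        apply norm_setIntegral_le_of_norm_le_const measure_Ioc_lt_top
        · intro x hx
          have hx1 : (1:ℝ) < x := hx.1
          have hx0 : (0:ℝ) < x := by linarith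
          rw [hnorm ω x hx0]
          calc x ^ (-(a ^ 2 * ω ^ 2)) * |g x - ginf|
              ≤ 1 * K :=
                mul_le_mul (Real.rpow_le_one_of_one_le_of_nonpos hx1.le
                    (neg_nonpos.mpr (by positivity)))
                  (by simpa [Real.norm_eq_abs] using hK x (mem_Icc.mpr ⟨hx1.le, hx.2⟩))
                  (abs_nonneg _) zero_le_one
            _ = K := one_mul _
      · have h : Tendsto (fun ω : ℝ => |ω| * (K * (volume (Ioc (1:ℝ) L₀)).toReal))
            (𝓝 0) (𝓝 0) := by
          simpa using (continuous_abs.tendsto 0).mul_const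
            (K * (volume (Ioc (1:ℝ) L₀)).toReal)
        exact h.mono_left nhdsWithin_le_nhds
    -- limit (2): the boundary term
    have hBcont : Continuous B := by
      have hBeq : B = fun ω : ℝ => Complex.exp (Complex.I * (ω:ℂ) * (L₀:ℂ))
          * ((Real.exp (Real.log L₀ * (-(a ^ 2 * ω ^ 2))) * (g L₀ - ginf) : ℝ) : ℂ) := by
        funext ω
        rw [hBdef]
        simp only
        rw [Real.rpow_def_of_pos hL₀0]
      rw [hBeq]
      apply Continuous.mul
      · exact Complex.continuous_exp.comp (by fun_prop)
      · exact Complex.continuous_ofReal.comp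
          ((Real.continuous_exp.comp (by fun_prop)).mul continuous_const)
    have hB0 : B 0 = ((g L₀ - ginf : ℝ) : ℂ) := by
      rw [hBdef]
      norm_num
    have hBlim : Tendsto (fun ω : ℝ => Complex.I * B ω) (𝓝[Ioi 0] 0)
        (𝓝 (Complex.I * ((g L₀ - ginf : ℝ) : ℂ))) := by
      have h : Tendsto B (𝓝 0) (𝓝 (B 0)) := hBcont.tendsto 0
      have h2 : Tendsto (fun ω : ℝ => Complex.I * B ω) (𝓝 0) (𝓝 (Complex.I * B 0)) :=
        h.const_mul Complex.I
      rw [hB0] at h2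
      exact h2.mono_left nhdsWithin_le_nhds
    -- limit (3): the small term
    have hR₁lim : Tendsto (fun ω : ℝ => Complex.I * ∫ l in Ioi L₀, G₁ ω l)
        (𝓝[Ioi 0] 0) (𝓝 0) := by
      apply squeeze_zero_norm'
        (a := fun ω : ℝ => a ^ 2 * ω ^ 2 * (C * ∫ l in Ioi L₀, l ^ (-(3/2) : ℝ)))
      · filter_upwards with ω
        rw [norm_mul, Complex.norm_I, one_mul]
        have h1 : ‖∫ l in Ioi L₀, G₁ ω l‖
            ≤ ∫ l in Ioi L₀, (a ^ 2 * ω ^ 2 * C) * l ^ (-(3/2) : ℝ) := by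
          apply norm_integral_le_of_norm_le
            ((integrableOn_Ioi_rpow_of_lt (show (-(3/2):ℝ) < -1 by norm_num)
              hL₀0).const_mul _)
          rw [ae_restrict_iff' measurableSet_Ioi]
          filter_upwards with l hl using hbG₁ ω l (le_of_lt hl)
        refine h1.trans (le_of_eq ?_)
        rw [integral_const_mul]
        ring
      · have h : Tendsto (fun ω : ℝ => a ^ 2 * ω ^ 2
            * (C * ∫ l in Ioi L₀, l ^ (-(3/2) : ℝ))) (𝓝 0) (𝓝 0) := by
          simpa [Pi.mul_def] using ((continuous_const.mul (continuous_pow 2)).mul continuous_const).tendsto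
            (0:ℝ)
        exact h.mono_left nhdsWithin_le_nhds
    -- limit (4): dominated convergence
    have hR₂lim : Tendsto (fun ω : ℝ => Complex.I * ∫ l in Ioi L₀, G₂ ω l) (𝓝[Ioi 0] 0)
        (𝓝 (Complex.I * ((ginf - g L₀ : ℝ) : ℂ))) := by
      have hDCT : Tendsto (fun ω : ℝ => ∫ l in Ioi L₀, G₂ ω l) (𝓝[Ioi 0] 0)
          (𝓝 (∫ l in Ioi L₀, ((deriv g l : ℝ) : ℂ))) := by
        apply tendsto_integral_filter_of_dominated_convergence
          (bound := fun l : ℝ => C * l ^ (-(3/2) : ℝ))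
        · exact Eventually.of_forall hG₂meas
        · apply Eventually.of_forall
          intro ω
          rw [ae_restrict_iff' measurableSet_Ioi]
          filter_upwards with l hl using hbG₂ ω l (le_of_lt hl)
        · exact hrpow32
        · rw [ae_restrict_iff' measurableSet_Ioi]
          filter_upwards with l hl
          have hl0 : (0:ℝ) < l := lt_trans hL₀0 hl
          have hcont : Continuous (fun ω : ℝ => Complex.exp (Complex.I * (ω:ℂ) * (l:ℂ))
              * ((Real.exp (Real.log l * (-(a ^ 2 * ω ^ 2))) * deriv g l : ℝ) : ℂ)) := by
            apply Continuous.mul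
            · exact Complex.continuous_exp.comp (by fun_prop)
            · exact Complex.continuous_ofReal.comp
                ((Real.continuous_exp.comp (by fun_prop)).mul continuous_const)
          have heq : (fun ω : ℝ => G₂ ω l) = fun ω : ℝ =>
              Complex.exp (Complex.I * (ω:ℂ) * (l:ℂ))
              * ((Real.exp (Real.log l * (-(a ^ 2 * ω ^ 2))) * deriv g l : ℝ) : ℂ) := by
            funext ω
            rw [hG₂def]
            simp only
            rw [Real.rpow_def_of_pos hl0]
          rw [heq]
          have h := (hcont.tendsto 0).mono_left (nhdsWithin_le_nhds (s := Ioi (0:ℝ)))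
          simpa using h
      have heval : (∫ l in Ioi L₀, ((deriv g l : ℝ) : ℂ)) = ((ginf - g L₀ : ℝ) : ℂ) := by
        rw [← hg'integral]
        exact integral_ofReal
      rw [heval] at hDCT
      exact hDCT.const_mul Complex.I
    -- assemble
    have hsum := hT₁lim.add (hBlim.add (hR₁lim.add hR₂lim))
    have hzero : (0:ℂ) + (Complex.I * ((g L₀ - ginf : ℝ):ℂ)
        + ((0:ℂ) + Complex.I * ((ginf - g L₀ : ℝ):ℂ))) = 0 := by
      push_cast
      ring
    rw [hzero] at hsum
    refine Tendsto.congr' ?_ hsum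
    filter_upwards [self_mem_nhdsWithin] with ω hω
    exact (hkey ω hω).symm
end

section
/- For every real ω with 0 ≤ ω ≤ 2π, the series ∑_{ℓ=1}^∞ sin(ℓ ω)/ℓ² converges and equals the Clausen function Cl₂(ω) = −∫₀^ω log(2 sin(t/2)) dt. -/
open Real Filter

open Real Filter MeasureTheory Set Topology
set_option maxHeartbeats 1000000

lemma abs_one_sub_exp {t : ℝ} (h0 : 0 ≤ t) (h1 : t ≤ 2 * π) :
    ‖1 - Complex.exp (t * Complex.I)‖ = 2 * Real.sin (t / 2) := by
  have hs : 0 ≤ Real.sin (t / 2) := Real.sin_nonneg_of_nonneg_of_le_pi (by linarith) (by linarith)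
  have hcos : Real.cos t = 1 - 2 * Real.sin (t / 2) ^ 2 := by
    have h2 := Real.cos_two_mul (t / 2)
    have h3 := Real.sin_sq_add_cos_sq (t / 2)
    have : (2 : ℝ) * (t / 2) = t := by ring
    rw [this] at h2
    nlinarith
  have hsq : ‖1 - Complex.exp (t * Complex.I)‖ ^ 2 = (2 * Real.sin (t / 2)) ^ 2 := by
    rw [Complex.sq_norm, Complex.normSq_apply]
    have hre : (1 - Complex.exp (t * Complex.I)).re = 1 - Real.cos t := by
      simp [Complex.exp_ofReal_mul_I_re]
    have him : (1 - Complex.exp (t * Complex.I)).im = -Real.sin t := by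
      simp [Complex.exp_ofReal_mul_I_im]
    rw [hre, him]
    have h3 := Real.sin_sq_add_cos_sq t
    nlinarith
  have h4 := congrArg Real.sqrt hsq
  rwa [Real.sqrt_sq (norm_nonneg _), Real.sqrt_sq (by positivity)] at h4

lemma abs_one_sub_smul_exp_ge {r t : ℝ} (hr : 1/2 ≤ r) (hr1 : r ≤ 1)
    (h0 : 0 ≤ t) (h1 : t ≤ 2 * π) :
    Real.sin (t / 2) ≤ ‖1 - (r : ℂ) * Complex.exp (t * Complex.I)‖ := by
  have hs : 0 ≤ Real.sin (t / 2) := Real.sin_nonneg_of_nonneg_of_le_pi (by linarith) (by linarith)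
  have hcos : Real.cos t = 1 - 2 * Real.sin (t / 2) ^ 2 := by
    have h2 := Real.cos_two_mul (t / 2)
    have h3 := Real.sin_sq_add_cos_sq (t / 2)
    have ht : (2 : ℝ) * (t / 2) = t := by ring
    rw [ht] at h2; nlinarith
  have hsq : Real.sin (t / 2) ^ 2 ≤ ‖1 - (r : ℂ) * Complex.exp (t * Complex.I)‖ ^ 2 := by
    rw [Complex.sq_norm, Complex.normSq_apply]
    have hre : (1 - (r : ℂ) * Complex.exp (t * Complex.I)).re = 1 - r * Real.cos t := by
      simp [Complex.exp_ofReal_mul_I_re]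
    have him : (1 - (r : ℂ) * Complex.exp (t * Complex.I)).im = -(r * Real.sin t) := by
      simp [Complex.exp_ofReal_mul_I_im]
    rw [hre, him]
    have h3 := Real.sin_sq_add_cos_sq t
    have hc1 : Real.cos t ≤ 1 := Real.cos_le_one t
    nlinarith [sq_nonneg (1 - r)]
  calc Real.sin (t / 2) = Real.sqrt (Real.sin (t / 2) ^ 2) := (Real.sqrt_sq hs).symm
    _ ≤ Real.sqrt (‖1 - (r : ℂ) * Complex.exp (t * Complex.I)‖ ^ 2) :=
        Real.sqrt_le_sqrt hsq
    _ = _ := Real.sqrt_sq (norm_nonneg _)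

lemma hasSum_cos_pow {r t : ℝ} (hr : |r| < 1) :
    HasSum (fun ℓ : ℕ => r ^ (ℓ + 1) * Real.cos ((ℓ + 1 : ℝ) * t) / (ℓ + 1 : ℝ))
      (-Real.log (‖1 - (r : ℂ) * Complex.exp (t * Complex.I)‖)) := by
  set z : ℂ := (r : ℂ) * Complex.exp (t * Complex.I) with hz
  have hznorm : ‖z‖ < 1 := by
    rw [hz, norm_mul, Complex.norm_real, Complex.norm_exp_ofReal_mul_I, mul_one]
    exact hr
  have h := Complex.hasSum_taylorSeries_neg_log hznorm
  have hre := Complex.hasSum_re h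
  have hterm : ∀ n : ℕ, (z ^ n / (n : ℂ)).re = r ^ n * Real.cos ((n : ℝ) * t) / (n : ℝ) := by
    intro n
    have hzn : z ^ n = ((r ^ n : ℝ) : ℂ) * Complex.exp (((n : ℝ) * t : ℝ) * Complex.I) := by
      rw [hz, mul_pow, ← Complex.exp_nat_mul]
      push_cast
      ring_nf
    have heq : z ^ n / (n : ℂ) = ((r ^ n / n : ℝ) : ℂ) * Complex.exp (((n : ℝ) * t : ℝ) * Complex.I) := by
      rw [hzn]; push_cast; ring
    rw [heq, Complex.re_ofReal_mul, Complex.exp_ofReal_mul_I_re]; ring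
  rw [Complex.neg_re, Complex.log_re] at hre
  simp only [hterm] at hre
  have h2 := (hasSum_nat_add_iff' (f := fun n : ℕ => r ^ n * Real.cos ((n : ℝ) * t) / (n : ℝ)) 1).mpr hre
  simp only [Finset.sum_range_one, Nat.cast_zero, div_zero, sub_zero] at h2
  convert h2 using 2 with ℓ
  · rfl
  · push_cast
    ring

lemma intervalIntegrable_log01 : IntervalIntegrable Real.log volume 0 1 := by
  have hb : IntervalIntegrable (fun x : ℝ => 2 * x ^ (-(1:ℝ)/2)) volume 0 1 :=
    (intervalIntegral.intervalIntegrable_rpow' (by norm_num)).const_mul 2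
  apply hb.mono_fun Real.measurable_log.aestronglyMeasurable
  have hsub : Set.uIoc (0:ℝ) 1 = Set.Ioc 0 1 := Set.uIoc_of_le zero_le_one
  rw [hsub]
  filter_upwards [ae_restrict_mem measurableSet_Ioc] with t ht
  obtain ⟨ht0, ht1⟩ := ht
  have hu : (0:ℝ) < t ^ ((1:ℝ)/2) := Real.rpow_pos_of_pos ht0 _
  have hlog : Real.log t = 2 * Real.log (t ^ ((1:ℝ)/2)) := by
    rw [Real.log_rpow ht0]; ring
  have hneg : -Real.log (t ^ ((1:ℝ)/2)) ≤ (t ^ ((1:ℝ)/2))⁻¹ := by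
    rw [← Real.log_inv]
    have := Real.log_le_sub_one_of_pos (inv_pos.mpr hu)
    linarith
  have hrw : t ^ (-(1:ℝ)/2) = (t ^ ((1:ℝ)/2))⁻¹ := by
    rw [← Real.rpow_neg ht0.le]; norm_num
  have hlt : Real.log t ≤ 0 := Real.log_nonpos ht0.le ht1
  have hpos : (0:ℝ) ≤ 2 * t ^ (-(1:ℝ)/2) := by positivity
  rw [Real.norm_eq_abs, Real.norm_eq_abs, abs_of_nonpos hlt, abs_of_nonneg hpos, hrw]
  linarith [hlog, hneg]

lemma intervalIntegrable_log0 {b : ℝ} (hb : 0 < b) : IntervalIntegrable Real.log volume 0 b := by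
  rcases le_total b 1 with h | h
  · exact intervalIntegrable_log01.mono_set
      (Set.uIcc_subset_uIcc (by simp) (by
        rw [Set.uIcc_of_le zero_le_one]; exact ⟨hb.le, h⟩))
  · exact intervalIntegrable_log01.trans
      (intervalIntegral.intervalIntegrable_log (by
        rw [Set.uIcc_of_le h]; intro h0; exact absurd h0.1 (by norm_num)))

noncomputable def Bfun (t : ℝ) : ℝ :=
  Real.log 2 + (Real.log (2*π) - Real.log t) + (Real.log (2*π) - Real.log (2*π - t))

lemma Bfun_integrable : IntervalIntegrable Bfun volume 0 (2*π) := by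
  have h2pi : (0:ℝ) < 2*π := by positivity
  have h1 : IntervalIntegrable Real.log volume 0 (2*π) := intervalIntegrable_log0 h2pi
  have h2 : IntervalIntegrable (fun t : ℝ => Real.log (2*π - t)) volume 0 (2*π) := by
    have := (intervalIntegrable_log0 h2pi).comp_sub_left (2*π)
    simpa using this.symm
  exact (intervalIntegrable_const.add (intervalIntegrable_const.sub h1)).add
    (intervalIntegrable_const.sub h2)

lemma sin_half_lb {t : ℝ} (h0 : 0 ≤ t) (h1 : t ≤ 2*π) :
    t * (2*π - t) / (2*π^2) ≤ Real.sin (t/2) := by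
  have hπ := Real.pi_pos
  rcases le_total t π with h | h
  · have hms := Real.mul_le_sin (x := t/2) (by linarith) (by linarith)
    have : t * (2*π - t) / (2*π^2) ≤ 2/π * (t/2) := by
      rw [div_le_iff₀ (by positivity)]
      have : 2/π * (t/2) = t/π := by field_simp
      rw [this, div_mul_eq_mul_div, le_div_iff₀ hπ]
      nlinarith [mul_nonneg (mul_nonneg h0 h0) hπ.le]
    linarith
  · have heq : Real.sin (t/2) = Real.sin ((2*π - t)/2) := by
      have : (2*π - t)/2 = π - t/2 := by ring
      rw [this, Real.sin_pi_sub]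
    rw [heq]
    have hms := Real.mul_le_sin (x := (2*π - t)/2) (by linarith) (by linarith)
    have : t * (2*π - t) / (2*π^2) ≤ 2/π * ((2*π - t)/2) := by
      rw [div_le_iff₀ (by positivity)]
      have h2 : 2/π * ((2*π - t)/2) = (2*π - t)/π := by field_simp
      rw [h2, div_mul_eq_mul_div, le_div_iff₀ hπ]
      nlinarith [mul_nonneg (mul_nonneg (sub_nonneg.2 h1) (sub_nonneg.2 h1)) hπ.le]
    linarith

lemma log_two_sin_bounds {t : ℝ} (ht : t ∈ Set.Ioo 0 (2*π)) :
    Real.log t + Real.log (2*π - t) - 2 * Real.log (2*π) ≤ Real.log (2 * Real.sin (t/2)) ∧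
    Real.log (2 * Real.sin (t/2)) ≤ Real.log 2 := by
  obtain ⟨ht0, ht2⟩ := ht
  have hπ := Real.pi_pos
  have hs0 : 0 < Real.sin (t/2) := Real.sin_pos_of_pos_of_lt_pi (by linarith) (by linarith)
  constructor
  · have hlb := sin_half_lb ht0.le ht2.le
    have hmt : (0:ℝ) < 2*π - t := by linarith
    have hq : (0:ℝ) < t * (2*π - t) / (2*π^2) := by positivity
    have h1 : Real.log (t * (2*π - t) / (2*π^2)) ≤ Real.log (2 * Real.sin (t/2)) := by
      apply Real.log_le_log hq; linarith
    have h2 : Real.log (t * (2*π - t) / (2*π^2)) =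
        Real.log t + Real.log (2*π - t) - Real.log (2*π^2) := by
      rw [Real.log_div (mul_pos ht0 hmt).ne' (by positivity : (0:ℝ) < 2*π^2).ne', Real.log_mul ht0.ne' hmt.ne']
    have h3 : Real.log (2*π^2) ≤ 2 * Real.log (2*π) := by
      have e1 : Real.log (2*π^2) ≤ Real.log ((2*π)^2) := by
        apply Real.log_le_log (by positivity); nlinarith
      rw [Real.log_pow] at e1; push_cast at e1; linarith
    linarith
  · have : 2 * Real.sin (t/2) ≤ 2 := by nlinarith [Real.sin_le_one (t/2)]
    calc Real.log (2 * Real.sin (t/2)) ≤ Real.log 2 := Real.log_le_log (by positivity) this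

lemma Bfun_pieces {t : ℝ} (ht : t ∈ Set.Ioo 0 (2*π)) :
    Real.log t ≤ Real.log (2*π) ∧ Real.log (2*π - t) ≤ Real.log (2*π) := by
  obtain ⟨ht0, ht2⟩ := ht
  have hπ := Real.pi_pos
  constructor
  · exact Real.log_le_log ht0 (by linarith)
  · rcases eq_or_lt_of_le (by linarith : (0:ℝ) ≤ 2*π - t) with h | h
    · rw [← h]; simp [Real.log_nonneg, Real.log_nonneg (by linarith : (1:ℝ) ≤ 2*π)]
    · exact Real.log_le_log h (by linarith)

lemma bound_a {t : ℝ} (ht : t ∈ Set.Ioo 0 (2*π)) :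
    |Real.log (2 * Real.sin (t/2))| ≤ Bfun t := by
  obtain ⟨hlb, hub⟩ := log_two_sin_bounds ht
  obtain ⟨hp1, hp2⟩ := Bfun_pieces ht
  have hl2 : (0:ℝ) ≤ Real.log 2 := Real.log_nonneg one_le_two
  rw [abs_le]; unfold Bfun; constructor <;> linarith

lemma bound_b {r t : ℝ} (hr : 1/2 ≤ r) (hr1 : r ≤ 1) (ht : t ∈ Set.Ioo 0 (2*π)) :
    |Real.log (‖1 - (r : ℂ) * Complex.exp (t * Complex.I)‖)| ≤
      Real.log 2 + Bfun t := by
  obtain ⟨ht0, ht2⟩ := ht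
  have hπ := Real.pi_pos
  have hs0 : 0 < Real.sin (t/2) := Real.sin_pos_of_pos_of_lt_pi (by linarith) (by linarith)
  set A := ‖1 - (r : ℂ) * Complex.exp (t * Complex.I)‖ with hA
  have hlow : Real.sin (t/2) ≤ A := abs_one_sub_smul_exp_ge hr hr1 ht0.le ht2.le
  have hup : A ≤ 2 := by
    calc A = ‖1 - (r : ℂ) * Complex.exp (t * Complex.I)‖ := rfl
      _ ≤ ‖(1:ℂ)‖ + ‖(r : ℂ) * Complex.exp (t * Complex.I)‖ := norm_sub_le _ _
      _ ≤ 2 := by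
          rw [norm_one, norm_mul, Complex.norm_real, Complex.norm_exp_ofReal_mul_I,
            Real.norm_eq_abs]
          rw [abs_of_nonneg (by linarith : (0:ℝ) ≤ r)]
          linarith
  have hlogA_ub : Real.log A ≤ Real.log 2 := Real.log_le_log (lt_of_lt_of_le hs0 hlow) hup
  have hlogA_lb : Real.log (Real.sin (t/2)) ≤ Real.log A := Real.log_le_log hs0 hlow
  have hsplit : Real.log (2 * Real.sin (t/2)) = Real.log 2 + Real.log (Real.sin (t/2)) :=
    Real.log_mul two_ne_zero hs0.ne'
  obtain ⟨hlb, hub⟩ := log_two_sin_bounds ⟨ht0, ht2⟩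
  obtain ⟨hp1, hp2⟩ := Bfun_pieces ⟨ht0, ht2⟩
  have hl2 : (0:ℝ) ≤ Real.log 2 := Real.log_nonneg one_le_two
  rw [abs_le]; unfold Bfun; constructor <;> linarith

lemma summable_bound : Summable (fun ℓ : ℕ => 1/((ℓ:ℝ)+1)^2) := by
  have h := (summable_nat_add_iff (f := fun n : ℕ => 1/(n:ℝ)^2) 1).mpr
    (Real.summable_one_div_nat_pow.mpr one_lt_two)
  simpa using h

lemma per_r (ω : ℝ) (h0 : 0 ≤ ω) {r : ℝ} (hr0 : 0 ≤ r) (hr1 : r < 1) :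
    HasSum (fun ℓ : ℕ => r^(ℓ+1) * Real.sin ((ℓ+1:ℝ)*ω) / ((ℓ:ℝ)+1)^2)
      (-∫ t in Set.Ioc (0:ℝ) ω,
        Real.log (‖1 - (r:ℂ) * Complex.exp (t * Complex.I)‖)) := by
  set f : ℕ → ℝ := fun ℓ => r^(ℓ+1) * Real.sin ((ℓ+1:ℝ)*ω) / ((ℓ:ℝ)+1)^2 with hf
  have habs : |r| < 1 := by rwa [abs_of_nonneg hr0]
  have hsumm : Summable f := by
    apply Summable.of_norm_bounded summable_bound
    intro ℓ
    rw [hf, Real.norm_eq_abs, abs_div, abs_mul, abs_pow]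
    have hd : |((ℓ:ℝ)+1)^2| = ((ℓ:ℝ)+1)^2 := abs_of_pos (by positivity)
    rw [hd]
    have h1 : |r|^(ℓ+1) * |Real.sin ((ℓ+1:ℝ)*ω)| ≤ 1 :=
      mul_le_one₀ (pow_le_one₀ (abs_nonneg r) habs.le) (abs_nonneg _)
        (abs_le.mpr ⟨Real.neg_one_le_sin _, Real.sin_le_one _⟩)
    exact (div_le_div_iff_of_pos_right (by positivity)).mpr h1
  set g : ℕ → ℝ → ℝ := fun ℓ t => r^(ℓ+1) * Real.cos ((ℓ+1:ℝ)*t) / ((ℓ:ℝ)+1) with hg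
  have hgcont : ∀ ℓ : ℕ, Continuous (g ℓ) := by
    intro ℓ
    apply Continuous.div_const
    exact continuous_const.mul (Real.continuous_cos.comp (continuous_const.mul continuous_id))
  have hterm : ∀ ℓ : ℕ, ∫ t in (0:ℝ)..ω, g ℓ t = f ℓ := by
    intro ℓ
    set c : ℝ := (ℓ:ℝ)+1 with hc
    have hcpos : (0:ℝ) < c := by positivity
    have hcos : ∫ t in (0:ℝ)..ω, Real.cos (c*t) = c⁻¹ * Real.sin (c*ω) := by
      rw [intervalIntegral.integral_comp_mul_left Real.cos hcpos.ne']
      rw [mul_zero, _root_.integral_cos, Real.sin_zero, sub_zero, smul_eq_mul]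
    have hsplit : ∀ t : ℝ, g ℓ t = (r^(ℓ+1)/c) * Real.cos (c*t) := fun t => by
      rw [hg]; ring
    rw [intervalIntegral.integral_congr (fun t _ => hsplit t),
      intervalIntegral.integral_const_mul, hcos, hf, hc]
    field_simp
  have hS : ∀ N : ℕ, ∑ ℓ ∈ Finset.range N, f ℓ
      = ∫ t in Set.Ioc (0:ℝ) ω, (∑ ℓ ∈ Finset.range N, g ℓ t) := by
    intro N
    rw [← intervalIntegral.integral_of_le h0,
      intervalIntegral.integral_finset_sum (fun ℓ _ => (hgcont ℓ).intervalIntegrable 0 ω)]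
    exact (Finset.sum_congr rfl fun ℓ _ => (hterm ℓ).symm)
  have hptw : ∀ t : ℝ, Filter.Tendsto (fun N => ∑ ℓ ∈ Finset.range N, g ℓ t) atTop
      (𝓝 (-Real.log (‖1 - (r:ℂ) * Complex.exp (t * Complex.I)‖))) :=
    fun t => (hasSum_cos_pow habs).tendsto_sum_nat
  have h1r : (0:ℝ) < 1 - r := by linarith
  have hgeom : ∀ (N : ℕ) (t : ℝ), |∑ ℓ ∈ Finset.range N, g ℓ t| ≤ (1-r)⁻¹ := by
    intro N t
    calc |∑ ℓ ∈ Finset.range N, g ℓ t| ≤ ∑ ℓ ∈ Finset.range N, |g ℓ t| :=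
          Finset.abs_sum_le_sum_abs _ _
      _ ≤ ∑ ℓ ∈ Finset.range N, r^ℓ := by
          apply Finset.sum_le_sum
          intro ℓ _
          rw [hg]
          simp only [abs_div, abs_mul, abs_pow, abs_of_nonneg hr0]
          have hd1 : (1:ℝ) ≤ |(ℓ:ℝ)+1| := by
            rw [abs_of_pos (by positivity : (0:ℝ) < (ℓ:ℝ)+1)]
            simp
          have hnum : r^(ℓ+1) * |Real.cos ((ℓ+1:ℝ)*t)| ≤ r^(ℓ+1) :=
            mul_le_of_le_one_right (by positivity)
              (abs_le.mpr ⟨Real.neg_one_le_cos _, Real.cos_le_one _⟩)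
          have hstep : r^(ℓ+1) ≤ r^ℓ := by
            rw [pow_succ]
            exact mul_le_of_le_one_right (by positivity) hr1.le
          calc r^(ℓ+1) * |Real.cos ((ℓ+1:ℝ)*t)| / |(ℓ:ℝ)+1|
              ≤ r^(ℓ+1) * |Real.cos ((ℓ+1:ℝ)*t)| / 1 := by
                apply div_le_div_of_nonneg_left (by positivity) (by norm_num) hd1
            _ = r^(ℓ+1) * |Real.cos ((ℓ+1:ℝ)*t)| := by rw [div_one]
            _ ≤ r^ℓ := hnum.trans hstep
      _ = (r^N - 1)/(r - 1) := geom_sum_eq hr1.ne N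
      _ ≤ (1-r)⁻¹ := by
          rw [(by rw [div_eq_div_iff (by linarith : r - 1 ≠ 0) (by linarith : 1 - r ≠ 0)]; ring :
            (r^N - 1)/(r - 1) = (1 - r^N)/(1 - r)), ← one_div]
          exact (div_le_div_iff_of_pos_right h1r).mpr (by nlinarith [pow_nonneg hr0 N])
  have hbdd_int : Integrable (fun _ : ℝ => (1-r)⁻¹)
      (volume.restrict (Set.Ioc (0:ℝ) ω)) := by
    apply (integrableOn_const_iff).mpr
    exact Or.inr measure_Ioc_lt_top
  have hDCT := MeasureTheory.tendsto_integral_filter_of_dominated_convergence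
      (μ := volume.restrict (Set.Ioc (0:ℝ) ω)) (bound := fun _ => (1-r)⁻¹)
      (F := fun N t => ∑ ℓ ∈ Finset.range N, g ℓ t)
      (f := fun t => -Real.log (‖1 - (r:ℂ) * Complex.exp (t * Complex.I)‖))
      (Filter.Eventually.of_forall fun N =>
        (continuous_finset_sum _ fun ℓ _ => hgcont ℓ).aestronglyMeasurable)
      (Filter.Eventually.of_forall fun N => ae_of_all _ fun t => by
        simpa [Real.norm_eq_abs] using hgeom N t)
      hbdd_int
      (ae_of_all _ hptw)
  rw [MeasureTheory.integral_neg] at hDCT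
  have hT2 : Filter.Tendsto (fun N => ∑ ℓ ∈ Finset.range N, f ℓ) atTop
      (𝓝 (-∫ t in Set.Ioc (0:ℝ) ω,
        Real.log (‖1 - (r:ℂ) * Complex.exp (t * Complex.I)‖))) :=
    hDCT.congr fun N => (hS N).symm
  have huniq := tendsto_nhds_unique hsumm.hasSum.tendsto_sum_nat hT2
  exact huniq ▸ hsumm.hasSum

/-- For `0 ≤ ω ≤ 2π`, the series `∑_{ℓ=1}^∞ sin(ℓω)/ℓ²` converges and equals
the Clausen function `Cl₂(ω) = −∫₀^ω log(2 sin(t/2)) dt`. -/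
theorem stmt_7 (ω : ℝ) (h0 : 0 ≤ ω) (h1 : ω ≤ 2 * π) :
    HasSum (fun ℓ : ℕ => Real.sin ((ℓ + 1 : ℝ) * ω) / (ℓ + 1 : ℝ) ^ 2)
      (-∫ t in (0 : ℝ)..ω, Real.log (2 * Real.sin (t / 2))) := by
  have hπ := Real.pi_pos
  have hsumm : Summable (fun ℓ : ℕ => Real.sin ((ℓ + 1 : ℝ) * ω) / ((ℓ:ℝ) + 1) ^ 2) := by
    apply Summable.of_norm_bounded summable_bound
    intro ℓ
    rw [Real.norm_eq_abs, abs_div, abs_of_pos (by positivity : (0:ℝ) < ((ℓ:ℝ)+1)^2)]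
    exact (div_le_div_iff_of_pos_right (by positivity)).mpr
      (abs_le.mpr ⟨Real.neg_one_le_sin _, Real.sin_le_one _⟩)
  suffices hkey : (∑' ℓ : ℕ, Real.sin ((ℓ + 1 : ℝ) * ω) / ((ℓ:ℝ) + 1) ^ 2)
      = -∫ t in (0 : ℝ)..ω, Real.log (2 * Real.sin (t / 2)) by
    exact hkey ▸ hsumm.hasSum
  set r : ℕ → ℝ := fun n => 1 - ((n:ℝ)+2)⁻¹ with hrdef
  have hrhalf : ∀ n, 1/2 ≤ r n := by
    intro n
    have h2 : ((n:ℝ)+2)⁻¹ ≤ 2⁻¹ :=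
      inv_anti₀ (by norm_num) (by linarith [Nat.cast_nonneg (α := ℝ) n])
    rw [hrdef]
    norm_num at h2 ⊢
    linarith
  have hr0 : ∀ n, 0 ≤ r n := fun n => le_trans (by norm_num) (hrhalf n)
  have hr1 : ∀ n, r n < 1 := by
    intro n
    have : (0:ℝ) < ((n:ℝ)+2)⁻¹ := by positivity
    rw [hrdef]; simp only; linarith
  have hrlim : Filter.Tendsto r atTop (𝓝 1) := by
    have h2 : Filter.Tendsto (fun n : ℕ => ((n:ℝ)+2)⁻¹) atTop (𝓝 0) := by
      apply Filter.Tendsto.inv_tendsto_atTop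
      exact tendsto_natCast_atTop_atTop.atTop_add tendsto_const_nhds
    have := Filter.Tendsto.sub
      (tendsto_const_nhds : Filter.Tendsto (fun _ : ℕ => (1:ℝ)) atTop (𝓝 1)) h2
    simpa using this
  -- LHS limit (Tannery)
  have hLHS : Filter.Tendsto
      (fun n => ∑' ℓ : ℕ, (r n)^(ℓ+1) * Real.sin ((ℓ+1:ℝ)*ω) / ((ℓ:ℝ)+1)^2) atTop
      (𝓝 (∑' ℓ : ℕ, Real.sin ((ℓ + 1 : ℝ) * ω) / ((ℓ:ℝ) + 1) ^ 2)) := by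
    apply tendsto_tsum_of_dominated_convergence summable_bound
    · intro ℓ
      have hpow : Filter.Tendsto (fun n => (r n)^(ℓ+1)) atTop (𝓝 1) := by
        have := hrlim.pow (ℓ+1)
        simpa using this
      have := (hpow.mul_const (Real.sin ((ℓ+1:ℝ)*ω))).div_const (((ℓ:ℝ)+1)^2)
      simpa using this
    · apply Filter.Eventually.of_forall
      intro n ℓ
      rw [Real.norm_eq_abs, abs_div, abs_mul, abs_pow,
        abs_of_pos (by positivity : (0:ℝ) < ((ℓ:ℝ)+1)^2), abs_of_nonneg (hr0 n)]
      have h1' : (r n)^(ℓ+1) * |Real.sin ((ℓ+1:ℝ)*ω)| ≤ 1 :=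
        mul_le_one₀ (pow_le_one₀ (hr0 n) (hr1 n).le) (abs_nonneg _)
          (abs_le.mpr ⟨Real.neg_one_le_sin _, Real.sin_le_one _⟩)
      exact (div_le_div_iff_of_pos_right (by positivity)).mpr h1'
  -- RHS limit (DCT)
  set μ := volume.restrict (Set.Ioc (0:ℝ) ω) with hμ
  have hmem : ∀ᵐ t ∂μ, t ∈ Set.Ioc (0:ℝ) ω := ae_restrict_mem measurableSet_Ioc
  have hne : ∀ᵐ t ∂μ, t ≠ 2*π := by
    apply ae_restrict_of_ae
    rw [ae_iff]
    have : {t : ℝ | ¬ t ≠ 2*π} = {2*π} := by ext t; simp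
    rw [this]
    exact measure_singleton _
  have hIoo : ∀ᵐ t ∂μ, t ∈ Set.Ioo 0 (2*π) := by
    filter_upwards [hmem, hne] with t ht htne
    exact ⟨ht.1, lt_of_le_of_ne (ht.2.trans h1) htne⟩
  have hmeas : ∀ n : ℕ, AEStronglyMeasurable
      (fun t : ℝ => Real.log (‖1 - ((r n):ℂ) * Complex.exp (t * Complex.I)‖)) μ := by
    intro n
    apply Measurable.aestronglyMeasurable
    apply Real.measurable_log.comp
    exact (continuous_norm.comp
      (continuous_const.sub (continuous_const.mul
        (Complex.continuous_exp.comp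
          ((Complex.continuous_ofReal.comp continuous_id).mul continuous_const))))).measurable
  have hbd_int : Integrable (fun t => Real.log 2 + Bfun t) μ := by
    have hB : IntervalIntegrable Bfun volume 0 ω :=
      Bfun_integrable.mono_set (Set.uIcc_subset_uIcc (by simp)
        (by rw [Set.uIcc_of_le (by positivity : (0:ℝ) ≤ 2*π)]; exact ⟨h0, h1⟩))
    have hBon : IntegrableOn Bfun (Set.Ioc (0:ℝ) ω) volume := hB.1
    exact ((integrableOn_const_iff).mpr (Or.inr measure_Ioc_lt_top)).add hBon
  have hbound : ∀ n : ℕ, ∀ᵐ t : ℝ ∂μ,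
      ‖Real.log (‖1 - ((r n):ℂ) * Complex.exp (t * Complex.I)‖)‖
        ≤ Real.log 2 + Bfun t := by
    intro n
    filter_upwards [hIoo] with t ht
    rw [Real.norm_eq_abs]
    exact bound_b (hrhalf n) (hr1 n).le ht
  have hptwise : ∀ᵐ t : ℝ ∂μ, Filter.Tendsto
      (fun n => Real.log (‖1 - ((r n):ℂ) * Complex.exp (t * Complex.I)‖))
      atTop (𝓝 (Real.log (2 * Real.sin (t/2)))) := by
    filter_upwards [hIoo] with t ht
    have hval : ‖1 - ((1:ℝ):ℂ) * Complex.exp (t * Complex.I)‖ = 2 * Real.sin (t/2) := by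
      rw [Complex.ofReal_one, one_mul]
      exact abs_one_sub_exp ht.1.le ht.2.le
    have hpos : (0:ℝ) < 2 * Real.sin (t/2) := by
      have := Real.sin_pos_of_pos_of_lt_pi (x := t/2) (by linarith [ht.1]) (by linarith [ht.2])
      linarith
    have hccont : Continuous (fun x : ℝ =>
        ‖1 - (x:ℂ) * Complex.exp (t * Complex.I)‖) :=
      continuous_norm.comp
        (continuous_const.sub (Complex.continuous_ofReal.mul continuous_const))
    have hca : ContinuousAt (fun x : ℝ =>
        Real.log (‖1 - (x:ℂ) * Complex.exp (t * Complex.I)‖)) 1 :=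
      hccont.continuousAt.log (by rw [hval]; exact hpos.ne')
    have := hca.tendsto.comp hrlim
    simpa [Function.comp_def, abs_one_sub_exp ht.1.le ht.2.le] using this
  have hDCT := MeasureTheory.tendsto_integral_filter_of_dominated_convergence
      (μ := μ) (bound := fun t => Real.log 2 + Bfun t)
      (F := fun n t => Real.log (‖1 - ((r n):ℂ) * Complex.exp (t * Complex.I)‖))
      (f := fun t => Real.log (2 * Real.sin (t/2)))
      (Filter.Eventually.of_forall hmeas)
      (Filter.Eventually.of_forall hbound)
      hbd_int hptwise
  -- combine
  have hAn : ∀ n : ℕ, (∑' ℓ : ℕ, (r n)^(ℓ+1) * Real.sin ((ℓ+1:ℝ)*ω) / ((ℓ:ℝ)+1)^2)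
      = -∫ t in Set.Ioc (0:ℝ) ω,
          Real.log (‖1 - ((r n):ℂ) * Complex.exp (t * Complex.I)‖) :=
    fun n => (per_r ω h0 (hr0 n) (hr1 n)).tsum_eq
  have hRHS : Filter.Tendsto
      (fun n => ∑' ℓ : ℕ, (r n)^(ℓ+1) * Real.sin ((ℓ+1:ℝ)*ω) / ((ℓ:ℝ)+1)^2) atTop
      (𝓝 (-∫ t in Set.Ioc (0:ℝ) ω, Real.log (2 * Real.sin (t/2)))) := by
    have := hDCT.neg
    exact this.congr fun n => (hAn n).symm
  have huniq := tendsto_nhds_unique hLHS hRHS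
  rw [huniq, intervalIntegral.integral_of_le h0]
end

section
/- Let (Ω, 𝓕, P) be a probability space and, for each real λ > 0, let n(λ) : Ω → ℕ be a random variable such that for every ℓ ∈ ℕ the function λ ↦ P(n(λ) = ℓ) is measurable and integrable on (0,∞). Let δI : ℕ → ℝ be a bounded sequence satisfying 2·∫₀^∞ P(n(λ) = 0) dλ = δI(0) + 1 and, for every ℓ ≥ 1, ∫₀^∞ P(n(λ) = ℓ) dλ = δI(ℓ) + 1. Then for every complex z with |z| < 1: the function λ ↦ E[z^{n(λ)}] is integrable on (0,∞), the series ∑_{ℓ=1}^∞ z^ℓ δI(ℓ) converges absolutely, and δI(0)/2 + ∑_{ℓ=1}^∞ z^ℓ δI(ℓ) = ∫₀^∞ E[z^{n(λ)}] dλ − (1+z)/(2(1−z)). -/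
open Real Filter MeasureTheory

/-- With `(Ω, 𝓕, P)` a probability space, `n(λ) : Ω → ℕ` random variables such
that `λ ↦ P(n(λ) = ℓ)` is measurable and integrable on `(0,∞)` for every `ℓ`, and
`δI : ℕ → ℝ` a bounded sequence with `2∫₀^∞ P(n(λ)=0) dλ = δI(0) + 1` and
`∫₀^∞ P(n(λ)=ℓ) dλ = δI(ℓ) + 1` for `ℓ ≥ 1`, then for every `z ∈ ℂ` with `|z| < 1`:
`λ ↦ E[z^{n(λ)}]` is integrable on `(0,∞)`, `∑_{ℓ≥1} z^ℓ δI(ℓ)` converges absolutely, and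
`δI(0)/2 + ∑_{ℓ≥1} z^ℓ δI(ℓ) = ∫₀^∞ E[z^{n(λ)}] dλ − (1+z)/(2(1−z))`. -/
theorem stmt_11 {Ω : Type*} [MeasurableSpace Ω] (P : Measure Ω) [IsProbabilityMeasure P]
    (n : ℝ → Ω → ℕ) (hn : ∀ l : ℝ, Measurable (n l))
    (hmeas : ∀ ℓ : ℕ, Measurable fun l : ℝ => (P {ω | n l ω = ℓ}).toReal)
    (hint : ∀ ℓ : ℕ, IntegrableOn (fun l : ℝ => (P {ω | n l ω = ℓ}).toReal) (Set.Ioi 0))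
    (δI : ℕ → ℝ) (hbdd : ∃ B : ℝ, ∀ ℓ : ℕ, |δI ℓ| ≤ B)
    (h0 : 2 * ∫ l in Set.Ioi (0 : ℝ), (P {ω | n l ω = 0}).toReal = δI 0 + 1)
    (hℓ : ∀ ℓ : ℕ, 1 ≤ ℓ →
      ∫ l in Set.Ioi (0 : ℝ), (P {ω | n l ω = ℓ}).toReal = δI ℓ + 1)
    (z : ℂ) (hz : ‖z‖ < 1) :
    IntegrableOn (fun l : ℝ => ∫ ω, z ^ n l ω ∂P) (Set.Ioi 0)
    ∧ Summable (fun ℓ : ℕ => ‖z ^ (ℓ + 1) * (δI (ℓ + 1) : ℂ)‖)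
    ∧ (δI 0 : ℂ) / 2 + ∑' ℓ : ℕ, z ^ (ℓ + 1) * (δI (ℓ + 1) : ℂ)
        = (∫ l in Set.Ioi (0 : ℝ), ∫ ω, z ^ n l ω ∂P) - (1 + z) / (2 * (1 - z)) := by
  obtain ⟨B, hB⟩ := hbdd
  have hB0 : 0 ≤ B := le_trans (abs_nonneg _) (hB 0)
  have hzn : (0 : ℝ) ≤ ‖z‖ := norm_nonneg z
  set μ : Measure ℝ := (volume : Measure ℝ).restrict (Set.Ioi 0) with hμ
  set f : ℕ → ℝ → ℝ := fun ℓ l => (P {ω | n l ω = ℓ}).toReal with hfdef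
  set g : ℕ → ℝ → ℂ := fun ℓ l => z ^ ℓ * (f ℓ l : ℂ) with hgdef
  have hf0 : ∀ ℓ l, 0 ≤ f ℓ l := fun ℓ l => ENNReal.toReal_nonneg
  have hf1 : ∀ ℓ l, f ℓ l ≤ 1 := fun ℓ l => by
    have h1 : P {ω | n l ω = ℓ} ≤ 1 := prob_le_one
    simpa using ENNReal.toReal_mono ENNReal.one_ne_top h1
  have hgnorm : ∀ ℓ l, ‖g ℓ l‖ = ‖z‖ ^ ℓ * f ℓ l := fun ℓ l => by
    rw [hgdef]
    simp [norm_mul, norm_pow, Real.norm_of_nonneg (hf0 ℓ l)]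
  have hgmeas : ∀ ℓ, Measurable (g ℓ) := fun ℓ =>
    (Complex.measurable_ofReal.comp (hmeas ℓ)).const_mul _
  have hgint : ∀ ℓ, Integrable (g ℓ) μ := fun ℓ => ((hint ℓ).ofReal).const_mul _
  -- pointwise summability in norm
  have hnormsum : ∀ l, Summable fun ℓ => ‖g ℓ l‖ := by
    intro l
    refine Summable.of_nonneg_of_le (fun ℓ => norm_nonneg _) (fun ℓ => ?_)
      (summable_geometric_of_lt_one hzn hz)
    rw [hgnorm]
    calc ‖z‖ ^ ℓ * f ℓ l ≤ ‖z‖ ^ ℓ * 1 := by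
          exact mul_le_mul_of_nonneg_left (hf1 ℓ l) (pow_nonneg hzn ℓ)
      _ = ‖z‖ ^ ℓ := mul_one _
  have hgsum : ∀ l, Summable fun ℓ => g ℓ l := fun l => (hnormsum l).of_norm
  -- the pointwise identity E[z^{n(l)}] = ∑' ℓ, z^ℓ P(n(l)=ℓ)
  have hpt : ∀ l, (∫ ω, z ^ n l ω ∂P) = ∑' ℓ : ℕ, g ℓ l := by
    intro l
    haveI : IsProbabilityMeasure (P.map (n l)) :=
      Measure.isProbabilityMeasure_map (hn l).aemeasurable
    have hint' : Integrable (fun k : ℕ => z ^ k) (P.map (n l)) := by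
      refine (integrable_const (μ := P.map (n l)) (1 : ℝ)).mono' ?_ ?_
      · exact (measurable_of_countable _).aestronglyMeasurable
      · filter_upwards with k
        rw [norm_pow]
        exact pow_le_one₀ hzn hz.le
    have h1 : (∫ ω, z ^ n l ω ∂P) = ∫ k, z ^ k ∂(P.map (n l)) :=
      (integral_map (hn l).aemeasurable hint'.1).symm
    rw [h1, integral_countable' hint']
    refine tsum_congr fun k => ?_
    have hmap : (P.map (n l)) {k} = P {ω | n l ω = k} := by
      rw [Measure.map_apply (hn l) (measurableSet_singleton k)]
      rfl
    rw [measureReal_def, hmap, hgdef]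
    simp [Complex.real_smul, mul_comm]
    exact Or.inl rfl
  -- integral values and bounds
  have hInn : ∀ ℓ, 0 ≤ ∫ l, f ℓ l ∂μ := fun ℓ =>
    integral_nonneg fun l => hf0 ℓ l
  have hI0 : ∫ l, f 0 l ∂μ = (δI 0 + 1) / 2 := by
    have := h0; rw [hμ]; linarith
  have hIℓ' : ∀ ℓ : ℕ, ∫ l, f (ℓ + 1) l ∂μ = δI (ℓ + 1) + 1 := fun ℓ =>
    hℓ (ℓ + 1) (Nat.succ_le_succ (Nat.zero_le ℓ))
  have hIbd : ∀ ℓ, ∫ l, f ℓ l ∂μ ≤ B + 1 := by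
    intro ℓ
    cases ℓ with
    | zero =>
      rw [hI0]
      have := abs_le.mp (hB 0)
      linarith
    | succ k =>
      rw [hIℓ' k]
      have := abs_le.mp (hB (k + 1))
      linarith
  -- the integral of the norm of g ℓ
  have hnormint : ∀ ℓ, ∫ l, ‖g ℓ l‖ ∂μ = ‖z‖ ^ ℓ * ∫ l, f ℓ l ∂μ := by
    intro ℓ
    simp_rw [hgnorm]
    rw [integral_const_mul]
  have hSn : Summable fun ℓ => ∫ l, ‖g ℓ l‖ ∂μ := by
    refine Summable.of_nonneg_of_le
      (fun ℓ => integral_nonneg fun l => norm_nonneg _) (fun ℓ => ?_)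
      ((summable_geometric_of_lt_one hzn hz).mul_right (B + 1))
    rw [hnormint]
    exact mul_le_mul_of_nonneg_left (hIbd ℓ) (pow_nonneg hzn ℓ)
  -- integrability of the tsum
  have hmeastsum : Measurable fun l => ∑' ℓ, g ℓ l := by
    refine measurable_of_tendsto_metrizable
      (f := fun N l => ∑ ℓ ∈ Finset.range N, g ℓ l)
      (fun N => Finset.measurable_sum _ fun ℓ _ => hgmeas ℓ) ?_
    rw [tendsto_pi_nhds]
    exact fun l => (hgsum l).hasSum.tendsto_sum_nat
  have hTint : Integrable (fun l => ∑' ℓ, g ℓ l) μ := by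
    refine ⟨hmeastsum.aestronglyMeasurable, ?_⟩
    rw [hasFiniteIntegral_iff_norm]
    calc ∫⁻ l, ENNReal.ofReal ‖∑' ℓ, g ℓ l‖ ∂μ
        ≤ ∫⁻ l, ∑' ℓ, ENNReal.ofReal ‖g ℓ l‖ ∂μ := by
          refine lintegral_mono fun l => ?_
          rw [← ENNReal.ofReal_tsum_of_nonneg (fun ℓ => norm_nonneg _) (hnormsum l)]
          exact ENNReal.ofReal_le_ofReal (norm_tsum_le_tsum_norm (hnormsum l))
      _ = ∑' ℓ, ∫⁻ l, ENNReal.ofReal ‖g ℓ l‖ ∂μ :=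
          lintegral_tsum fun ℓ => ((hgmeas ℓ).norm.ennreal_ofReal).aemeasurable
      _ = ∑' ℓ, ENNReal.ofReal (∫ l, ‖g ℓ l‖ ∂μ) := by
          refine tsum_congr fun ℓ => ?_
          rw [ofReal_integral_eq_lintegral_ofReal (hgint ℓ).norm
            (Eventually.of_forall fun l => norm_nonneg _)]
      _ = ENNReal.ofReal (∑' ℓ, ∫ l, ‖g ℓ l‖ ∂μ) :=
          (ENNReal.ofReal_tsum_of_nonneg
            (fun ℓ => integral_nonneg fun l => norm_nonneg _) hSn).symm
      _ < ⊤ := ENNReal.ofReal_lt_top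
  -- exchange sum and integral
  have hswap : ∑' ℓ, ∫ l, g ℓ l ∂μ = ∫ l, ∑' ℓ, g ℓ l ∂μ :=
    integral_tsum_of_summable_integral_norm hgint hSn
  have hgI : ∀ ℓ, ∫ l, g ℓ l ∂μ = z ^ ℓ * ((∫ l, f ℓ l ∂μ : ℝ) : ℂ) := by
    intro ℓ
    rw [hgdef]
    simp only
    rw [integral_const_mul]
    congr 1
    exact integral_ofReal (𝕜 := ℂ)
  -- summability facts for the final computation
  have hSsum : Summable fun ℓ : ℕ => ‖z ^ (ℓ + 1) * (δI (ℓ + 1) : ℂ)‖ := by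
    refine Summable.of_nonneg_of_le (fun ℓ => norm_nonneg _) (fun ℓ => ?_)
      ((summable_geometric_of_lt_one hzn hz).mul_right B)
    rw [norm_mul, norm_pow, Complex.norm_real]
    calc ‖z‖ ^ (ℓ + 1) * ‖δI (ℓ + 1)‖
        ≤ ‖z‖ ^ ℓ * ‖δI (ℓ + 1)‖ := by
          refine mul_le_mul_of_nonneg_right ?_ (norm_nonneg _)
          exact pow_le_pow_of_le_one hzn hz.le (Nat.le_succ ℓ)
      _ ≤ ‖z‖ ^ ℓ * B := mul_le_mul_of_nonneg_left (hB (ℓ + 1)) (pow_nonneg hzn ℓ)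
  have hTsumm : Summable fun ℓ : ℕ => z ^ ℓ * ((∫ l, f ℓ l ∂μ : ℝ) : ℂ) := by
    refine Summable.of_norm_bounded
      ((summable_geometric_of_lt_one hzn hz).mul_right (B + 1)) (fun ℓ => ?_)
    rw [norm_mul, norm_pow, Complex.norm_real,
      Real.norm_of_nonneg (hInn ℓ)]
    exact mul_le_mul_of_nonneg_left (hIbd ℓ) (pow_nonneg hzn ℓ)
  have hgeomsum : Summable fun ℓ : ℕ => z ^ (ℓ + 1) := by
    refine Summable.of_norm_bounded
      ((summable_geometric_of_lt_one hzn hz).mul_right ‖z‖) (fun ℓ => ?_)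
    rw [norm_pow, pow_succ]
  have hgeomval : ∑' ℓ : ℕ, z ^ (ℓ + 1) = z * (1 - z)⁻¹ := by
    have h := tsum_geometric_of_norm_lt_one hz
    calc ∑' ℓ : ℕ, z ^ (ℓ + 1) = ∑' ℓ : ℕ, z * z ^ ℓ := by
          refine tsum_congr fun ℓ => ?_; rw [pow_succ, mul_comm]
      _ = z * ∑' ℓ : ℕ, z ^ ℓ := tsum_mul_left
      _ = z * (1 - z)⁻¹ := by rw [h]
  -- conclusion
  have hEq : (fun l : ℝ => ∫ ω, z ^ n l ω ∂P) = fun l => ∑' ℓ, g ℓ l := funext hpt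
  refine ⟨?_, hSsum, ?_⟩
  · rw [IntegrableOn, hEq]; exact hTint
  · have hIntVal : (∫ l in Set.Ioi (0 : ℝ), ∫ ω, z ^ n l ω ∂P)
        = ∑' ℓ : ℕ, z ^ ℓ * ((∫ l, f ℓ l ∂μ : ℝ) : ℂ) := by
      rw [show (∫ l in Set.Ioi (0 : ℝ), ∫ ω, z ^ n l ω ∂P) = ∫ l, ∫ ω, z ^ n l ω ∂P ∂μ from rfl,
        hEq, ← hswap]
      exact tsum_congr fun ℓ => hgI ℓ
    have hsplit : ∑' ℓ : ℕ, z ^ ℓ * ((∫ l, f ℓ l ∂μ : ℝ) : ℂ)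
        = ((δI 0 + 1) / 2 : ℝ)
          + ((∑' ℓ : ℕ, z ^ (ℓ + 1) * (δI (ℓ + 1) : ℂ)) + (∑' ℓ : ℕ, z ^ (ℓ + 1))) := by
      rw [hTsumm.tsum_eq_zero_add]
      congr 1
      · rw [hI0]; simp
      · rw [← hSsum.of_norm.tsum_add hgeomsum]
        refine tsum_congr fun ℓ => ?_
        rw [hIℓ' ℓ]
        push_cast
        ring
    have hz1 : (1 : ℂ) - z ≠ 0 := by
      intro h
      have : z = 1 := by linear_combination -h
      rw [this] at hz; simp at hz
    rw [hIntVal, hsplit, hgeomval]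
    have h2 : (2 : ℂ) ≠ 0 := two_ne_zero
    field_simp
    push_cast
    ring
end

section
/- Let δ : {1, 2, 3, …} → ℝ be a sequence such that δ(ℓ) + 1/(2π²ℓ²) + (3/(2π⁴ℓ⁴))·(log(2πℓ) + γ − 11/6) = o(ℓ⁻⁴) as ℓ → ∞, and let δ(0) ∈ ℝ satisfy the sum rule δ(0) + 2·∑_{ℓ=1}^∞ δ(ℓ) = 0 (the series converging absolutely). Define σ₀(L) = δ(0) + 2·∑_{ℓ=1}^{L−1} δ(ℓ). Then, as L → ∞ along positive integers, L·σ₀(L) = 1/π² + 1/(2π²L) + (1/(π⁴L²))·(log(2πL) + γ + (π² − 9)/6) + o(L⁻²). -/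
open Real Filter Asymptotics Topology

lemma hasSum_telescope (f : ℕ → ℝ) (hmono : ∀ n, f (n+1) ≤ f n)
    (hlim : Tendsto f atTop (𝓝 0)) : HasSum (fun n => f n - f (n+1)) (f 0) := by
  have hanti : Antitone f := antitone_nat_of_succ_le hmono
  have hnn : ∀ n, 0 ≤ f n := fun n =>
    le_of_tendsto hlim (eventually_atTop.2 ⟨n, fun m hm => hanti hm⟩)
  have hps : ∀ n, ∑ i ∈ Finset.range n, (f i - f (i+1)) = f 0 - f n :=
    fun n => Finset.sum_range_sub' f n
  have hsumm : Summable (fun n => f n - f (n+1)) :=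
    summable_of_sum_range_le (c := f 0) (fun n => sub_nonneg.2 (hmono n))
      (fun n => by rw [hps]; linarith [hnn n])
  have h1 : Tendsto (fun n => ∑ i ∈ Finset.range n, (f i - f (i+1))) atTop (𝓝 (f 0)) := by
    simp only [hps]
    simpa using tendsto_const_nhds.sub hlim
  have h2 := hsumm.hasSum.tendsto_sum_nat
  have := tendsto_nhds_unique h2 h1
  exact this ▸ hsumm.hasSum



section tails
variable {x : ℝ}

lemma xn_pos (hx : 1 ≤ x) (n : ℕ) : 0 < x + n :=
  add_pos_of_pos_of_nonneg (lt_of_lt_of_le one_pos hx) (Nat.cast_nonneg n)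

lemma tail2 (hx : 1 ≤ x) :
    HasSum (fun i : ℕ => 1/((x+i)*(x+i+1))) (1/x) := by
  have key := hasSum_telescope (fun n : ℕ => 1/(x+n))
    (fun n => by
      have h1 := xn_pos hx n
      push_cast
      exact one_div_le_one_div_of_le h1 (by linarith))
    (squeeze_zero (fun n => le_of_lt (one_div_pos.2 (xn_pos hx n)))
      (fun n => one_div_le_one_div_of_le (by positivity) (by push_cast; linarith))
      tendsto_one_div_add_atTop_nhds_zero_nat)
  simp only [Nat.cast_zero, add_zero] at key
  have heq : (fun n : ℕ => 1/(x+(n:ℝ)) - 1/(x+((n+1:ℕ):ℝ)))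
      = fun i : ℕ => 1/((x+i)*(x+i+1)) := by
    funext i
    have h1 := (xn_pos hx i).ne'
    have h2 : x + (i:ℝ) + 1 ≠ 0 := by have := xn_pos hx i; positivity
    push_cast
    rw [show x + ((i:ℝ) + 1) = x + (i:ℝ) + 1 by ring, div_sub_div _ _ h1 h2]
    congr 1
    ring
  rwa [heq] at key

lemma tail3 (hx : 1 ≤ x) :
    HasSum (fun i : ℕ => 1/((x+i)*(x+i+1)*(x+i+2))) (1/(2*x*(x+1))) := by
  have key := hasSum_telescope (fun n : ℕ => 1/(2*(x+n)*(x+n+1)))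
    (fun n => by
      have p1 := xn_pos hx n
      push_cast
      refine one_div_le_one_div_of_le (by nlinarith) (by nlinarith))
    (squeeze_zero (fun n => by have := xn_pos hx n; positivity)
      (fun n => one_div_le_one_div_of_le (by positivity)
        (by
          have hn : (0:ℝ) ≤ n := Nat.cast_nonneg n
          push_cast
          nlinarith [mul_nonneg hn hn, mul_nonneg hn (sub_nonneg.2 hx)]))
      tendsto_one_div_add_atTop_nhds_zero_nat)
  simp only [Nat.cast_zero, add_zero] at key
  have heq : (fun n : ℕ => 1/(2*(x+(n:ℝ))*(x+(n:ℝ)+1)) - 1/(2*(x+((n+1:ℕ):ℝ))*(x+((n+1:ℕ):ℝ)+1)))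
      = fun i : ℕ => 1/((x+i)*(x+i+1)*(x+i+2)) := by
    funext i
    have p1 := xn_pos hx i
    have e1 : x + (i:ℝ) + 1 > 0 := by linarith
    have e2 : x + (i:ℝ) + 2 > 0 := by linarith
    push_cast
    field_simp
    ring
  rwa [heq] at key

lemma tail4 (hx : 1 ≤ x) :
    HasSum (fun i : ℕ => 1/((x+i)*(x+i+1)*(x+i+2)*(x+i+3))) (1/(3*x*(x+1)*(x+2))) := by
  have key := hasSum_telescope (fun n : ℕ => 1/(3*(x+n)*(x+n+1)*(x+n+2)))
    (fun n => by
      have p1 := xn_pos hx n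
      have p2 : (0:ℝ) < x+↑n+1 := by linarith
      have p3 : (0:ℝ) < x+↑n+2 := by linarith
      push_cast
      refine one_div_le_one_div_of_le (by nlinarith [mul_pos (mul_pos p1 p2) p3])
        (by nlinarith [mul_pos p2 p3, mul_pos p1 p2]))
    (squeeze_zero (fun n => by have := xn_pos hx n; positivity)
      (fun n => one_div_le_one_div_of_le (by positivity)
        (by
          have hn : (0:ℝ) ≤ n := Nat.cast_nonneg n
          push_cast
          nlinarith [sq_nonneg ((n:ℝ)+x), sq_nonneg ((n:ℝ)), mul_nonneg hn hn,
            mul_nonneg (mul_nonneg hn hn) hn, mul_nonneg hn (sub_nonneg.2 hx),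
            mul_nonneg (mul_nonneg hn hn) (sub_nonneg.2 hx)]))
      tendsto_one_div_add_atTop_nhds_zero_nat)
  simp only [Nat.cast_zero, add_zero] at key
  have heq : (fun n : ℕ => 1/(3*(x+(n:ℝ))*(x+(n:ℝ)+1)*(x+(n:ℝ)+2))
        - 1/(3*(x+((n+1:ℕ):ℝ))*(x+((n+1:ℕ):ℝ)+1)*(x+((n+1:ℕ):ℝ)+2)))
      = fun i : ℕ => 1/((x+i)*(x+i+1)*(x+i+2)*(x+i+3)) := by
    funext i
    have p1 := xn_pos hx i
    have e1 : x + (i:ℝ) + 1 > 0 := by linarith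
    have e2 : x + (i:ℝ) + 2 > 0 := by linarith
    have e3 : x + (i:ℝ) + 3 > 0 := by linarith
    push_cast
    field_simp
    ring
  rwa [heq] at key

end tails

lemma S2_split {x : ℝ} (hx : 1 ≤ x) :
    ∃ e : ℝ, 0 ≤ e ∧ e ≤ 2/x^4 ∧
      HasSum (fun i : ℕ => 1/(x+i)^2)
        (1/x + 1/(2*x*(x+1)) + 2*(1/(3*x*(x+1)*(x+2))) + e) := by
  have hx0 : 0 < x := lt_of_lt_of_le one_pos hx
  set ρ : ℕ → ℝ := fun i => 6/((x+i)^2*(x+i+1)*(x+i+2)*(x+i+3)) with hρdef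
  have hρ_nonneg : ∀ i, 0 ≤ ρ i := fun i => by
    have := xn_pos hx i; positivity
  have hρ_le : ∀ i, ρ i ≤ (6/x) * (1/((x+i)*(x+i+1)*(x+i+2)*(x+i+3))) := by
    intro i
    have p1 := xn_pos hx i
    have e1 : x + (i:ℝ) + 1 > 0 := by linarith
    have e2 : x + (i:ℝ) + 2 > 0 := by linarith
    have e3 : x + (i:ℝ) + 3 > 0 := by linarith
    rw [div_mul_div_comm, div_le_div_iff₀ (by positivity) (by positivity)]
    have hxi : x ≤ x + i := by have : (0:ℝ) ≤ i := Nat.cast_nonneg i; linarith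
    nlinarith [mul_pos (mul_pos (mul_pos p1 e1) e2) e3,
      mul_pos (mul_pos (mul_pos (mul_pos p1 p1) e1) e2) e3,
      mul_le_mul_of_nonneg_right hxi
        (le_of_lt (mul_pos (mul_pos (mul_pos p1 e1) e2) e3))]
  have h4 := tail4 hx
  have hρ_summ : Summable ρ :=
    Summable.of_nonneg_of_le hρ_nonneg hρ_le (h4.summable.mul_left (6/x))
  refine ⟨∑' i, ρ i, tsum_nonneg hρ_nonneg, ?_, ?_⟩
  · have h1 : ∑' i, ρ i ≤ ∑' i : ℕ, (6/x) * (1/((x+i)*(x+i+1)*(x+i+2)*(x+i+3))) :=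
      Summable.tsum_le_tsum hρ_le hρ_summ (h4.summable.mul_left (6/x))
    have h2 : ∑' i : ℕ, (6/x) * (1/((x+i)*(x+i+1)*(x+i+2)*(x+i+3)))
        = (6/x) * (1/(3*x*(x+1)*(x+2))) := by
      rw [tsum_mul_left, h4.tsum_eq]
    rw [h2] at h1
    refine h1.trans ?_
    rw [div_mul_div_comm, div_le_div_iff₀ (by positivity) (by positivity)]
    nlinarith [hx0, sq_nonneg x, pow_pos hx0 4]
  · have key := (((tail2 hx).add (tail3 hx)).add ((tail4 hx).mul_left 2)).add hρ_summ.hasSum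
    have heq : (fun i : ℕ => 1/((x+i)*(x+i+1)) + 1/((x+i)*(x+i+1)*(x+i+2))
          + 2 * (1/((x+i)*(x+i+1)*(x+i+2)*(x+i+3))) + ρ i)
        = fun i : ℕ => 1/(x+i)^2 := by
      funext i
      have p1 := xn_pos hx i
      have e1 : x + (i:ℝ) + 1 > 0 := by linarith
      have e2 : x + (i:ℝ) + 2 > 0 := by linarith
      have e3 : x + (i:ℝ) + 3 > 0 := by linarith
      simp only [hρdef]
      field_simp
      ring
    rwa [heq] at key

noncomputable def gfun (t : ℝ) : ℝ :=
  (Real.log (2*π*t) + Real.eulerMascheroniConstant - 11/6)/t^4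

noncomputable def Hfun (t : ℝ) : ℝ :=
  -((Real.log (2*π*t) + Real.eulerMascheroniConstant - 3/2)/(3*t^3))

lemma log_2pi_gt : (1.69:ℝ) < Real.log (2*π) := by
  have h1 : Real.log (2*Real.exp 1) = Real.log 2 + 1 := by
    rw [Real.log_mul two_ne_zero (Real.exp_ne_zero 1), Real.log_exp]
  have h2 : Real.log (2*Real.exp 1) ≤ Real.log (2*π) := by
    apply Real.log_le_log (by positivity)
    nlinarith [Real.exp_one_lt_d9, pi_gt_three]
  nlinarith [Real.log_two_gt_d9]

lemma log_2pi_t_ge {t : ℝ} (ht : 1 ≤ t) : (1.69:ℝ) < Real.log (2*π*t) := by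
  have h2 : Real.log (2*π) ≤ Real.log (2*π*t) := by
    apply Real.log_le_log (by positivity)
    nlinarith [pi_pos]
  linarith [log_2pi_gt]

lemma num_pos {t : ℝ} (ht : 1 ≤ t) :
    1/4 < Real.log (2*π*t) + Real.eulerMascheroniConstant - 11/6 := by
  have := Real.one_half_lt_eulerMascheroniConstant
  linarith [log_2pi_t_ge ht]

lemma gfun_nonneg {t : ℝ} (ht : 1 ≤ t) : 0 ≤ gfun t := by
  have h : 0 < Real.log (2*π*t) + Real.eulerMascheroniConstant - 11/6 := by
    linarith [num_pos ht]
  have : (0:ℝ) < t := by linarith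
  exact le_of_lt (div_pos h (by positivity))

lemma hasDeriv_log2pit {t : ℝ} (ht : 0 < t) :
    HasDerivAt (fun s : ℝ => Real.log (2*π*s)) (1/t) t := by
  have h2πt : (2*π*t) ≠ 0 := by positivity
  have := (Real.hasDerivAt_log h2πt).comp t ((hasDerivAt_id t).const_mul (2*π))
  refine this.congr_deriv ?_
  field_simp

lemma Hfun_deriv {t : ℝ} (ht : 0 < t) : HasDerivAt Hfun (gfun t) t := by
  have hnum : HasDerivAt
      (fun s : ℝ => Real.log (2*π*s) + Real.eulerMascheroniConstant - 3/2) (1/t) t :=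
    ((hasDeriv_log2pit ht).add_const _).sub_const _
  have hden : HasDerivAt (fun s : ℝ => 3*s^3) (3*(3*t^2)) t := by
    simpa using (hasDerivAt_pow 3 t).const_mul (3:ℝ)
  have hden_ne : 3*t^3 ≠ 0 := by positivity
  have := (hnum.div hden hden_ne).neg
  refine this.congr_deriv ?_
  unfold gfun
  field_simp
  ring

lemma gfun_deriv {t : ℝ} (ht : 0 < t) :
    HasDerivAt gfun
      ((1 - 4*(Real.log (2*π*t) + Real.eulerMascheroniConstant - 11/6))/t^5) t := by
  have hnum : HasDerivAt
      (fun s : ℝ => Real.log (2*π*s) + Real.eulerMascheroniConstant - 11/6) (1/t) t :=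
    ((hasDeriv_log2pit ht).add_const _).sub_const _
  have hden : HasDerivAt (fun s : ℝ => s^4) (4*t^3) t := by
    simpa using hasDerivAt_pow 4 t
  have hden_ne : t^4 ≠ 0 := by positivity
  have := hnum.div hden hden_ne
  refine this.congr_deriv ?_
  field_simp

lemma gfun_antitoneOn : AntitoneOn gfun (Set.Ici 1) := by
  apply antitoneOn_of_deriv_nonpos (convex_Ici 1)
  · exact fun t ht => (gfun_deriv (lt_of_lt_of_le one_pos ht)).continuousAt.continuousWithinAt
  · intro t ht
    rw [interior_Ici] at ht
    exact (gfun_deriv (lt_trans one_pos ht)).differentiableAt.differentiableWithinAt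
  · intro t ht
    rw [interior_Ici] at ht
    have ht1 : (1:ℝ) ≤ t := le_of_lt ht
    rw [(gfun_deriv (lt_trans one_pos ht)).deriv]
    apply div_nonpos_of_nonpos_of_nonneg
    · linarith [num_pos ht1]
    · positivity

lemma Hfun_nonpos {t : ℝ} (ht : 1 ≤ t) : Hfun t ≤ 0 := by
  have ht0 : (0:ℝ) < t := by linarith
  have h : 0 < Real.log (2*π*t) + Real.eulerMascheroniConstant - 3/2 := by
    have := Real.one_half_lt_eulerMascheroniConstant
    linarith [log_2pi_t_ge ht]
  unfold Hfun
  rw [neg_nonpos]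
  positivity

lemma Hfun_bound {t : ℝ} (ht : 1 ≤ t) : -Hfun t ≤ 3/t := by
  have ht0 : (0:ℝ) < t := by linarith
  have hlog : Real.log (2*π*t) ≤ 2*π*t := by
    have := Real.log_le_sub_one_of_pos (show (0:ℝ) < 2*π*t by positivity)
    linarith
  have hγ := Real.eulerMascheroniConstant_lt_two_thirds
  unfold Hfun
  rw [neg_neg, div_le_div_iff₀ (by positivity) ht0]
  have ht2 : t ≤ t^3 := by
    nlinarith [mul_nonneg (mul_nonneg (sub_nonneg.2 ht) (le_of_lt ht0)) (by linarith : (0:ℝ) ≤ t+1)]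
  nlinarith [pi_le_four, sq_nonneg t, mul_le_mul_of_nonneg_left ht2 (le_of_lt ht0)]

lemma Hfun_lim {x : ℝ} (hx : 1 ≤ x) :
    Tendsto (fun n : ℕ => -Hfun (x + n)) atTop (𝓝 0) := by
  apply squeeze_zero (fun n => by
      rw [neg_nonneg]; exact Hfun_nonpos (by have : (0:ℝ) ≤ n := Nat.cast_nonneg n; linarith))
    (g := fun n : ℕ => 3*(1/((n:ℝ)+1)))
  · intro n
    have hn : (0:ℝ) ≤ n := Nat.cast_nonneg n
    have h1 : (1:ℝ) ≤ x + n := by linarith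
    refine (Hfun_bound h1).trans ?_
    rw [mul_one_div, div_le_div_iff₀ (by linarith) (by linarith)]
    nlinarith
  · simpa using tendsto_one_div_add_atTop_nhds_zero_nat.const_mul (3:ℝ)

lemma Hfun_mvt {y : ℝ} (hy : 1 ≤ y) :
    gfun (y+1) ≤ Hfun (y+1) - Hfun y ∧ Hfun (y+1) - Hfun y ≤ gfun y := by
  have hcont : ContinuousOn Hfun (Set.Icc y (y+1)) := fun t ht =>
    (Hfun_deriv (by have := ht.1; linarith : (0:ℝ) < t)).continuousAt.continuousWithinAt
  obtain ⟨ξ, hξ, hslope⟩ := exists_hasDerivAt_eq_slope Hfun gfun (by linarith : y < y+1)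
    hcont (fun t ht => Hfun_deriv (by have := ht.1; linarith : (0:ℝ) < t))
  have hξ1 : (1:ℝ) ≤ ξ := by have := hξ.1; linarith
  have hsl : gfun ξ = Hfun (y+1) - Hfun y := by
    rw [hslope]; field_simp; ring
  constructor
  · rw [← hsl]
    exact gfun_antitoneOn (Set.mem_Ici.2 hξ1) (Set.mem_Ici.2 (by linarith : (1:ℝ) ≤ y+1))
      (le_of_lt hξ.2)
  · rw [← hsl]
    exact gfun_antitoneOn (Set.mem_Ici.2 hy) (Set.mem_Ici.2 hξ1) (le_of_lt hξ.1)

lemma SQ_bounds {x : ℝ} (hx : 1 ≤ x) :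
    Summable (fun i : ℕ => gfun (x+i)) ∧
    -Hfun x ≤ (∑' i : ℕ, gfun (x+i)) ∧ (∑' i : ℕ, gfun (x+i)) ≤ gfun x + -Hfun x := by
  have hx0 : (0:ℝ) < x := by linarith
  have hxn1 : ∀ n : ℕ, (1:ℝ) ≤ x + n := fun n => by
    have : (0:ℝ) ≤ n := Nat.cast_nonneg n; linarith
  have hmvt : ∀ n : ℕ, gfun (x+n+1) ≤ -Hfun (x+n) - -Hfun (x+n+1) ∧
      -Hfun (x+n) - -Hfun (x+n+1) ≤ gfun (x+n) := fun n => by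
    have h := Hfun_mvt (hxn1 n)
    constructor <;> [linarith [h.1]; linarith [h.2]]
  have key := hasSum_telescope (fun n : ℕ => -Hfun (x+n))
    (fun n => by
      have h := (hmvt n).1
      have h2 := gfun_nonneg (by linarith [hxn1 n] : (1:ℝ) ≤ x+n+1)
      push_cast
      rw [show x + ((n:ℝ)+1) = x + (n:ℝ) + 1 from by ring]
      linarith)
    (Hfun_lim hx)
  simp only [Nat.cast_zero, add_zero] at key
  have hD_le : ∀ n : ℕ, (fun n : ℕ => -Hfun (x+n) - -Hfun (x+(n+1:ℕ))) n ≤ gfun (x+n) := by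
    intro n
    have := (hmvt n).2
    push_cast
    rw [show x + ((n:ℝ)+1) = x + (n:ℝ) + 1 from by ring]
    linarith
  have hg_le_D : ∀ n : ℕ, gfun (x+(n+1:ℕ)) ≤ -Hfun (x+n) - -Hfun (x+(n+1:ℕ)) := by
    intro n
    have := (hmvt n).1
    push_cast
    rw [show x + ((n:ℝ)+1) = x + (n:ℝ) + 1 from by ring]
    linarith
  have hsum_shift : Summable (fun n : ℕ => gfun (x+(n+1:ℕ))) := by
    apply Summable.of_nonneg_of_le (fun n => gfun_nonneg (hxn1 (n+1))) hg_le_D key.summable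
  have hsumm : Summable (fun i : ℕ => gfun (x+i)) :=
    (summable_nat_add_iff 1).mp hsum_shift
  refine ⟨hsumm, ?_, ?_⟩
  · have h := Summable.tsum_le_tsum hD_le key.summable hsumm
    rwa [key.tsum_eq] at h
  · have hsplit : (∑' i : ℕ, gfun (x+i)) = gfun (x+(0:ℕ)) + ∑' i : ℕ, gfun (x+(i+1:ℕ)) :=
      Summable.tsum_eq_zero_add hsumm
    have h2 : (∑' i : ℕ, gfun (x+(i+1:ℕ))) ≤ -Hfun x := by
      have := Summable.tsum_le_tsum hg_le_D hsum_shift key.summable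
      rwa [key.tsum_eq] at this
    simp only [Nat.cast_zero, add_zero] at hsplit
    linarith [hsplit, h2]

noncomputable def Efun (δ : ℕ → ℝ) (ℓ : ℕ) : ℝ :=
  δ ℓ + 1 / (2 * π ^ 2 * (ℓ : ℝ) ^ 2)
    + (3 / (2 * π ^ 4 * (ℓ : ℝ) ^ 4))
      * (Real.log (2 * π * ℓ) + Real.eulerMascheroniConstant - 11 / 6)

lemma Efun_apply (δ : ℕ → ℝ) (ℓ : ℕ) : Efun δ ℓ
    = δ ℓ + 1 / (2 * π ^ 2 * (ℓ : ℝ) ^ 2)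
      + (3 / (2 * π ^ 4 * (ℓ : ℝ) ^ 4))
        * (Real.log (2 * π * ℓ) + Real.eulerMascheroniConstant - 11 / 6) := rfl

lemma Pconv_id {p y : ℝ} (hp : p ≠ 0) (hy : y ≠ 0) :
    1/(2*p^2*y^2) = (1/(2*p^2))*(1/y^2) := by
  field_simp

lemma Qconv_id {p y : ℝ} (A : ℝ) (hp : p ≠ 0) (hy : y ≠ 0) :
    (3/(2*p^4*y^4))*A = (3/(2*p^4))*(A/y^4) := by
  field_simp

lemma main_id {p x : ℝ} (A : ℝ) (hp : p ≠ 0) (hx : x ≠ 0) :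
    (1/(p^4*x^2))*(A + (p^2-9)/6) = 1/(6*p^2*x^2) + (1/(p^4*x^2))*(A - 3/2) := by
  field_simp
  ring

lemma Hid {p x : ℝ} (A : ℝ) (hp : p ≠ 0) (hx : x ≠ 0) :
    (3*x/p^4) * (A/(3*x^3)) = (1/(p^4*x^2))*A := by
  field_simp

lemma gid {p x : ℝ} (A : ℝ) (hp : p ≠ 0) (hx : x ≠ 0) :
    (3*x/p^4) * (A/x^4) = ((3/p^4)*(A/x)) * (1/x^2) := by
  field_simp

lemma B3_id {x cc : ℝ} (hx : 0 < x) :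
    2*x*(cc * (24*(1/(3*x*(x+1)*(x+2))))) = (16*cc) * (1/((x+1)*(x+2))) := by
  have h1 : x+1 > 0 := by linarith
  have h2 : x+2 > 0 := by linarith
  field_simp
  ring

lemma B1_id {p x e G : ℝ} (hp : p ≠ 0) (hx : x ≠ 0) :
    (2*x)*((1/(2*p^2))*(G + e)) - (1/p^2 + 1/(2*p^2*x) + 1/(6*p^2*x^2))
      = (1/p^2)*(x*G - (1 + 1/(2*x) + 1/(6*x^2))) + (x/p^2)*e := by
  field_simp
  ring

lemma G2_id {x : ℝ} (hx : 1 ≤ x) :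
    x * (1/x + 1/(2*x*(x+1)) + 2*(1/(3*x*(x+1)*(x+2))))
      - (1 + 1/(2*x) + 1/(6*x^2)) = -((9*x+2)/(6*x^2*(x+1)*(x+2))) := by
  have hx0 : (0:ℝ) < x := by linarith
  have h1 : x + 1 > 0 := by linarith
  have h2 : x + 2 > 0 := by linarith
  field_simp
  ring

lemma prod4_le {y : ℝ} (hy : 1 ≤ y) :
    1*(y*(y+1)*(y+2)*(y+3)) ≤ 24*y^4 := by
  have h0 : (0:ℝ) < y := by linarith
  have hstep : y*(y+1)*(y+2)*(y+3) ≤ y*(2*y)*(3*y)*(4*y) := by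
    gcongr <;> first | positivity | linarith
  calc 1*(y*(y+1)*(y+2)*(y+3)) = y*(y+1)*(y+2)*(y+3) := one_mul _
    _ ≤ y*(2*y)*(3*y)*(4*y) := hstep
    _ = 24*y^4 := by ring

set_option maxHeartbeats 1000000 in
/-- Let `δ` be a real sequence (on positive integers) with
`δ(ℓ) + 1/(2π²ℓ²) + (3/(2π⁴ℓ⁴))(log(2πℓ) + γ − 11/6) = o(ℓ⁻⁴)` and let `δ(0)` satisfy the
sum rule `δ(0) + 2∑_{ℓ≥1} δ(ℓ) = 0` (absolutely convergent series). With
`σ₀(L) = δ(0) + 2∑_{ℓ=1}^{L−1} δ(ℓ)`, one has, as `L → ∞` along positive integers,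
`L·σ₀(L) = 1/π² + 1/(2π²L) + (1/(π⁴L²))(log(2πL) + γ + (π² − 9)/6) + o(L⁻²)`. -/
theorem stmt_15 (δ : ℕ → ℝ)
    (hasymp : (fun ℓ : ℕ =>
        δ ℓ + 1 / (2 * π ^ 2 * (ℓ : ℝ) ^ 2)
          + (3 / (2 * π ^ 4 * (ℓ : ℝ) ^ 4))
            * (Real.log (2 * π * ℓ) + Real.eulerMascheroniConstant - 11 / 6))
      =o[atTop] fun ℓ : ℕ => ((ℓ : ℝ) ^ 4)⁻¹)
    (hsummable : Summable fun ℓ : ℕ => δ (ℓ + 1))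
    (hrule : δ 0 + 2 * ∑' ℓ : ℕ, δ (ℓ + 1) = 0) :
    (fun L : ℕ =>
        (L : ℝ) * (δ 0 + 2 * ∑ ℓ ∈ Finset.Ico 1 L, δ ℓ)
          - (1 / π ^ 2 + 1 / (2 * π ^ 2 * (L : ℝ))
            + (1 / (π ^ 4 * (L : ℝ) ^ 2))
              * (Real.log (2 * π * L) + Real.eulerMascheroniConstant + (π ^ 2 - 9) / 6)))
      =o[atTop] fun L : ℕ => ((L : ℝ) ^ 2)⁻¹ := by
  have hπ : (0:ℝ) < π := pi_pos
  have hπ2 : (9:ℝ) < π^2 := by nlinarith [pi_gt_three]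
  -- tail summability of δ
  have hδtail : ∀ L : ℕ, Summable (fun i : ℕ => δ (i + L)) := by
    intro L
    rcases Nat.eq_zero_or_pos L with h0 | hpos
    · subst h0
      simp only [add_zero]
      exact (summable_nat_add_iff 1).mp (by simpa using hsummable)
    · have := (summable_nat_add_iff (k := L - 1)
        (f := fun i : ℕ => δ (i + 1))).mpr hsummable
      refine this.congr fun i => ?_
      congr 1
      omega
  -- Step A: tail identity
  have hδs : ∀ L : ℕ, 1 ≤ L →
      δ 0 + 2 * ∑ ℓ ∈ Finset.Ico 1 L, δ ℓ = -2 * ∑' i : ℕ, δ (i + L) := by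
    intro L hL
    have h := Summable.sum_add_tsum_nat_add (f := fun i : ℕ => δ (i + 1)) (L - 1) hsummable
    have h2 : (fun i : ℕ => δ (i + (L-1) + 1)) = fun i : ℕ => δ (i + L) := by
      funext i; congr 1; omega
    rw [h2] at h
    have h3 : ∑ ℓ ∈ Finset.Ico 1 L, δ ℓ = ∑ i ∈ Finset.range (L-1), δ (i+1) := by
      rw [Finset.sum_Ico_eq_sum_range]
      exact Finset.sum_congr (by congr 1) fun i _ => by congr 1; omega
    rw [h3]
    linarith [h, hrule]
  rw [isLittleO_iff] at hasymp ⊢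
  intro c hc
  obtain ⟨N, hN⟩ := eventually_atTop.1 (hasymp (show (0:ℝ) < c/100 by linarith))
  -- eventual smallness of the explicit error terms
  have hreal : Tendsto (fun y : ℝ =>
      4/y + (3/π^4) * ((Real.log (2*π*y) + Real.eulerMascheroniConstant - 11/6)/y))
      atTop (𝓝 0) := by
    have t1 : Tendsto (fun y : ℝ => (4:ℝ)/y) atTop (𝓝 0) :=
      tendsto_const_nhds.div_atTop tendsto_id
    have t2 : Tendsto (fun y : ℝ =>
        (Real.log (2*π) + (Real.eulerMascheroniConstant - 11/6))/y) atTop (𝓝 0) :=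
      tendsto_const_nhds.div_atTop tendsto_id
    have t3 : Tendsto (fun y : ℝ => Real.log y / y) atTop (𝓝 0) :=
      Real.isLittleO_log_id_atTop.tendsto_div_nhds_zero
    have tall := t1.add (((t3.add t2)).const_mul (3/π^4))
    rw [show (0:ℝ) + (3/π^4) * (0 + 0) = 0 by ring] at tall
    refine tall.congr' ?_
    filter_upwards [eventually_gt_atTop (0:ℝ)] with y hy
    rw [Real.log_mul (by positivity) hy.ne']
    ring
  have hev : ∀ᶠ L : ℕ in atTop,
      4/(L:ℝ) + (3/π^4) * ((Real.log (2*π*(L:ℝ)) + Real.eulerMascheroniConstant - 11/6)/(L:ℝ))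
        < c/2 :=
    (hreal.comp tendsto_natCast_atTop_atTop).eventually_lt_const (by linarith)
  filter_upwards [eventually_ge_atTop (max N 1), hev] with L hLge hLsmall
  have hLN : N ≤ L := le_trans (le_max_left _ _) hLge
  have hL1 : 1 ≤ L := le_trans (le_max_right _ _) hLge
  have hx : (1:ℝ) ≤ (L:ℝ) := by exact_mod_cast hL1
  have hx0 : (0:ℝ) < (L:ℝ) := by linarith
  obtain ⟨e₁, he₁0, he₁le, hS2⟩ := S2_split hx
  obtain ⟨hgsumm, hSQlo, hSQhi⟩ := SQ_bounds hx
  -- conversions of shifted P and Q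
  have hPconv : (fun i : ℕ => 1 / (2*π^2*((i+L:ℕ):ℝ)^2))
      = fun i : ℕ => (1/(2*π^2))*(1/((L:ℝ)+↑i)^2) := by
    funext i
    have hxi := xn_pos hx i
    have hcast : ((i+L:ℕ):ℝ) = (L:ℝ) + ↑i := by push_cast; ring
    rw [hcast, Pconv_id hπ.ne' hxi.ne']
  have hQconv : (fun i : ℕ => (3/(2*π^4*((i+L:ℕ):ℝ)^4))
        * (Real.log (2*π*((i+L:ℕ):ℝ)) + Real.eulerMascheroniConstant - 11/6))
      = fun i : ℕ => (3/(2*π^4))*gfun ((L:ℝ)+↑i) := by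
    funext i
    have hxi := xn_pos hx i
    have hcast : ((i+L:ℕ):ℝ) = (L:ℝ) + ↑i := by push_cast; ring
    rw [hcast, Qconv_id _ hπ.ne' hxi.ne']
    rfl
  have hSP : HasSum (fun i : ℕ => 1 / (2*π^2*((i+L:ℕ):ℝ)^2))
      ((1/(2*π^2)) * (1/(L:ℝ) + 1/(2*(L:ℝ)*((L:ℝ)+1)) + 2*(1/(3*(L:ℝ)*((L:ℝ)+1)*((L:ℝ)+2))) + e₁)) := by
    rw [hPconv]; exact hS2.mul_left _
  have hQsumm : Summable (fun i : ℕ => (3/(2*π^4*((i+L:ℕ):ℝ)^4))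
      * (Real.log (2*π*((i+L:ℕ):ℝ)) + Real.eulerMascheroniConstant - 11/6)) := by
    rw [hQconv]; exact hgsumm.mul_left _
  have hQtsum : (∑' i : ℕ, (3/(2*π^4*((i+L:ℕ):ℝ)^4))
        * (Real.log (2*π*((i+L:ℕ):ℝ)) + Real.eulerMascheroniConstant - 11/6))
      = (3/(2*π^4)) * ∑' i : ℕ, gfun ((L:ℝ)+↑i) := by
    rw [hQconv, tsum_mul_left]
  -- E tail
  have hEshift : Summable (fun i : ℕ => Efun δ (i+L)) := by
    refine ((hδtail L).add (hSP.summable.add hQsumm)).congr fun i => ?_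
    rw [Efun_apply]
    ring
  have htsum_split : (∑' i : ℕ, δ (i + L)) = (∑' i : ℕ, Efun δ (i+L))
      - ((1/(2*π^2)) * (1/(L:ℝ) + 1/(2*(L:ℝ)*((L:ℝ)+1)) + 2*(1/(3*(L:ℝ)*((L:ℝ)+1)*((L:ℝ)+2))) + e₁)
        + (3/(2*π^4)) * ∑' i : ℕ, gfun ((L:ℝ)+↑i)) := by
    have step1 : (∑' i : ℕ, δ (i + L)) = ∑' i : ℕ, (Efun δ (i+L)
        - (1 / (2*π^2*((i+L:ℕ):ℝ)^2)
          + (3/(2*π^4*((i+L:ℕ):ℝ)^4))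
            * (Real.log (2*π*((i+L:ℕ):ℝ)) + Real.eulerMascheroniConstant - 11/6))) := by
      refine tsum_congr fun i => ?_
      rw [Efun_apply]
      ring
    rw [step1, Summable.tsum_sub hEshift (hSP.summable.add hQsumm),
      Summable.tsum_add hSP.summable hQsumm, hSP.tsum_eq, hQtsum]
  -- bound on E tail
  have hEbound : ∀ i : ℕ, |Efun δ (i+L)|
      ≤ (c/100) * (24*(1/(((L:ℝ)+↑i)*((L:ℝ)+↑i+1)*((L:ℝ)+↑i+2)*((L:ℝ)+↑i+3)))) := by
    intro i
    have hxi := xn_pos hx i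
    have hy1 : (1:ℝ) ≤ (L:ℝ) + ↑i := by
      have : (0:ℝ) ≤ ↑i := Nat.cast_nonneg i; linarith
    have h : ‖Efun δ (i+L)‖ ≤ c/100 * ‖((((i+L:ℕ)):ℝ)^4)⁻¹‖ :=
      hN (i+L) (le_trans hLN (Nat.le_add_left L i))
    rw [Real.norm_eq_abs, Real.norm_eq_abs] at h
    have hcast : ((i+L:ℕ):ℝ) = (L:ℝ) + ↑i := by push_cast; ring
    rw [hcast, abs_of_pos (show (0:ℝ) < (((L:ℝ)+↑i)^4)⁻¹ by positivity)] at h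
    refine h.trans ?_
    have hle : ((((L:ℝ)+↑i))^4)⁻¹
        ≤ 24*(1/(((L:ℝ)+↑i)*((L:ℝ)+↑i+1)*((L:ℝ)+↑i+2)*((L:ℝ)+↑i+3))) := by
      have e1 : (L:ℝ) + ↑i + 1 > 0 := by linarith
      have e2 : (L:ℝ) + ↑i + 2 > 0 := by linarith
      have e3 : (L:ℝ) + ↑i + 3 > 0 := by linarith
      rw [inv_eq_one_div, mul_one_div, div_le_div_iff₀ (by positivity) (by positivity)]
      exact prod4_le hy1
    exact mul_le_mul_of_nonneg_left hle (by linarith)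
  have hEabs_summ : Summable (fun i : ℕ => |Efun δ (i+L)|) :=
    Summable.of_nonneg_of_le (fun i => abs_nonneg _) hEbound
      (((tail4 hx).mul_left 24).mul_left (c/100)).summable
  have hSEbound : |∑' i : ℕ, Efun δ (i+L)|
      ≤ (c/100) * (24*(1/(3*(L:ℝ)*((L:ℝ)+1)*((L:ℝ)+2)))) := by
    have h1 : |∑' i : ℕ, Efun δ (i+L)| ≤ ∑' i : ℕ, |Efun δ (i+L)| := by
      have := norm_tsum_le_tsum_norm (f := fun i : ℕ => Efun δ (i+L))
        (by simpa [Real.norm_eq_abs] using hEabs_summ)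
      simpa [Real.norm_eq_abs] using this
    refine h1.trans ?_
    have h2 := Summable.tsum_le_tsum hEbound hEabs_summ
      (((tail4 hx).mul_left 24).mul_left (c/100)).summable
    rwa [(((tail4 hx).mul_left 24).mul_left (c/100)).tsum_eq] at h2
  -- assemble
  set x : ℝ := (L:ℝ) with hxdef
  set SE : ℝ := ∑' i : ℕ, Efun δ (i+L) with hSEdef
  set SQt : ℝ := ∑' i : ℕ, gfun (x+↑i) with hSQdef
  set B1 : ℝ := (2*x) * ((1/(2*π^2)) * (1/x + 1/(2*x*(x+1)) + 2*(1/(3*x*(x+1)*(x+2))) + e₁))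
    - (1/π^2 + 1/(2*π^2*x) + 1/(6*π^2*x^2)) with hB1def
  set B2 : ℝ := (3*x/π^4) * SQt
    - (1/(π^4*x^2)) * (Real.log (2*π*x) + Real.eulerMascheroniConstant - 3/2) with hB2def
  set w : ℝ := (3/π^4) * ((Real.log (2*π*x) + Real.eulerMascheroniConstant - 11/6)/x)
    with hwdef
  have hLHS : (x * (δ 0 + 2 * ∑ ℓ ∈ Finset.Ico 1 L, δ ℓ)
      - (1 / π ^ 2 + 1 / (2 * π ^ 2 * x)
        + (1 / (π ^ 4 * x ^ 2))
          * (Real.log (2 * π * x) + Real.eulerMascheroniConstant + (π ^ 2 - 9) / 6)))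
      = B1 + B2 + (-2*x*SE) := by
    rw [hδs L hL1, htsum_split, hB1def, hB2def, hSEdef,
      main_id _ hπ.ne' hx0.ne']
    ring
  -- B1 bounds
  have hDpos : (0:ℝ) < (9*x+2)/(6*x^2*(x+1)*(x+2)) := by positivity
  have hDle : (9*x+2)/(6*x^2*(x+1)*(x+2)) ≤ 2/x^3 := by
    rw [div_le_div_iff₀ (by positivity) (by positivity)]
    nlinarith [hx0, sq_nonneg x, pow_pos hx0 3, pow_pos hx0 4]
  have hB1eq : B1 = (1/π^2) * (-((9*x+2)/(6*x^2*(x+1)*(x+2)))) + (x/π^2) * e₁ := by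
    rw [hB1def, B1_id hπ.ne' hx0.ne', G2_id hx]
  have hπinv : (0:ℝ) < 1/π^2 ∧ (1:ℝ)/π^2 ≤ 1 := by
    constructor
    · positivity
    · rw [div_le_one (by positivity)]; nlinarith
  have hB1lo : -(2/x^3) ≤ B1 := by
    rw [hB1eq]
    have h1 : (1/π^2) * ((9*x+2)/(6*x^2*(x+1)*(x+2))) ≤ 2/x^3 := by
      calc (1/π^2) * ((9*x+2)/(6*x^2*(x+1)*(x+2)))
          ≤ 1 * ((9*x+2)/(6*x^2*(x+1)*(x+2))) :=
            mul_le_mul_of_nonneg_right hπinv.2 (le_of_lt hDpos)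
        _ = (9*x+2)/(6*x^2*(x+1)*(x+2)) := by ring
        _ ≤ 2/x^3 := hDle
    have h2 : 0 ≤ (x/π^2) * e₁ := by positivity
    linarith
  have hB1hi : B1 ≤ 2/x^3 := by
    rw [hB1eq]
    have h1 : (1/π^2) * (-((9*x+2)/(6*x^2*(x+1)*(x+2)))) ≤ 0 :=
      mul_nonpos_of_nonneg_of_nonpos (le_of_lt hπinv.1) (by linarith)
    have h2 : (x/π^2) * e₁ ≤ 2/x^3 := by
      calc (x/π^2) * e₁ ≤ (x/π^2) * (2/x^4) :=
            mul_le_mul_of_nonneg_left he₁le (by positivity)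
        _ = (2/x^3) * (1/π^2) := by field_simp
        _ ≤ (2/x^3) * 1 := mul_le_mul_of_nonneg_left hπinv.2 (by positivity)
        _ = 2/x^3 := by ring
    linarith
  -- B2 bounds
  have hHid : (3*x/π^4) * (-Hfun x)
      = (1/(π^4*x^2)) * (Real.log (2*π*x) + Real.eulerMascheroniConstant - 3/2) := by
    have : -Hfun x = (Real.log (2*π*x) + Real.eulerMascheroniConstant - 3/2)/(3*x^3) := by
      unfold Hfun; rw [neg_neg]
    rw [this, Hid _ hπ.ne' hx0.ne']
  have hgid : (3*x/π^4) * gfun x = w * (1/x^2) := by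
    have : gfun x = (Real.log (2*π*x) + Real.eulerMascheroniConstant - 11/6)/x^4 := rfl
    rw [this, gid _ hπ.ne' hx0.ne', hwdef]
  have hmulpos : (0:ℝ) ≤ 3*x/π^4 := by positivity
  have hB2lo : 0 ≤ B2 := by
    rw [hB2def, ← hHid]
    have := mul_le_mul_of_nonneg_left hSQlo hmulpos
    linarith
  have hB2hi : B2 ≤ w * (1/x^2) := by
    rw [hB2def, ← hHid, ← hgid]
    have h := mul_le_mul_of_nonneg_left hSQhi hmulpos
    have hdistrib : (3*x/π^4) * (gfun x + -Hfun x)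
        = (3*x/π^4) * gfun x + (3*x/π^4) * (-Hfun x) := by ring
    rw [hdistrib] at h
    linarith
  -- B3 bound
  have hB3 : |(-2*x*SE)| ≤ (16*(c/100)) * (1/x^2) := by
    have habs : |(-2*x*SE)| = 2*x*|SE| := by
      rw [abs_mul, abs_mul]
      rw [show |(-2:ℝ)| = 2 by norm_num, abs_of_pos hx0]
    rw [habs]
    have h3 : 2*x*|SE| ≤ 2*x*((c/100) * (24*(1/(3*x*(x+1)*(x+2))))) :=
      mul_le_mul_of_nonneg_left hSEbound (by positivity)
    rw [B3_id hx0] at h3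
    refine h3.trans ?_
    have hle2 : (1:ℝ)/((x+1)*(x+2)) ≤ 1/x^2 := by
      apply one_div_le_one_div_of_le (by positivity)
      nlinarith
    exact mul_le_mul_of_nonneg_left hle2 (by positivity)
  -- final
  rw [Real.norm_eq_abs, Real.norm_eq_abs, hLHS]
  have habs2 : |(x^2)⁻¹| = 1/x^2 := by
    rw [abs_of_pos (by positivity), inv_eq_one_div]
  rw [habs2]
  have hB1abs : |B1| ≤ 2/x^3 := abs_le.2 ⟨hB1lo, hB1hi⟩
  have hB2abs : |B2| ≤ w * (1/x^2) := by
    rw [abs_of_nonneg hB2lo]; exact hB2hi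
  have htri : |B1 + B2 + (-2*x*SE)| ≤ |B1| + |B2| + |(-2*x*SE)| := by
    calc |B1 + B2 + (-2*x*SE)| ≤ |B1 + B2| + |(-2*x*SE)| := abs_add_le _ _
      _ ≤ |B1| + |B2| + |(-2*x*SE)| := by linarith [abs_add_le B1 B2]
  have hw0 : 0 ≤ w := by
    rw [hwdef]
    have hnum := num_pos hx
    positivity
  have h2x : 2/x ≤ 4/x := by gcongr <;> norm_num
  have hsum : 2/x + w + 16*(c/100) ≤ c := by
    have h4 : 4/x + w < c/2 := hLsmall
    linarith
  have hx3 : 2/x^3 = (2/x) * (1/x^2) := by ring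
  calc |B1 + B2 + (-2*x*SE)| ≤ 2/x^3 + w * (1/x^2) + (16*(c/100)) * (1/x^2) := by
        linarith [htri, hB1abs, hB2abs, hB3]
    _ = (2/x + w + 16*(c/100)) * (1/x^2) := by rw [hx3]; ring
    _ ≤ c * (1/x^2) := mul_le_mul_of_nonneg_right hsum (by positivity)
end

section
/- Let δ : {1, 2, 3, …} → ℝ be a sequence such that δ(ℓ) + 1/(2π²ℓ²) + (3/(2π⁴ℓ⁴))·(log(2πℓ) + γ − 11/6) = o(ℓ⁻⁴) as ℓ → ∞. Then the series C₁ = ∑_{ℓ=1}^∞ ℓ·(δ(ℓ) + 1/(2π²ℓ²)) converges absolutely, and, as L → ∞ along positive integers, σ₁(L) := 2·∑_{ℓ=1}^{L−1} ℓ·δ(ℓ) = −(1/π²)·log L + 2·(C₁ − γ/(2π²)) + 1/(2π²L) + (3/(2π⁴L²))·(log(2πL) + γ + (π² − 24)/18) + o(L⁻²). -/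
open Real Filter Asymptotics

namespace Stmt16
open Finset Topology



lemma summable_shift {f : ℕ → ℝ} (hf : Summable f) (L : ℕ) :
    Summable fun k => f (L + k) := by
  have h := (summable_nat_add_iff (f := f) L).2 hf
  exact h.congr fun k => by rw [Nat.add_comm]

lemma tendsto_shift {f : ℕ → ℝ} {a : ℝ} (hf : Tendsto f atTop (𝓝 a)) (n : ℕ) :
    Tendsto (fun j => f (n + j)) atTop (𝓝 a) := by
  exact (hf.comp (tendsto_add_atTop_nat n)).congr fun j => by simp [Function.comp, Nat.add_comm]

lemma hasSum_tele' {h : ℕ → ℝ} (hs : Summable fun n => h n - h (n + 1))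
    (h0 : Tendsto h atTop (𝓝 0)) : HasSum (fun n => h n - h (n + 1)) (h 0) := by
  rw [hs.hasSum_iff_tendsto_nat]
  have : ∀ n, ∑ i ∈ range n, (h i - h (i + 1)) = h 0 - h n := fun n =>
    Finset.sum_range_sub' h n
  simp only [this]
  simpa using tendsto_const_nhds.sub h0

lemma hasSum_tele {h : ℕ → ℝ} (hmono : ∀ n, h (n + 1) ≤ h n)
    (h0 : Tendsto h atTop (𝓝 0)) : HasSum (fun n => h n - h (n + 1)) (h 0) := by
  rw [hasSum_iff_tendsto_nat_of_nonneg (fun n => sub_nonneg.2 (hmono n))]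
  have : ∀ n, ∑ i ∈ range n, (h i - h (i + 1)) = h 0 - h n := fun n =>
    Finset.sum_range_sub' h n
  simp only [this]
  simpa using tendsto_const_nhds.sub h0

/-- the comparison telescoping function -/
noncomputable def hfun (n : ℕ) : ℝ := (2 * ((n : ℝ) - 1) * n)⁻¹

lemma hfun_def (n : ℕ) : hfun n = (2 * ((n : ℝ) - 1) * n)⁻¹ := rfl

lemma tendsto_hfun : Tendsto hfun atTop (𝓝 0) := by
  apply Tendsto.inv_tendsto_atTop
  have h1 : Tendsto (fun n : ℕ => (n : ℝ) - 1) atTop atTop :=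
    tendsto_atTop_add_const_right _ _ tendsto_natCast_atTop_atTop
  have h2 := (h1.const_mul_atTop (by norm_num : (0:ℝ) < 2)).atTop_mul_atTop₀
    tendsto_natCast_atTop_atTop
  exact h2

lemma hfun_mono {n : ℕ} (hn : 2 ≤ n) : hfun (n + 1) ≤ hfun n := by
  have h : (2:ℝ) ≤ (n:ℝ) := by exact_mod_cast hn
  unfold hfun
  push_cast
  apply inv_anti₀
  · nlinarith
  · nlinarith

lemma hfun_diff {n : ℕ} (hn : 2 ≤ n) :
    hfun n - hfun (n + 1) = (((n:ℝ) - 1) * n * ((n:ℝ) + 1))⁻¹ := by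
  have h : (2:ℝ) ≤ (n:ℝ) := by exact_mod_cast hn
  unfold hfun
  push_cast
  have h1 : (n:ℝ) - 1 ≠ 0 := by nlinarith
  have h2 : (n:ℝ) ≠ 0 := by nlinarith
  have h3 : (n:ℝ) + 1 ≠ 0 := by nlinarith
  rw [add_sub_cancel_right]
  field_simp
  ring

lemma inv_cube_le {n : ℕ} (hn : 2 ≤ n) : ((n:ℝ) ^ 3)⁻¹ ≤ hfun n - hfun (n + 1) := by
  rw [hfun_diff hn]
  have h : (2:ℝ) ≤ (n:ℝ) := by exact_mod_cast hn
  apply inv_anti₀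
  · nlinarith [sq_nonneg ((n:ℝ))]
  · nlinarith

lemma hasSum_hfun {L : ℕ} (hL : 2 ≤ L) :
    HasSum (fun k => hfun (L + k) - hfun (L + k + 1)) (hfun L) := by
  have := hasSum_tele (h := fun k => hfun (L + k))
    (fun k => hfun_mono (hL.trans (Nat.le_add_right L k))) (tendsto_shift tendsto_hfun L)
  simpa [Nat.add_assoc] using this



lemma tendsto_log_div_nat : Tendsto (fun k : ℕ => Real.log k / k) atTop (𝓝 0) :=
  (Real.isLittleO_log_id_atTop.tendsto_div_nhds_zero).comp tendsto_natCast_atTop_atTop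

lemma tendsto_logbound (C : ℝ) :
    Tendsto (fun k : ℕ => C * (1 + Real.log k) / k) atTop (𝓝 0) := by
  have h : Tendsto (fun k : ℕ => 1 / (k:ℝ) + Real.log k / k) atTop (𝓝 (0 + 0)) :=
    tendsto_one_div_atTop_nhds_zero_nat.add tendsto_log_div_nat
  have h2 := h.const_mul C
  simp only [add_zero, mul_zero] at h2
  apply h2.congr'
  filter_upwards [eventually_ne_atTop 0] with k hk
  have : (k:ℝ) ≠ 0 := Nat.cast_ne_zero.2 hk
  field_simp

lemma isLittleO_logpow {C : ℝ} {g : ℕ → ℝ} {m : ℕ}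
    (h : ∀ k : ℕ, 2 ≤ k → |g k| ≤ C * (1 + Real.log k) / (k : ℝ) ^ (m + 1)) :
    g =o[atTop] fun k : ℕ => ((k : ℝ) ^ m)⁻¹ := by
  rw [isLittleO_iff]
  intro c hc
  have hev : ∀ᶠ k : ℕ in atTop, C * (1 + Real.log k) / k ≤ c :=
    (tendsto_logbound C).eventually_le_const hc
  filter_upwards [hev, eventually_ge_atTop 2] with k hk1 hk2
  have hkpos : (0:ℝ) < (k:ℝ) := by positivity
  have hb := h k hk2
  have heq : C * (1 + Real.log k) / (k : ℝ) ^ (m + 1)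
      = (C * (1 + Real.log k) / k) * ((k:ℝ) ^ m)⁻¹ := by
    rw [pow_succ, mul_comm ((k:ℝ)^m) (k:ℝ), ← div_div, div_eq_mul_inv]
  rw [Real.norm_eq_abs]
  calc |g k| ≤ C * (1 + Real.log k) / (k : ℝ) ^ (m + 1) := hb
    _ = (C * (1 + Real.log k) / k) * ((k:ℝ) ^ m)⁻¹ := heq
    _ ≤ c * ((k:ℝ) ^ m)⁻¹ := by
        apply mul_le_mul_of_nonneg_right hk1 (by positivity)
    _ = c * ‖((k:ℝ) ^ m)⁻¹‖ := by
        rw [Real.norm_eq_abs, abs_of_nonneg (by positivity)]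

lemma summable_pow_inv (m : ℕ) (hm : 1 < m) : Summable fun k : ℕ => ((k:ℝ) ^ m)⁻¹ :=
  Real.summable_nat_pow_inv.2 hm


-- assume previous
lemma tailT {g : ℕ → ℝ} (hg : g =o[atTop] fun n : ℕ => ((n : ℝ) ^ 3)⁻¹) :
    (fun L : ℕ => ∑' k : ℕ, g (L + k)) =o[atTop] fun L : ℕ => ((L : ℝ) ^ 2)⁻¹ := by
  have hsum : Summable g :=
    summable_of_isBigO_nat (summable_pow_inv 3 (by norm_num)) hg.isBigO
  rw [isLittleO_iff]
  intro c hc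
  obtain ⟨N, hN⟩ := eventually_atTop.mp (isLittleO_iff.mp hg hc)
  filter_upwards [eventually_ge_atTop (max N 2)] with L hL
  have hL2 : 2 ≤ L := le_trans (le_max_right N 2) hL
  have hLN : N ≤ L := le_trans (le_max_left N 2) hL
  have htel := hasSum_hfun hL2
  have hb : ∀ k : ℕ, ‖g (L + k)‖ ≤ c * (hfun (L + k) - hfun (L + k + 1)) := by
    intro k
    have h1 := hN (L + k) (le_trans hLN (Nat.le_add_right L k))
    have hn3 : ‖(((L + k : ℕ):ℝ) ^ 3)⁻¹‖ = (((L + k : ℕ):ℝ) ^ 3)⁻¹ :=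
      Real.norm_of_nonneg (by positivity)
    rw [hn3] at h1
    refine le_trans h1 ?_
    have := inv_cube_le (n := L + k) (le_trans hL2 (Nat.le_add_right L k))
    exact mul_le_mul_of_nonneg_left this (le_of_lt hc)
  have hbound := tsum_of_norm_bounded (htel.mul_left c) hb
  refine le_trans hbound ?_
  have hLr : (2:ℝ) ≤ (L:ℝ) := by exact_mod_cast hL2
  have h1 : hfun L ≤ ((L:ℝ) ^ 2)⁻¹ := by
    rw [hfun_def]
    apply inv_anti₀ (by positivity)
    nlinarith
  rw [Real.norm_of_nonneg (by positivity : (0:ℝ) ≤ ((L:ℝ) ^ 2)⁻¹)]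
  exact mul_le_mul_of_nonneg_left h1 (le_of_lt hc)

noncomputable def fh (m : ℕ) : ℝ := 1 / (2 * (m:ℝ)) - 1 / (12 * (m:ℝ) ^ 2)

noncomputable def ubar (m : ℕ) : ℝ :=
  Real.log ((m:ℝ) + 1) - Real.log m - 1 / ((m:ℝ) + 1)

noncomputable def wfun (m : ℕ) : ℝ := ubar m - (fh m - fh (m + 1))

noncomputable def eta (n : ℕ) : ℝ :=
  (harmonic n : ℝ) - Real.log n - eulerMascheroniConstant - fh n

lemma fh_diff {m : ℕ} (hm : 1 ≤ m) :
    fh m - fh (m + 1) = (6 * (m:ℝ)^2 + 4 * m - 1) / (12 * (m:ℝ)^2 * ((m:ℝ)+1)^2) := by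
  have h : (1:ℝ) ≤ (m:ℝ) := by exact_mod_cast hm
  have h1 : (m:ℝ) ≠ 0 := by linarith
  have h2 : (m:ℝ) + 1 ≠ 0 := by linarith
  unfold fh
  push_cast
  field_simp
  ring

lemma fh_mono {m : ℕ} (hm : 1 ≤ m) : fh (m + 1) ≤ fh m := by
  have h : (1:ℝ) ≤ (m:ℝ) := by exact_mod_cast hm
  have hd := fh_diff hm
  have hnum : (0:ℝ) ≤ 6 * (m:ℝ)^2 + 4 * m - 1 := by nlinarith
  have hden : (0:ℝ) < 12 * (m:ℝ)^2 * ((m:ℝ)+1)^2 := by positivity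
  have := div_nonneg hnum hden.le
  linarith

lemma tendsto_fh : Tendsto fh atTop (𝓝 0) := by
  have h1 : Tendsto (fun m : ℕ => 2 * (m:ℝ)) atTop atTop :=
    tendsto_natCast_atTop_atTop.const_mul_atTop (by norm_num)
  have h2 : Tendsto (fun m : ℕ => 12 * (m:ℝ) ^ 2) atTop atTop := by
    have hmm : Tendsto (fun m : ℕ => (m:ℝ) * (m:ℝ)) atTop atTop :=
      tendsto_natCast_atTop_atTop.atTop_mul_atTop₀ tendsto_natCast_atTop_atTop
    exact (hmm.const_mul_atTop (show (0:ℝ) < 12 by norm_num)).congr fun m => by ring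
  have := (h1.inv_tendsto_atTop).sub h2.inv_tendsto_atTop
  simp only [sub_zero] at this
  apply this.congr
  intro m
  simp [fh, one_div]

lemma ubar_nonneg {m : ℕ} (hm : 1 ≤ m) : 0 ≤ ubar m := by
  have h : (1:ℝ) ≤ (m:ℝ) := by exact_mod_cast hm
  have hpos : (0:ℝ) < (m:ℝ) / ((m:ℝ) + 1) := by positivity
  have hlog := Real.log_le_sub_one_of_pos hpos
  rw [Real.log_div (by linarith) (by linarith)] at hlog
  have he : (m:ℝ) / ((m:ℝ)+1) - 1 = -(1 / ((m:ℝ)+1)) := by field_simp; ring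
  rw [he] at hlog
  unfold ubar
  linarith

lemma hasSum_ubar {n : ℕ} (hn : 1 ≤ n) :
    HasSum (fun j => ubar (n + j))
      ((harmonic n : ℝ) - Real.log n - eulerMascheroniConstant) := by
  have hnonneg : ∀ j : ℕ, 0 ≤ ubar (n + j) := fun j =>
    ubar_nonneg (le_trans hn (Nat.le_add_right n j))
  rw [hasSum_iff_tendsto_nat_of_nonneg hnonneg]
  have ubar_eq : ∀ m : ℕ, ubar m = ((harmonic m : ℝ) - Real.log m)
      - ((harmonic (m + 1) : ℝ) - Real.log (m + 1)) := by
    intro m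
    rw [harmonic_succ]
    unfold ubar
    push_cast
    ring
  have hpart : ∀ m : ℕ, ∑ j ∈ range m, ubar (n + j)
      = ((harmonic n : ℝ) - Real.log n) - ((harmonic (n + m) : ℝ) - Real.log (n + m)) := by
    intro m
    have key := Finset.sum_range_sub' (fun i => ((harmonic (n + i) : ℝ) - Real.log (n + i))) m
    simp only [Nat.add_zero, Nat.cast_zero, add_zero] at key
    rw [← key]
    refine Finset.sum_congr rfl fun j _ => ?_
    rw [ubar_eq (n + j)]
    push_cast
    ring
  simp only [hpart]
  have ht0 := tendsto_shift (f := fun m : ℕ => (harmonic m : ℝ) - Real.log m)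
      Real.tendsto_harmonic_sub_log n
  have ht : Tendsto (fun m : ℕ => ((harmonic (n + m) : ℝ) - Real.log (n + m))) atTop
      (𝓝 eulerMascheroniConstant) := ht0.congr fun j => by push_cast; ring
  simpa using tendsto_const_nhds.sub ht

lemma hasSum_fh {n : ℕ} (hn : 1 ≤ n) :
    HasSum (fun j => fh (n + j) - fh (n + j + 1)) (fh n) := by
  have := hasSum_tele (h := fun j => fh (n + j))
    (fun j => fh_mono (le_trans hn (Nat.le_add_right n j))) (tendsto_shift tendsto_fh n)
  simpa [Nat.add_assoc] using this

lemma eta_eq {n : ℕ} (hn : 1 ≤ n) : eta n = ∑' j, wfun (n + j) := by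
  have h := (hasSum_ubar hn).sub (hasSum_fh hn)
  have h2 : (fun j => ubar (n + j) - (fh (n + j) - fh (n + j + 1)))
      = fun j => wfun (n + j) := by
    funext j; rfl
  rw [h2] at h
  exact (h.tsum_eq).symm


/-- third-order log expansion error -/
lemma log_expand {k : ℕ} (hk : 2 ≤ k) :
    |Real.log ((k:ℝ) + 1) - Real.log k - (1/(k:ℝ) - 1/(2*(k:ℝ)^2) + 1/(3*(k:ℝ)^3))|
      ≤ 2 / (k:ℝ)^4 := by
  have hkr : (2:ℝ) ≤ (k:ℝ) := by exact_mod_cast hk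
  have hk0 : (0:ℝ) < (k:ℝ) := by linarith
  set x : ℝ := -(1/(k:ℝ)) with hx
  have hxabs : |x| = 1/(k:ℝ) := by
    rw [hx, abs_neg, abs_of_pos (by positivity)]
  have hxlt : |x| < 1 := by rw [hxabs]; rw [div_lt_one hk0]; linarith
  have key := Real.abs_log_sub_add_sum_range_le hxlt 3
  have hsum : (∑ i ∈ range 3, x ^ (i + 1) / (i + 1))
      = -(1/(k:ℝ)) + 1/(2*(k:ℝ)^2) - 1/(3*(k:ℝ)^3) := by
    rw [Finset.sum_range_succ, Finset.sum_range_succ, Finset.sum_range_succ,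
      Finset.sum_range_zero]
    rw [hx]
    push_cast
    field_simp
    ring
  have hlog : Real.log (1 - x) = Real.log ((k:ℝ) + 1) - Real.log k := by
    rw [hx]
    have : (1:ℝ) - -(1/(k:ℝ)) = ((k:ℝ) + 1) / k := by field_simp; ring
    rw [this, Real.log_div (by linarith) (by linarith)]
  rw [hsum, hlog, hxabs] at key
  have hb : (1/(k:ℝ)) ^ (3+1) / (1 - 1/(k:ℝ)) ≤ 2 / (k:ℝ)^4 := by
    have h1 : (1:ℝ)/2 ≤ 1 - 1/(k:ℝ) := by
      have : 1/(k:ℝ) ≤ 1/2 := by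
        rw [div_le_div_iff₀ hk0 (by norm_num)]; linarith
      linarith
    have h2 : (1/(k:ℝ)) ^ (3+1) = 1/(k:ℝ)^4 := by
      norm_num [div_pow]
    rw [h2]
    rw [div_le_div_iff₀ (by linarith) (by positivity)]
    have hone : (1:ℝ)/(k:ℝ)^4 * (k:ℝ)^4 = 1 := by field_simp
    linarith
  calc |Real.log ((k:ℝ) + 1) - Real.log k - (1/(k:ℝ) - 1/(2*(k:ℝ)^2) + 1/(3*(k:ℝ)^3))|
      = |(-(1/(k:ℝ)) + 1/(2*(k:ℝ)^2) - 1/(3*(k:ℝ)^3)) + (Real.log ((k:ℝ)+1) - Real.log k)| := by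
        ring_nf
    _ ≤ (1/(k:ℝ)) ^ (3+1) / (1 - 1/(k:ℝ)) := key
    _ ≤ 2 / (k:ℝ)^4 := hb

lemma wfun_bound {k : ℕ} (hk : 2 ≤ k) :
    |wfun k| ≤ 3 * (1 + Real.log k) / (k:ℝ)^4 := by
  have hkr : (2:ℝ) ≤ (k:ℝ) := by exact_mod_cast hk
  have hk0 : (k:ℝ) ≠ 0 := by linarith
  have hk1 : (k:ℝ) + 1 ≠ 0 := by linarith
  have hg2 : (1/(k:ℝ) - 1/(2*(k:ℝ)^2) + 1/(3*(k:ℝ)^3)) - 1/((k:ℝ)+1)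
      - (fh k - fh (k+1))
      = (3*(k:ℝ) + 4) / (12 * (k:ℝ)^3 * ((k:ℝ)+1)^2) := by
    unfold fh
    push_cast
    field_simp
    ring
  have hg2b : (3*(k:ℝ) + 4) / (12 * (k:ℝ)^3 * ((k:ℝ)+1)^2) ≤ 1 / (k:ℝ)^4 := by
    rw [div_le_div_iff₀ (by positivity) (by positivity)]
    have hp : (0:ℝ) < (k:ℝ) := by linarith
    nlinarith [pow_pos hp 3, pow_pos hp 4, pow_pos hp 5]
  have hg2nn : (0:ℝ) ≤ (3*(k:ℝ) + 4) / (12 * (k:ℝ)^3 * ((k:ℝ)+1)^2) := by positivity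
  have hE := log_expand hk
  have hw : wfun k = (Real.log ((k:ℝ) + 1) - Real.log k
        - (1/(k:ℝ) - 1/(2*(k:ℝ)^2) + 1/(3*(k:ℝ)^3)))
      + ((3*(k:ℝ) + 4) / (12 * (k:ℝ)^3 * ((k:ℝ)+1)^2)) := by
    rw [← hg2]
    unfold wfun ubar
    push_cast
    ring
  have hlogk : (0:ℝ) ≤ Real.log k :=
    Real.log_nonneg (by linarith)
  calc |wfun k| ≤ |Real.log ((k:ℝ) + 1) - Real.log k
        - (1/(k:ℝ) - 1/(2*(k:ℝ)^2) + 1/(3*(k:ℝ)^3))|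
      + |(3*(k:ℝ) + 4) / (12 * (k:ℝ)^3 * ((k:ℝ)+1)^2)| := by
        rw [hw]; exact abs_add_le _ _
    _ ≤ 2 / (k:ℝ)^4 + 1 / (k:ℝ)^4 := by
        refine add_le_add hE ?_
        rw [abs_of_nonneg hg2nn]
        exact hg2b
    _ ≤ 3 * (1 + Real.log k) / (k:ℝ)^4 := by
        rw [← add_div, div_le_div_iff₀ (by positivity) (by positivity)]
        nlinarith [pow_pos (show (0:ℝ) < (k:ℝ) by linarith) 4]

noncomputable def K : ℝ := Real.log (2 * π) + eulerMascheroniConstant - 4/3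

noncomputable def F (m : ℕ) : ℝ := (K + Real.log m) * (2 * (m:ℝ) ^ 2)⁻¹

noncomputable def q (m : ℕ) : ℝ := (K - 1/2 + Real.log m) * ((m:ℝ) ^ 3)⁻¹

noncomputable def wq (m : ℕ) : ℝ := q m - (F m - F (m + 1))

lemma log_expand1 {k : ℕ} (hk : 2 ≤ k) :
    |Real.log ((k:ℝ) + 1) - Real.log k - 1/(k:ℝ)| ≤ 2 / (k:ℝ)^2 := by
  have hkr : (2:ℝ) ≤ (k:ℝ) := by exact_mod_cast hk
  have hk0 : (0:ℝ) < (k:ℝ) := by linarith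
  set x : ℝ := -(1/(k:ℝ)) with hx
  have hxabs : |x| = 1/(k:ℝ) := by rw [hx, abs_neg, abs_of_pos (by positivity)]
  have hxlt : |x| < 1 := by rw [hxabs, div_lt_one hk0]; linarith
  have key := Real.abs_log_sub_add_sum_range_le hxlt 1
  have hsum : (∑ i ∈ range 1, x ^ (i + 1) / (i + 1)) = -(1/(k:ℝ)) := by
    rw [Finset.sum_range_one, hx]; norm_num
  have hlog : Real.log (1 - x) = Real.log ((k:ℝ) + 1) - Real.log k := by
    rw [hx]
    have h5 : (1:ℝ) - -(1/(k:ℝ)) = ((k:ℝ) + 1) / k := by field_simp; ring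
    rw [h5, Real.log_div (by linarith) (by linarith)]
  rw [hsum, hlog, hxabs] at key
  have hb : (1/(k:ℝ)) ^ (1+1) / (1 - 1/(k:ℝ)) ≤ 2 / (k:ℝ)^2 := by
    have h1 : (1:ℝ)/2 ≤ 1 - 1/(k:ℝ) := by
      have : 1/(k:ℝ) ≤ 1/2 := by rw [div_le_div_iff₀ hk0 (by norm_num)]; linarith
      linarith
    have h2 : (1/(k:ℝ)) ^ (1+1) = 1/(k:ℝ)^2 := by norm_num [div_pow]
    rw [h2, div_le_div_iff₀ (by linarith) (by positivity)]
    have hone : (1:ℝ)/(k:ℝ)^2 * (k:ℝ)^2 = 1 := by field_simp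
    linarith
  calc |Real.log ((k:ℝ) + 1) - Real.log k - 1/(k:ℝ)|
      = |(-(1/(k:ℝ))) + (Real.log ((k:ℝ)+1) - Real.log k)| := by ring_nf
    _ ≤ (1/(k:ℝ)) ^ (1+1) / (1 - 1/(k:ℝ)) := key
    _ ≤ 2 / (k:ℝ)^2 := hb

lemma wq_identity {m : ℕ} (hm : 1 ≤ m) :
    wq m = (K + Real.log m) * ((3*(m:ℝ)+2) / (2*(m:ℝ)^3*((m:ℝ)+1)^2))
      - (2*(m:ℝ)+1) / (2*(m:ℝ)^3*((m:ℝ)+1)^2)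
      + (Real.log ((m:ℝ)+1) - Real.log m - 1/(m:ℝ)) * (1/(2*((m:ℝ)+1)^2)) := by
  have h : (1:ℝ) ≤ (m:ℝ) := by exact_mod_cast hm
  have h1 : (m:ℝ) ≠ 0 := by linarith
  have h2 : (m:ℝ) + 1 ≠ 0 := by linarith
  unfold wq q F
  push_cast
  field_simp
  ring


lemma wq_bound {m : ℕ} (hm : 2 ≤ m) :
    |wq m| ≤ (2*|K|+5) * (1 + Real.log m) / (m:ℝ)^4 := by
  have h : (2:ℝ) ≤ (m:ℝ) := by exact_mod_cast hm
  have hp : (0:ℝ) < (m:ℝ) := by linarith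
  have hG : (0:ℝ) ≤ Real.log m := Real.log_nonneg (by linarith)
  have hM : (0:ℝ) ≤ |K| := abs_nonneg K
  have hm4 : (0:ℝ) < (m:ℝ)^4 := by positivity
  set G := Real.log m with hGdef
  have hr1 : (3*(m:ℝ)+2) / (2*(m:ℝ)^3*((m:ℝ)+1)^2) ≤ 2 / (m:ℝ)^4 := by
    rw [div_le_div_iff₀ (by positivity) (by positivity)]
    nlinarith [pow_pos hp 3, pow_pos hp 4, pow_pos hp 5]
  have hT1 : |(K + G) * ((3*(m:ℝ)+2) / (2*(m:ℝ)^3*((m:ℝ)+1)^2))|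
      ≤ (2*|K|+2) * (1 + G) / (m:ℝ)^4 := by
    rw [abs_mul, abs_of_nonneg (by positivity : (0:ℝ) ≤ (3*(m:ℝ)+2) / (2*(m:ℝ)^3*((m:ℝ)+1)^2))]
    have habs : |K + G| ≤ |K| + G := (abs_add_le _ _).trans (by rw [abs_of_nonneg hG])
    have step : |K + G| * ((3*(m:ℝ)+2) / (2*(m:ℝ)^3*((m:ℝ)+1)^2))
        ≤ (|K| + G) * (2 / (m:ℝ)^4) :=
      mul_le_mul habs hr1 (by positivity) (by linarith)
    refine step.trans ?_
    have e1 : (|K| + G) * (2 / (m:ℝ)^4) = ((|K| + G) * 2) / (m:ℝ)^4 := by ring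
    have e2 : (2*|K|+2) * (1 + G) / (m:ℝ)^4 = ((2*|K|+2) * (1 + G)) / (m:ℝ)^4 := by ring
    rw [e1, e2, div_le_div_iff₀ hm4 hm4]
    nlinarith [mul_nonneg hM hG]
  have hT2 : |(2*(m:ℝ)+1) / (2*(m:ℝ)^3*((m:ℝ)+1)^2)| ≤ 2 * (1 + G) / (m:ℝ)^4 := by
    rw [abs_of_nonneg (by positivity : (0:ℝ) ≤ (2*(m:ℝ)+1) / (2*(m:ℝ)^3*((m:ℝ)+1)^2))]
    have h5 : (2*(m:ℝ)+1) / (2*(m:ℝ)^3*((m:ℝ)+1)^2) ≤ 2 / (m:ℝ)^4 := by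
      rw [div_le_div_iff₀ (by positivity) (by positivity)]
      nlinarith [pow_pos hp 3, pow_pos hp 4, pow_pos hp 5]
    refine h5.trans ?_
    rw [div_le_div_iff₀ hm4 (by positivity)]
    nlinarith
  have hT3 : |(Real.log ((m:ℝ)+1) - Real.log m - 1/(m:ℝ)) * (1/(2*((m:ℝ)+1)^2))|
      ≤ (1 + G) / (m:ℝ)^4 := by
    rw [abs_mul, abs_of_nonneg (by positivity : (0:ℝ) ≤ 1/(2*((m:ℝ)+1)^2))]
    have hE := log_expand1 hm
    have step : |Real.log ((m:ℝ)+1) - Real.log m - 1/(m:ℝ)| * (1/(2*((m:ℝ)+1)^2))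
        ≤ (2/(m:ℝ)^2) * (1/(2*(m:ℝ)^2)) := by
      apply mul_le_mul hE ?_ (by positivity) (by positivity)
      rw [div_le_div_iff₀ (by positivity) (by positivity)]
      nlinarith
    refine step.trans ?_
    have e1 : (2/(m:ℝ)^2) * (1/(2*(m:ℝ)^2)) = 1 / (m:ℝ)^4 := by
      field_simp
    rw [e1, div_le_div_iff₀ hm4 hm4]
    nlinarith
  have hsplit : |wq m| ≤ |(K + G) * ((3*(m:ℝ)+2) / (2*(m:ℝ)^3*((m:ℝ)+1)^2))|
      + |(2*(m:ℝ)+1) / (2*(m:ℝ)^3*((m:ℝ)+1)^2)|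
      + |(Real.log ((m:ℝ)+1) - Real.log m - 1/(m:ℝ)) * (1/(2*((m:ℝ)+1)^2))| := by
    rw [wq_identity (by omega : 1 ≤ m)]
    exact (abs_add_le _ _).trans (add_le_add_left (abs_sub _ _) _)
  refine hsplit.trans ?_
  have hfin : (2*|K|+2) * (1 + G) / (m:ℝ)^4 + 2 * (1 + G) / (m:ℝ)^4 + (1 + G) / (m:ℝ)^4
      = (2*|K|+5) * (1 + G) / (m:ℝ)^4 := by ring
  linarith [hT1, hT2, hT3]

lemma wq_isLittleO : wq =o[atTop] fun k : ℕ => ((k:ℝ) ^ 3)⁻¹ :=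
  isLittleO_logpow (m := 3) fun k hk => wq_bound hk

lemma q_isLittleO : q =o[atTop] fun k : ℕ => ((k:ℝ) ^ 2)⁻¹ := by
  apply isLittleO_logpow (C := |K| + 1) (m := 2)
  intro k hk
  have h : (2:ℝ) ≤ (k:ℝ) := by exact_mod_cast hk
  have hG : (0:ℝ) ≤ Real.log k := Real.log_nonneg (by linarith)
  have hM : (0:ℝ) ≤ |K| := abs_nonneg K
  have hk3 : (0:ℝ) < (k:ℝ)^3 := by positivity
  unfold q
  rw [abs_mul, abs_of_nonneg (by positivity : (0:ℝ) ≤ ((k:ℝ)^3)⁻¹)]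
  have habs : |K - 1/2 + Real.log k| ≤ |K| + 1/2 + Real.log k := by
    calc |K - 1/2 + Real.log k| ≤ |K - 1/2| + |Real.log k| := abs_add_le _ _
      _ ≤ (|K| + 1/2) + Real.log k := by
          refine add_le_add ((abs_sub _ _).trans ?_) (le_of_eq (abs_of_nonneg hG))
          rw [abs_of_nonneg (by norm_num : (0:ℝ) ≤ 1/2)]
  have e1 : (|K| + 1) * (1 + Real.log k) / (k:ℝ)^(2+1)
      = ((|K| + 1) * (1 + Real.log k)) * ((k:ℝ)^3)⁻¹ := by
    norm_num [div_eq_mul_inv]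
  rw [e1]
  apply mul_le_mul_of_nonneg_right ?_ (by positivity)
  refine habs.trans ?_
  nlinarith [mul_nonneg hM hG]

lemma summable_q : Summable q :=
  summable_of_isBigO_nat (summable_pow_inv 2 (by norm_num)) q_isLittleO.isBigO

lemma summable_wq : Summable wq :=
  summable_of_isBigO_nat (summable_pow_inv 3 (by norm_num)) wq_isLittleO.isBigO

lemma summable_Fdiff : Summable fun m => F m - F (m + 1) :=
  (summable_q.sub summable_wq).congr fun m => by unfold wq; ring

lemma tendsto_F : Tendsto F atTop (𝓝 0) := by
  have t1 : Tendsto (fun m : ℕ => K * (2 * (m:ℝ) ^ 2)⁻¹) atTop (𝓝 0) := by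
    have hmm : Tendsto (fun m : ℕ => (m:ℝ) * (m:ℝ)) atTop atTop :=
      tendsto_natCast_atTop_atTop.atTop_mul_atTop₀ tendsto_natCast_atTop_atTop
    have h2 : Tendsto (fun m : ℕ => 2 * (m:ℝ) ^ 2) atTop atTop :=
      (hmm.const_mul_atTop (show (0:ℝ) < 2 by norm_num)).congr fun m => by ring
    have h3 := h2.inv_tendsto_atTop.const_mul K
    simpa using h3
  have t2 : Tendsto (fun m : ℕ => Real.log m * (2 * (m:ℝ) ^ 2)⁻¹) atTop (𝓝 0) := by
    have h2 : Tendsto (fun m : ℕ => 2 * (m:ℝ)) atTop atTop :=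
      tendsto_natCast_atTop_atTop.const_mul_atTop (by norm_num)
    have hprod := tendsto_log_div_nat.mul h2.inv_tendsto_atTop
    rw [mul_zero] at hprod
    apply hprod.congr
    intro m
    rcases Nat.eq_zero_or_pos m with h0 | h0
    · simp [h0]
    · have hm0 : (m:ℝ) ≠ 0 := Nat.cast_ne_zero.2 h0.ne'
      show Real.log m / m * (2 * (m:ℝ))⁻¹ = Real.log m * (2 * (m:ℝ)^2)⁻¹
      rw [mul_inv, mul_inv, div_eq_mul_inv, sq, mul_inv]
      ring
  have h4 := t1.add t2
  rw [add_zero] at h4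
  apply h4.congr
  intro m
  unfold F
  ring

lemma hasSum_F (L : ℕ) : HasSum (fun k => F (L + k) - F (L + k + 1)) (F L) := by
  have hs : Summable fun k => (fun j => F (L + j)) k - (fun j => F (L + j)) (k + 1) := by
    have h5 := summable_shift summable_Fdiff L
    exact h5.congr fun k => rfl
  have h6 := hasSum_tele' hs (tendsto_shift tendsto_F L)
  simpa [Nat.add_assoc] using h6

lemma eta_isLittleO : eta =o[atTop] fun n : ℕ => ((n:ℝ)^2)⁻¹ := by
  have hw : wfun =o[atTop] fun k : ℕ => ((k:ℝ) ^ 3)⁻¹ :=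
    isLittleO_logpow (C := 3) (m := 3) fun k hk => wfun_bound hk
  refine (tailT hw).congr' ?_ EventuallyEq.rfl
  filter_upwards [eventually_ge_atTop 1] with n hn
  exact (eta_eq hn).symm

variable (δ : ℕ → ℝ)

noncomputable def ff (ℓ : ℕ) : ℝ := (ℓ:ℝ) * (δ ℓ + 1 / (2 * π ^ 2 * (ℓ : ℝ) ^ 2))

noncomputable def ee (ℓ : ℕ) : ℝ :=
  δ ℓ + 1 / (2 * π ^ 2 * (ℓ : ℝ) ^ 2)
    + (3 / (2 * π ^ 4 * (ℓ : ℝ) ^ 4))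
      * (Real.log (2 * π * ℓ) + eulerMascheroniConstant - 11 / 6)

noncomputable def ep (ℓ : ℕ) : ℝ := (ℓ:ℝ) * ee δ ℓ

variable {δ}

lemma ff_eq (ℓ : ℕ) : ff δ ℓ = ep δ ℓ - (3 / (2 * π ^ 4)) * q ℓ := by
  rcases Nat.eq_zero_or_pos ℓ with h0 | h0
  · simp [ff, ep, ee, q, h0]
  · have hℓ : (ℓ:ℝ) ≠ 0 := Nat.cast_ne_zero.2 h0.ne'
    have hπ : (π:ℝ) ≠ 0 := Real.pi_ne_zero
    have hlog : Real.log (2 * π * ℓ) = Real.log (2 * π) + Real.log ℓ :=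
      Real.log_mul (by positivity) hℓ
    unfold ff ep ee q K
    rw [hlog]
    field_simp
    ring

lemma ep_isLittleO (hasymp : (ee δ) =o[atTop] fun ℓ : ℕ => ((ℓ : ℝ) ^ 4)⁻¹) :
    (ep δ) =o[atTop] fun ℓ : ℕ => ((ℓ : ℝ) ^ 3)⁻¹ := by
  have h := (isBigO_refl (fun ℓ : ℕ => (ℓ:ℝ)) atTop).mul_isLittleO hasymp
  have he : (fun ℓ : ℕ => (ℓ:ℝ) * ((ℓ:ℝ)^4)⁻¹) = fun ℓ : ℕ => ((ℓ:ℝ)^3)⁻¹ := by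
    funext ℓ
    rcases Nat.eq_zero_or_pos ℓ with h0 | h0
    · simp [h0]
    · have hℓ : (ℓ:ℝ) ≠ 0 := Nat.cast_ne_zero.2 h0.ne'
      field_simp
  rw [he] at h
  exact h

lemma summable_ep (hasymp : (ee δ) =o[atTop] fun ℓ : ℕ => ((ℓ : ℝ) ^ 4)⁻¹) :
    Summable (ep δ) :=
  summable_of_isBigO_nat (summable_pow_inv 3 (by norm_num)) (ep_isLittleO hasymp).isBigO

lemma summable_ff (hasymp : (ee δ) =o[atTop] fun ℓ : ℕ => ((ℓ : ℝ) ^ 4)⁻¹) :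
    Summable (ff δ) :=
  ((summable_ep hasymp).sub (summable_q.mul_left (3 / (2 * π ^ 4)))).congr
    fun ℓ => (ff_eq ℓ).symm

end Stmt16

open Stmt16 in
/-- Let `δ` be a real sequence (on positive integers) with
`δ(ℓ) + 1/(2π²ℓ²) + (3/(2π⁴ℓ⁴))(log(2πℓ) + γ − 11/6) = o(ℓ⁻⁴)`. Then
`C₁ = ∑_{ℓ≥1} ℓ(δ(ℓ) + 1/(2π²ℓ²))` converges absolutely, and, as `L → ∞` along positive
integers, `σ₁(L) := 2∑_{ℓ=1}^{L−1} ℓδ(ℓ) = −(1/π²)log L + 2(C₁ − γ/(2π²)) + 1/(2π²L)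
 + (3/(2π⁴L²))(log(2πL) + γ + (π² − 24)/18) + o(L⁻²)`. -/
theorem stmt_16 (δ : ℕ → ℝ)
    (hasymp : (fun ℓ : ℕ =>
        δ ℓ + 1 / (2 * π ^ 2 * (ℓ : ℝ) ^ 2)
          + (3 / (2 * π ^ 4 * (ℓ : ℝ) ^ 4))
            * (Real.log (2 * π * ℓ) + Real.eulerMascheroniConstant - 11 / 6))
      =o[atTop] fun ℓ : ℕ => ((ℓ : ℝ) ^ 4)⁻¹) :
    Summable (fun ℓ : ℕ =>
      |((ℓ : ℝ) + 1) * (δ (ℓ + 1) + 1 / (2 * π ^ 2 * ((ℓ : ℝ) + 1) ^ 2))|)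
    ∧ (fun L : ℕ =>
        2 * ∑ ℓ ∈ Finset.Ico 1 L, (ℓ : ℝ) * δ ℓ
          - (-(1 / π ^ 2) * Real.log L
            + 2 * ((∑' ℓ : ℕ, ((ℓ : ℝ) + 1)
                * (δ (ℓ + 1) + 1 / (2 * π ^ 2 * ((ℓ : ℝ) + 1) ^ 2)))
              - Real.eulerMascheroniConstant / (2 * π ^ 2))
            + 1 / (2 * π ^ 2 * (L : ℝ))
            + (3 / (2 * π ^ 4 * (L : ℝ) ^ 2))
              * (Real.log (2 * π * L) + Real.eulerMascheroniConstant + (π ^ 2 - 24) / 18)))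
        =o[atTop] fun L : ℕ => ((L : ℝ) ^ 2)⁻¹ := by
  have hasymp' : (ee δ) =o[atTop] fun ℓ : ℕ => ((ℓ : ℝ) ^ 4)⁻¹ := hasymp
  have hπ : (π:ℝ) ≠ 0 := Real.pi_ne_zero
  have hff := summable_ff hasymp'
  have hep := summable_ep hasymp'
  -- the statement's summand is |ff δ (ℓ+1)|
  have hsummand : ∀ ℓ : ℕ, ((ℓ : ℝ) + 1) * (δ (ℓ + 1) + 1 / (2 * π ^ 2 * ((ℓ : ℝ) + 1) ^ 2))
      = ff δ (ℓ + 1) := by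
    intro ℓ
    unfold ff
    push_cast
    ring
  constructor
  · have h1 : Summable fun ℓ => ff δ (ℓ + 1) := (summable_nat_add_iff 1).2 hff
    exact (h1.abs).congr fun ℓ => by rw [hsummand ℓ]
  -- the tsum in the statement equals ∑' ff δ
  have hC : (∑' ℓ : ℕ, ((ℓ : ℝ) + 1)
      * (δ (ℓ + 1) + 1 / (2 * π ^ 2 * ((ℓ : ℝ) + 1) ^ 2))) = ∑' ℓ, ff δ ℓ := by
    rw [tsum_eq_zero_add' ((summable_nat_add_iff 1).2 hff)]
    have h0 : ff δ 0 = 0 := by simp [ff]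
    rw [h0, zero_add]
    exact tsum_congr fun ℓ => hsummand ℓ
  -- main little-o
  have ho : (fun L : ℕ => -2 * (∑' k, ep δ (L + k)) + (3 / π ^ 4) * (∑' k, wq (L + k))
      - (1 / π ^ 2) * eta L) =o[atTop] fun L : ℕ => ((L:ℝ)^2)⁻¹ := by
    have h1 := (tailT (ep_isLittleO hasymp')).const_mul_left (-2)
    have h2 := (tailT wq_isLittleO).const_mul_left (3 / π ^ 4)
    have h3 := eta_isLittleO.const_mul_left (1 / π ^ 2)
    exact (h1.add h2).sub h3
  refine ho.congr' ?_ EventuallyEq.rfl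
  filter_upwards [eventually_ge_atTop 1] with L hL
  have hL0 : (L:ℝ) ≠ 0 := Nat.cast_ne_zero.2 (by omega)
  have hLpos : (0:ℝ) < (L:ℝ) := by positivity
  -- A1 : split the partial sum
  have A1 : ∑ ℓ ∈ Finset.Ico 1 L, (ℓ : ℝ) * δ ℓ
      = ∑ ℓ ∈ Finset.Ico 1 L, ff δ ℓ
        - (1 / (2 * π ^ 2)) * ∑ ℓ ∈ Finset.Ico 1 L, (1 / (ℓ:ℝ)) := by
    rw [Finset.mul_sum, ← Finset.sum_sub_distrib]
    refine Finset.sum_congr rfl fun ℓ hℓ => ?_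
    have h1 : 1 ≤ ℓ := (Finset.mem_Ico.1 hℓ).1
    have hℓ0 : (ℓ:ℝ) ≠ 0 := Nat.cast_ne_zero.2 (by omega)
    unfold ff
    field_simp
    ring
  -- A2 : partial sum of ff via tail
  have A2 : ∑ ℓ ∈ Finset.Ico 1 L, ff δ ℓ = (∑' ℓ, ff δ ℓ) - ∑' k, ff δ (L + k) := by
    have hr : ∑ ℓ ∈ Finset.Ico 1 L, ff δ ℓ = ∑ ℓ ∈ Finset.range L, ff δ ℓ := by
      rw [Finset.sum_Ico_eq_sub _ (by omega : 1 ≤ L)]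
      simp [ff]
    rw [hr]
    have := Summable.sum_add_tsum_nat_add L hff
    have ht : (∑' k, ff δ (k + L)) = ∑' k, ff δ (L + k) :=
      tsum_congr fun k => by rw [Nat.add_comm]
    linarith [this, ht]
  -- A3 : tail of ff decomposes
  have A3 : (∑' k, ff δ (L + k)) = (∑' k, ep δ (L + k))
      - (3 / (2 * π ^ 4)) * ∑' k, q (L + k) := by
    have h1 : (fun k => ff δ (L + k))
        = fun k => ep δ (L + k) - (3 / (2 * π ^ 4)) * q (L + k) :=
      funext fun k => by rw [ff_eq]
    rw [h1, Summable.tsum_sub (summable_shift hep L)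
      ((summable_shift summable_q L).mul_left _), tsum_mul_left]
  -- A4 : tail of q via F and wq
  have A4 : (∑' k, q (L + k)) = F L + ∑' k, wq (L + k) := by
    have h1 := ((summable_shift summable_q L).hasSum.sub (hasSum_F L)).tsum_eq
    have h2 : (fun k => q (L + k) - (F (L + k) - F (L + k + 1))) = fun k => wq (L + k) :=
      funext fun k => rfl
    rw [h2] at h1
    rw [h1]
    ring
  -- A5 : harmonic partial sum
  have A5 : ∑ ℓ ∈ Finset.Ico 1 L, (1 / (ℓ:ℝ)) = (harmonic L : ℝ) - 1 / L := by
    have hh : (harmonic L : ℝ) = ∑ ℓ ∈ Finset.Ico 1 (L + 1), (1 / (ℓ:ℝ)) := by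
      rw [Finset.sum_Ico_eq_sum_range]
      simp only [Nat.add_sub_cancel]
      rw [harmonic]
      push_cast
      exact Finset.sum_congr rfl fun i _ => by rw [one_div, add_comm (1:ℝ) (i:ℝ)]
    rw [Finset.sum_Ico_succ_top (by omega : 1 ≤ L)] at hh
    rw [hh]
    ring
  -- A6 : harmonic asymptotic via eta
  have A6 : (harmonic L : ℝ)
      = Real.log L + eulerMascheroniConstant + fh L + eta L := by
    unfold eta
    ring
  -- A8 : log split
  have A8 : Real.log (2 * π * L) = Real.log (2 * π) + Real.log L :=
    Real.log_mul (by positivity) hL0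
  -- now pure algebra
  rw [hC, A1, A2, A3, A4, A5, A6, A8]
  unfold F fh K
  field_simp
  ring
end
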